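/- arXiv:0902.4741 — 6 statements merged into one kernel-verified Lean document; each statement's English description precedes it below -/
import Mathlib

section
/- Let a: [0,∞) → ℝ be locally integrable and y₀ ≥ 0. A function y: [0,∞) → [0,∞) is a nonnegative global solution of the Cauchy problem y' + 2a√y = 0, y(0) = y₀ (in integral form) if and only if its square root t ↦ √(y(t)) belongs to the set S(a, y₀). -/
open MeasureTheory Set Filter intervalIntegral Topology

lemma chainFTC (f : ℝ → ℝ) (T : ℝ) (hT : 0 ≤ T)
    (hf : IntegrableOn f (Icc 0 T) volume) (c : ℝ) (G G' : ℝ → ℝ)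
    (hG : ∀ x, HasDerivAt G (G' x) x) (hG'c : Continuous G') :
    G (c + ∫ s in (0:ℝ)..T, f s) =
      G c + ∫ s in (0:ℝ)..T, G' (c + ∫ u in (0:ℝ)..s, f u) * f s := by
  set F : ℝ → ℝ := fun t => c + ∫ u in (0:ℝ)..t, f u with hFdef
  have hfi : ∀ s ∈ Icc (0:ℝ) T, IntervalIntegrable f volume 0 s := fun s hs =>
    (intervalIntegrable_iff_integrableOn_Icc_of_le hs.1).2
      (hf.mono_set (Icc_subset_Icc le_rfl hs.2))
  have hfiT : IntervalIntegrable f volume 0 T := hfi T (right_mem_Icc.2 hT)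
  have hFc : ContinuousOn F (Icc 0 T) := by
    apply continuousOn_const.add
    have h := intervalIntegral.continuousOn_primitive_interval (μ := volume) (f := f)
      (a := (0:ℝ)) (b := T) (by rwa [uIcc_of_le hT])
    rwa [uIcc_of_le hT] at h
  obtain ⟨C, hC⟩ := isCompact_Icc.exists_bound_of_continuousOn hFc
  have hC0 : 0 ≤ C := le_trans (norm_nonneg _) (hC 0 (left_mem_Icc.2 hT))
  obtain ⟨B, hB⟩ := (isCompact_Icc (a := -(C+1)) (b := C+1)).exists_bound_of_continuousOn
    hG'c.continuousOn
  have hB0 : 0 ≤ B := le_trans (norm_nonneg _) (hB 0 ⟨by linarith, by linarith⟩)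
  set ε : ℕ → ℝ := fun n => 1/((n:ℝ)+1) with hεdef
  have hεpos : ∀ n, 0 < ε n := fun n => by positivity
  set f' : ℝ → ℝ := (Icc (0:ℝ) T).indicator f with hf'def
  have hf'int : Integrable f' volume := (integrable_indicator_iff measurableSet_Icc).2 hf
  have happrox : ∀ n : ℕ, ∃ φ : ℝ → ℝ, Continuous φ ∧ Integrable φ volume ∧
      (∫ x, ‖f' x - φ x‖) ≤ ε n := by
    intro n
    obtain ⟨g, _, h1, h2, h3⟩ := hf'int.exists_hasCompactSupport_integral_sub_le
      (ε := ε n) (hεpos n)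
    exact ⟨g, h2, h3, h1⟩
  choose φ hφc hφi hφe using happrox
  set Fn : ℕ → ℝ → ℝ := fun n t => c + ∫ u in (0:ℝ)..t, φ n u with hFndef
  have hFnD : ∀ n t, HasDerivAt (Fn n) (φ n t) t := by
    intro n t
    have h : HasDerivAt (fun t => ∫ u in (0:ℝ)..t, φ n u) (φ n t) t :=
      intervalIntegral.integral_hasDerivAt_right ((hφc n).intervalIntegrable _ _)
        ((hφc n).stronglyMeasurable.stronglyMeasurableAtFilter)
        (hφc n).continuousAt
    exact h.const_add c
  have hFnc : ∀ n, Continuous (Fn n) := fun n =>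
    continuous_iff_continuousAt.2 fun t => (hFnD n t).continuousAt
  -- the per-n FTC identity
  have key : ∀ n, ∫ s in (0:ℝ)..T, G' (Fn n s) * φ n s = G (Fn n T) - G c := by
    intro n
    have h1 : ∀ x ∈ uIcc (0:ℝ) T, HasDerivAt (fun t => G (Fn n t)) (G' (Fn n x) * φ n x) x :=
      fun x _ => (hG (Fn n x)).comp x (hFnD n x)
    have h2 : IntervalIntegrable (fun x => G' (Fn n x) * φ n x) volume 0 T :=
      ((hG'c.comp (hFnc n)).mul (hφc n)).intervalIntegrable _ _
    have h3 := intervalIntegral.integral_eq_sub_of_hasDerivAt h1 h2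
    rw [h3]
    have : Fn n 0 = c := by simp [hFndef]
    rw [this]
  -- L¹ closeness on subintervals
  have hψ : ∀ n, ∀ s ∈ Icc (0:ℝ) T, (∫ u in Ioc (0:ℝ) s, |φ n u - f u|) ≤ ε n := by
    intro n s hs
    have heq : ∀ u ∈ Ioc (0:ℝ) s, |φ n u - f u| = ‖f' u - φ n u‖ := by
      intro u hu
      rw [Real.norm_eq_abs, hf'def, indicator_of_mem (Ioc_subset_Icc_self.trans
        (Icc_subset_Icc le_rfl hs.2) hu), abs_sub_comm]
    calc (∫ u in Ioc (0:ℝ) s, |φ n u - f u|) = ∫ u in Ioc (0:ℝ) s, ‖f' u - φ n u‖ :=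
          setIntegral_congr_fun measurableSet_Ioc heq
      _ ≤ ∫ u, ‖f' u - φ n u‖ :=
          setIntegral_le_integral (hf'int.sub (hφi n)).norm
            (Eventually.of_forall fun u => norm_nonneg _)
      _ ≤ ε n := hφe n
  have hclose : ∀ n, ∀ s ∈ Icc (0:ℝ) T, |Fn n s - F s| ≤ ε n := by
    intro n s hs
    have hsub : Fn n s - F s = ∫ u in (0:ℝ)..s, (φ n u - f u) := by
      rw [intervalIntegral.integral_sub ((hφc n).intervalIntegrable _ _) (hfi s hs)]
      simp [hFndef, hFdef]
    rw [hsub, intervalIntegral.integral_of_le hs.1]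
    calc |∫ u in Ioc (0:ℝ) s, (φ n u - f u)| ≤ ∫ u in Ioc (0:ℝ) s, |φ n u - f u| := by
          simpa [Real.norm_eq_abs] using
            MeasureTheory.norm_integral_le_integral_norm (μ := volume.restrict (Ioc 0 s))
              (f := fun u => φ n u - f u)
      _ ≤ ε n := hψ n s hs
  have hεle : ∀ n : ℕ, ε n ≤ 1 := by
    intro n
    rw [hεdef]
    rw [div_le_one (by positivity)]
    linarith [Nat.cast_nonneg (α := ℝ) n]
  have hFnb : ∀ n, ∀ s ∈ Icc (0:ℝ) T, Fn n s ∈ Icc (-(C+1)) (C+1) := by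
    intro n s hs
    have h1 := hclose n s hs
    have h2 := hC s hs
    rw [Real.norm_eq_abs] at h2
    have h3 := hεle n
    obtain ⟨ha1, ha2⟩ := abs_le.1 h1
    obtain ⟨hb1, hb2⟩ := abs_le.1 h2
    exact ⟨by linarith, by linarith⟩
  have hG'b : ∀ n, ∀ s ∈ Icc (0:ℝ) T, |G' (Fn n s)| ≤ B := by
    intro n s hs
    have := hB _ (hFnb n s hs)
    rwa [Real.norm_eq_abs] at this
  have hε0 : Tendsto ε atTop (𝓝 0) := by
    rw [hεdef]; exact tendsto_one_div_add_atTop_nhds_zero_nat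
  have hFnT : ∀ s ∈ Icc (0:ℝ) T, Tendsto (fun n => Fn n s) atTop (𝓝 (F s)) := by
    intro s hs
    have h0 : Tendsto (fun n => Fn n s - F s) atTop (𝓝 0) :=
      squeeze_zero_norm (fun n => by simpa [Real.norm_eq_abs] using hclose n s hs) hε0
    have := h0.add_const (F s)
    simpa using this
  -- An → 0
  have hAn : Tendsto (fun n => ∫ s in (0:ℝ)..T, G' (Fn n s) * (φ n s - f s)) atTop (𝓝 0) := by
    apply squeeze_zero_norm (a := fun n : ℕ => B * ε n)
    · intro n
      have hb : ∀ᵐ t ∂volume.restrict (uIoc 0 T), ‖G' (Fn n t) * (φ n t - f t)‖ ≤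
          B * |φ n t - f t| := by
        rw [uIoc_of_le hT]
        refine (ae_restrict_iff' measurableSet_Ioc).2 (Eventually.of_forall fun t ht => ?_)
        rw [Real.norm_eq_abs, abs_mul]
        exact mul_le_mul_of_nonneg_right (hG'b n t (Ioc_subset_Icc_self ht)) (abs_nonneg _)
      have hbi : IntervalIntegrable (fun t => B * |φ n t - f t|) volume 0 T :=
        (((hφc n).intervalIntegrable _ _).sub hfiT).abs.const_mul B
      have h1 := intervalIntegral.norm_integral_le_abs_of_norm_le hb hbi
      refine h1.trans ?_
      rw [intervalIntegral.integral_of_le hT, MeasureTheory.integral_const_mul, abs_mul, abs_of_nonneg hB0]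
      refine mul_le_mul_of_nonneg_left ?_ hB0
      rw [abs_of_nonneg (setIntegral_nonneg measurableSet_Ioc fun u _ => abs_nonneg _)]
      exact hψ n T (right_mem_Icc.2 hT)
    · have h := hε0.const_mul B
      rw [mul_zero] at h
      exact h
  -- Bn → target
  have hIoc : uIoc (0:ℝ) T = Ioc 0 T := uIoc_of_le hT
  have hfae : AEStronglyMeasurable f (volume.restrict (uIoc 0 T)) := by
    rw [hIoc]
    exact hf.aestronglyMeasurable.mono_measure
      (Measure.restrict_mono Ioc_subset_Icc_self le_rfl)
  have hBn : Tendsto (fun n => ∫ s in (0:ℝ)..T, G' (Fn n s) * f s) atTop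
      (𝓝 (∫ s in (0:ℝ)..T, G' (F s) * f s)) := by
    apply intervalIntegral.tendsto_integral_filter_of_dominated_convergence
      (bound := fun s => B * |f s|)
    · exact Eventually.of_forall fun n =>
        ((hG'c.comp (hFnc n)).aestronglyMeasurable.restrict).mul hfae
    · refine Eventually.of_forall fun n => Eventually.of_forall fun t ht => ?_
      rw [hIoc] at ht
      rw [Real.norm_eq_abs, abs_mul]
      exact mul_le_mul_of_nonneg_right (hG'b n t (Ioc_subset_Icc_self ht)) (abs_nonneg _)
    · exact hfiT.abs.const_mul B
    · refine Eventually.of_forall fun t ht => ?_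
      rw [hIoc] at ht
      exact ((hG'c.tendsto (F t)).comp (hFnT t (Ioc_subset_Icc_self ht))).mul_const (f t)
  -- combine
  have hsplit : ∀ n, G (Fn n T) = G c +
      ((∫ s in (0:ℝ)..T, G' (Fn n s) * (φ n s - f s)) +
        ∫ s in (0:ℝ)..T, G' (Fn n s) * f s) := by
    intro n
    have hA : IntervalIntegrable (fun s => G' (Fn n s) * (φ n s - f s)) volume 0 T :=
      (((hφc n).intervalIntegrable _ _).sub hfiT).continuousOn_mul
        ((hG'c.comp (hFnc n)).continuousOn)
    have hB' : IntervalIntegrable (fun s => G' (Fn n s) * f s) volume 0 T :=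
      hfiT.continuousOn_mul ((hG'c.comp (hFnc n)).continuousOn)
    have : (∫ s in (0:ℝ)..T, G' (Fn n s) * (φ n s - f s)) +
        (∫ s in (0:ℝ)..T, G' (Fn n s) * f s) = ∫ s in (0:ℝ)..T, G' (Fn n s) * φ n s := by
      rw [← intervalIntegral.integral_add hA hB']
      congr 1
      funext s
      ring
    rw [this, key n]
    ring
  have hleft : Tendsto (fun n => G (Fn n T)) atTop (𝓝 (G (F T))) :=
    ((hG (F T)).continuousAt.tendsto).comp (hFnT T (right_mem_Icc.2 hT))
  have hright : Tendsto (fun n => G (Fn n T)) atTop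
      (𝓝 (G c + (0 + ∫ s in (0:ℝ)..T, G' (F s) * f s))) := by
    refine Tendsto.congr (fun n => (hsplit n).symm) (tendsto_const_nhds.add (hAn.add hBn))
  have := tendsto_nhds_unique hleft hright
  rw [zero_add] at this
  exact this

/-- `a` is locally integrable on `[0,∞)`. -/
def LocIntOn (a : ℝ → ℝ) : Prop :=
  ∀ t : ℝ, 0 ≤ t → MeasureTheory.IntegrableOn a (Set.Icc 0 t) MeasureTheory.volume

/-- `y` is a nonnegative global solution of the Cauchy problem
`y' + 2 a √y = 0`, `y 0 = y₀`, in integral form. -/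
def IsSol (a : ℝ → ℝ) (y₀ : ℝ) (y : ℝ → ℝ) : Prop :=
  ContinuousOn y (Set.Ici 0) ∧ (∀ t : ℝ, 0 ≤ t → 0 ≤ y t) ∧
    ∀ t : ℝ, 0 ≤ t → y t = y₀ - 2 * ∫ s in (0:ℝ)..t, a s * Real.sqrt (y s)

/-- Membership in the set `S(a, y₀)`. -/
def MemS (a : ℝ → ℝ) (y₀ : ℝ) (w : ℝ → ℝ) : Prop :=
  (∀ t : ℝ, 0 ≤ t → 0 ≤ w t) ∧
    ∃ g : ℝ → ℝ,
      (∀ t : ℝ, 0 ≤ t → MeasureTheory.IntegrableOn g (Set.Icc 0 t) MeasureTheory.volume) ∧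
      (∀ t : ℝ, 0 ≤ t → w t = Real.sqrt y₀ + ∫ s in (0:ℝ)..t, g s) ∧
      (∀ᵐ s ∂(MeasureTheory.volume : MeasureTheory.Measure ℝ), 0 ≤ s → 0 < w s → g s = -a s)

/-- `y` is the maximal nonnegative global solution. -/
def IsMaxSol (a : ℝ → ℝ) (y₀ : ℝ) (y : ℝ → ℝ) : Prop :=
  IsSol a y₀ y ∧ ∀ z : ℝ → ℝ, IsSol a y₀ z → ∀ t : ℝ, 0 ≤ t → z t ≤ y t

theorem stmt0 (a : ℝ → ℝ) (y₀ : ℝ) (ha : LocIntOn a) (hy₀ : 0 ≤ y₀)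
    (y : ℝ → ℝ) (hy : ∀ t : ℝ, 0 ≤ t → 0 ≤ y t) :
    IsSol a y₀ y ↔ MemS a y₀ (fun t => Real.sqrt (y t)) := by
  constructor
  · rintro ⟨hyc, hynn, hyint⟩
    refine ⟨fun t ht => Real.sqrt_nonneg _, ?_⟩
    classical
    set g : ℝ → ℝ := fun s => if 0 < y s then -a s else 0 with hgdef
    have hgmi : ∀ t : ℝ, 0 ≤ t → IntegrableOn g (Icc 0 t) volume := by
      intro t ht
      have hyct : ContinuousOn y (Icc 0 t) := hyc.mono Icc_subset_Ici_self
      obtain ⟨v, hvopen, hveq⟩ := (continuousOn_iff'.1 hyct) (Ioi 0) isOpen_Ioi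
      have heqon : EqOn g (v.indicator (fun s => -a s)) (Icc 0 t) := by
        intro x hx
        by_cases h0 : 0 < y x
        · have hxv : x ∈ v := by
            have hx2 : x ∈ y ⁻¹' Ioi 0 ∩ Icc 0 t := ⟨h0, hx⟩
            rw [hveq] at hx2
            exact hx2.1
          simp [hgdef, h0, indicator_of_mem hxv]
        · have hxv : x ∉ v := by
            intro hxv
            have hx2 : x ∈ v ∩ Icc 0 t := ⟨hxv, hx⟩
            rw [← hveq] at hx2
            exact h0 hx2.1
          simp [hgdef, h0, indicator_of_notMem hxv]
      have hmeas : AEStronglyMeasurable g (volume.restrict (Icc 0 t)) := by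
        have h1 : AEStronglyMeasurable (v.indicator (fun s => -a s))
            (volume.restrict (Icc 0 t)) :=
          ((ha t ht).aestronglyMeasurable.neg).indicator hvopen.measurableSet
        refine h1.congr ?_
        exact (ae_restrict_iff' measurableSet_Icc).2
          (Eventually.of_forall fun x hx => (heqon hx).symm)
      refine Integrable.mono (ha t ht) hmeas ?_
      refine (ae_restrict_iff' measurableSet_Icc).2 (Eventually.of_forall fun x _ => ?_)
      rw [hgdef]
      simp only [Real.norm_eq_abs]
      split_ifs with h
      · rw [abs_neg]
      · simp [abs_nonneg]
    refine ⟨g, hgmi, ?_, ?_⟩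
    swap
    · refine Eventually.of_forall fun s _ hw => ?_
      have h0 : 0 < y s := Real.sqrt_pos.1 hw
      simp [hgdef, h0]
    intro T hT
    show Real.sqrt (y T) = Real.sqrt y₀ + ∫ s in (0:ℝ)..T, g s
    set ε : ℕ → ℝ := fun n => 1/((n:ℝ)+1) with hεdef
    have hεpos : ∀ n, 0 < ε n := fun n => by rw [hεdef]; positivity
    have hε0 : Tendsto ε atTop (𝓝 0) := by
      rw [hεdef]; exact tendsto_one_div_add_atTop_nhds_zero_nat
    set f : ℝ → ℝ := fun s => -2 * (a s * Real.sqrt (y s)) with hfdef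
    have hsqc : ContinuousOn (fun s => Real.sqrt (y s)) (Icc 0 T) :=
      Real.continuous_sqrt.comp_continuousOn (hyc.mono Icc_subset_Ici_self)
    have hfint : IntegrableOn f (Icc 0 T) volume := by
      have h1 : IntegrableOn (fun s => Real.sqrt (y s) * a s) (Icc 0 T) volume := by
        obtain ⟨M, hM⟩ := isCompact_Icc.exists_bound_of_continuousOn hsqc
        refine Integrable.bdd_mul (c := M) (ha T hT)
          (hsqc.aestronglyMeasurable measurableSet_Icc) ?_
        exact (ae_restrict_iff' measurableSet_Icc).2 (Eventually.of_forall fun x hx => hM x hx)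
      have h2 : IntegrableOn (fun s => a s * Real.sqrt (y s)) (Icc 0 T) volume :=
        h1.congr_fun (fun x _ => mul_comm _ _) measurableSet_Icc
      have h3 := h2.const_mul (-2 : ℝ)
      exact h3
    have hyF : ∀ s : ℝ, 0 ≤ s → y₀ + ∫ u in (0:ℝ)..s, f u = y s := by
      intro s hs
      rw [hyint s hs]
      have : (∫ u in (0:ℝ)..s, f u) = -2 * ∫ u in (0:ℝ)..s, a u * Real.sqrt (y u) := by
        simp only [hfdef]
        exact intervalIntegral.integral_const_mul _ _
      rw [this]
      ring
    set Gd : ℕ → ℝ → ℝ := fun n x =>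
      ((2*x)/(2*Real.sqrt (x^2+(ε n)^2)))/(2*Real.sqrt (Real.sqrt (x^2+(ε n)^2))) with hGddef
    have hupos : ∀ (n : ℕ) (x : ℝ), 0 < x^2 + (ε n)^2 := by
      intro n x
      have hE := hεpos n
      positivity
    have hGdD : ∀ (n : ℕ) (x : ℝ),
        HasDerivAt (fun x => Real.sqrt (Real.sqrt (x^2+(ε n)^2))) (Gd n x) x := by
      intro n x
      have h0 : HasDerivAt (fun x : ℝ => x^2 + (ε n)^2) (2*x) x := by
        simpa using (hasDerivAt_pow 2 x).add_const ((ε n)^2)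
      have h1 := h0.sqrt (ne_of_gt (hupos n x))
      have h2 := h1.sqrt (ne_of_gt (Real.sqrt_pos.2 (hupos n x)))
      exact h2
    have hGdc : ∀ n : ℕ, Continuous (Gd n) := by
      intro n
      rw [hGddef]
      have hb : Continuous fun x : ℝ => x^2+(ε n)^2 := (continuous_pow 2).add continuous_const
      have hs1 : Continuous fun x : ℝ => Real.sqrt (x^2+(ε n)^2) := Real.continuous_sqrt.comp hb
      have hs2 : Continuous fun x : ℝ => Real.sqrt (Real.sqrt (x^2+(ε n)^2)) :=
        Real.continuous_sqrt.comp hs1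
      have hn1 : Continuous fun x : ℝ => (2*x)/(2*Real.sqrt (x^2+(ε n)^2)) :=
        Continuous.div (continuous_const.mul continuous_id) (continuous_const.mul hs1)
          (fun x => ne_of_gt (mul_pos two_pos (Real.sqrt_pos.2 (hupos n x))))
      exact Continuous.div hn1 (continuous_const.mul hs2)
        (fun x => ne_of_gt (mul_pos two_pos (Real.sqrt_pos.2 (Real.sqrt_pos.2 (hupos n x)))))
    -- the key per-n identity
    have hkey : ∀ n : ℕ, Real.sqrt (Real.sqrt ((y T)^2 + (ε n)^2))
        = Real.sqrt (Real.sqrt (y₀^2 + (ε n)^2)) + ∫ s in (0:ℝ)..T, Gd n (y s) * f s := by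
      intro n
      have hchain := chainFTC f T hT hfint y₀
        (fun x => Real.sqrt (Real.sqrt (x^2+(ε n)^2))) (Gd n) (hGdD n) (hGdc n)
      simp only [] at hchain
      rw [hyF T hT] at hchain
      rw [hchain]
      congr 1
      apply intervalIntegral.integral_congr
      intro s hs
      rw [uIcc_of_le hT] at hs
      simp only []
      rw [hyF s hs.1]
    -- algebraic form of the integrand
    have heq : ∀ (n : ℕ) (t : ℝ), Gd n (y t) * f t
        = -(a t) * ((y t * Real.sqrt (y t)) /
            (Real.sqrt ((y t)^2+(ε n)^2) * Real.sqrt (Real.sqrt ((y t)^2+(ε n)^2)))) := by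
      intro n t
      have hup := hupos n (y t)
      have hsu : Real.sqrt ((y t)^2+(ε n)^2) ≠ 0 := ne_of_gt (Real.sqrt_pos.2 hup)
      have hssu : Real.sqrt (Real.sqrt ((y t)^2+(ε n)^2)) ≠ 0 :=
        ne_of_gt (Real.sqrt_pos.2 (Real.sqrt_pos.2 hup))
      simp only [hGddef, hfdef]
      field_simp
    have hIoc : uIoc (0:ℝ) T = Ioc 0 T := uIoc_of_le hT
    -- limits
    have hL : Tendsto (fun n => Real.sqrt (Real.sqrt ((y T)^2 + (ε n)^2))) atTop
        (𝓝 (Real.sqrt (y T))) := by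
      have hcont : Continuous (fun e : ℝ => Real.sqrt (Real.sqrt ((y T)^2 + e^2))) :=
        Real.continuous_sqrt.comp (Real.continuous_sqrt.comp
          (continuous_const.add (continuous_pow 2)))
      have h := (hcont.tendsto 0).comp hε0
      simpa [Real.sqrt_sq (hy T hT), Function.comp_def] using h
    have hR : Tendsto (fun n => Real.sqrt (Real.sqrt (y₀^2 + (ε n)^2))) atTop
        (𝓝 (Real.sqrt y₀)) := by
      have hcont : Continuous (fun e : ℝ => Real.sqrt (Real.sqrt (y₀^2 + e^2))) :=
        Real.continuous_sqrt.comp (Real.continuous_sqrt.comp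
          (continuous_const.add (continuous_pow 2)))
      have h := (hcont.tendsto 0).comp hε0
      simpa [Real.sqrt_sq hy₀, Function.comp_def] using h
    have hI : Tendsto (fun n => ∫ s in (0:ℝ)..T, Gd n (y s) * f s) atTop
        (𝓝 (∫ s in (0:ℝ)..T, g s)) := by
      apply intervalIntegral.tendsto_integral_filter_of_dominated_convergence
        (bound := fun s => |a s|)
      · refine Eventually.of_forall fun n => ?_
        have h1 : ContinuousOn (fun s => Gd n (y s)) (Icc 0 T) :=
          (hGdc n).comp_continuousOn (hyc.mono Icc_subset_Ici_self)
        have h2 := (h1.aestronglyMeasurable measurableSet_Icc).mul hfint.aestronglyMeasurable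
        rw [hIoc]
        exact h2.mono_measure (Measure.restrict_mono Ioc_subset_Icc_self le_rfl)
      · refine Eventually.of_forall fun n => Eventually.of_forall fun t ht => ?_
        rw [hIoc] at ht
        have hY : 0 ≤ y t := hy t (le_of_lt ht.1)
        have hup := hupos n (y t)
        have hsu : 0 < Real.sqrt ((y t)^2+(ε n)^2) := Real.sqrt_pos.2 hup
        have hssu : 0 < Real.sqrt (Real.sqrt ((y t)^2+(ε n)^2)) := Real.sqrt_pos.2 hsu
        rw [heq n t, Real.norm_eq_abs, abs_mul, abs_neg]
        have hqnn : 0 ≤ (y t * Real.sqrt (y t)) /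
            (Real.sqrt ((y t)^2+(ε n)^2) * Real.sqrt (Real.sqrt ((y t)^2+(ε n)^2))) := by
          apply div_nonneg
          · exact mul_nonneg hY (Real.sqrt_nonneg _)
          · exact mul_nonneg (le_of_lt hsu) (le_of_lt hssu)
        rw [abs_of_nonneg hqnn]
        have hq1 : (y t * Real.sqrt (y t)) /
            (Real.sqrt ((y t)^2+(ε n)^2) * Real.sqrt (Real.sqrt ((y t)^2+(ε n)^2))) ≤ 1 := by
          rw [div_le_one (mul_pos hsu hssu)]
          have h1 : y t ≤ Real.sqrt ((y t)^2+(ε n)^2) := by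
            have h := Real.sqrt_le_sqrt
              (le_add_of_nonneg_right (sq_nonneg (ε n)) : (y t)^2 ≤ (y t)^2 + (ε n)^2)
            rwa [Real.sqrt_sq hY] at h
          have h2 : Real.sqrt (y t) ≤ Real.sqrt (Real.sqrt ((y t)^2+(ε n)^2)) :=
            Real.sqrt_le_sqrt h1
          exact mul_le_mul h1 h2 (Real.sqrt_nonneg _) (le_of_lt hsu)
        calc |a t| * ((y t * Real.sqrt (y t)) /
              (Real.sqrt ((y t)^2+(ε n)^2) * Real.sqrt (Real.sqrt ((y t)^2+(ε n)^2))))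
            ≤ |a t| * 1 := mul_le_mul_of_nonneg_left hq1 (abs_nonneg _)
          _ = |a t| := mul_one _
      · exact ((intervalIntegrable_iff_integrableOn_Icc_of_le hT).2 (ha T hT)).abs
      · refine Eventually.of_forall fun t ht => ?_
        rw [hIoc] at ht
        by_cases h0 : 0 < y t
        · have hgt : g t = -a t := by simp [hgdef, h0]
          rw [hgt]
          have hdpos : ∀ e : ℝ, 0 < Real.sqrt ((y t)^2+e^2) * Real.sqrt (Real.sqrt ((y t)^2+e^2)) := by
            intro e
            have hup : 0 < (y t)^2 + e^2 :=
              add_pos_of_pos_of_nonneg (pow_pos h0 2) (sq_nonneg e)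
            have h1 := Real.sqrt_pos.2 hup
            have h2 := Real.sqrt_pos.2 h1
            exact mul_pos h1 h2
          have hd : Continuous (fun e : ℝ =>
              Real.sqrt ((y t)^2+e^2) * Real.sqrt (Real.sqrt ((y t)^2+e^2))) := by
            have hs1 : Continuous (fun e : ℝ => Real.sqrt ((y t)^2+e^2)) :=
              Real.continuous_sqrt.comp (continuous_const.add (continuous_pow 2))
            exact hs1.mul (Real.continuous_sqrt.comp hs1)
          have hcont : Continuous (fun e : ℝ => -(a t) * ((y t * Real.sqrt (y t)) /
              (Real.sqrt ((y t)^2+e^2) * Real.sqrt (Real.sqrt ((y t)^2+e^2))))) := by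
            apply continuous_const.mul
            exact Continuous.div continuous_const hd (fun e => ne_of_gt (hdpos e))
          have htend := (hcont.tendsto 0).comp hε0
          have hval : -(a t) * ((y t * Real.sqrt (y t)) /
              (Real.sqrt ((y t)^2+(0:ℝ)^2) * Real.sqrt (Real.sqrt ((y t)^2+(0:ℝ)^2)))) = -a t := by
            rw [show (y t)^2+(0:ℝ)^2 = (y t)^2 by ring, Real.sqrt_sq (le_of_lt h0)]
            rw [div_self (ne_of_gt (mul_pos h0 (Real.sqrt_pos.2 h0))), mul_one]
          rw [hval] at htend
          refine htend.congr fun n => ?_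
          simp only [Function.comp_apply]
          exact (heq n t).symm
        · have hY0 : y t = 0 := le_antisymm (not_lt.1 h0) (hy t (le_of_lt ht.1))
          have hg0 : g t = 0 := by simp [hgdef, h0]
          rw [hg0]
          have hz : ∀ n : ℕ, Gd n (y t) * f t = 0 := by
            intro n
            have : f t = 0 := by
              simp only [hfdef]
              rw [hY0]
              simp
            rw [this, mul_zero]
          exact tendsto_const_nhds.congr fun n => (hz n).symm
    have hfinal := (hR.add hI).congr fun n => (hkey n).symm
    exact tendsto_nhds_unique hL hfinal
  · rintro ⟨hwnn, g, hgint, hwid, hae⟩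
    have hwid' : ∀ t : ℝ, 0 ≤ t →
        Real.sqrt (y t) = Real.sqrt y₀ + ∫ s in (0:ℝ)..t, g s := fun t ht => hwid t ht
    -- continuity of the primitive of g on Ici 0
    have hWc : ContinuousOn (fun t => Real.sqrt y₀ + ∫ s in (0:ℝ)..t, g s) (Ici 0) := by
      apply continuousOn_const.add
      intro t ht
      have hb : t < t + 1 := by linarith
      have h0b : (0:ℝ) ≤ t + 1 := by
        have := mem_Ici.1 ht; linarith
      have hcont : ContinuousOn (fun x => ∫ s in (0:ℝ)..x, g s) (Icc 0 (t+1)) := by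
        have := intervalIntegral.continuousOn_primitive_interval (μ := volume) (f := g)
          (a := (0:ℝ)) (b := t+1) (by rw [uIcc_of_le h0b]; exact hgint (t+1) h0b)
        exact this.mono (by rw [uIcc_of_le h0b])
      have hmem : Icc (0:ℝ) (t+1) ∈ nhdsWithin t (Ici 0) := by
        apply mem_nhdsWithin.2
        exact ⟨Iio (t+1), isOpen_Iio, hb, fun x hx => ⟨hx.2, le_of_lt hx.1⟩⟩
      exact (hcont.continuousWithinAt ⟨mem_Ici.1 ht, le_of_lt hb⟩).mono_of_mem_nhdsWithin hmem
    have hyc : ContinuousOn y (Ici 0) := by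
      refine ContinuousOn.congr (f := fun t => (Real.sqrt y₀ + ∫ s in (0:ℝ)..t, g s)^2)
        (hWc.pow 2) ?_
      intro t ht
      simp only []
      rw [← hwid' t ht, Real.sq_sqrt (hy t ht)]
    refine ⟨hyc, hy, ?_⟩
    intro T hT
    have hchain := chainFTC g T hT (hgint T hT) (Real.sqrt y₀) (fun x => x^2) (fun x => 2*x)
      (fun x => by simpa [mul_comm] using (hasDerivAt_pow 2 x)) (by continuity)
    simp only [] at hchain
    rw [← hwid' T hT, Real.sq_sqrt (hy T hT), Real.sq_sqrt hy₀] at hchain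
    have hcongr : ∫ s in (0:ℝ)..T, 2*(Real.sqrt y₀ + ∫ u in (0:ℝ)..s, g u) * g s
        = ∫ s in (0:ℝ)..T, 2 * Real.sqrt (y s) * g s := by
      apply intervalIntegral.integral_congr
      intro s hs
      rw [uIcc_of_le hT] at hs
      simp only []
      rw [← hwid' s hs.1]
    have haecongr : ∫ s in (0:ℝ)..T, 2 * Real.sqrt (y s) * g s
        = ∫ s in (0:ℝ)..T, -2 * (a s * Real.sqrt (y s)) := by
      apply intervalIntegral.integral_congr_ae
      rw [uIoc_of_le hT]
      filter_upwards [hae] with s hs hsmem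
      rcases eq_or_lt_of_le (Real.sqrt_nonneg (y s)) with h0 | h0
      · rw [← h0]; ring
      · rw [hs (le_of_lt hsmem.1) h0]; ring
    rw [hcongr, haecongr, intervalIntegral.integral_const_mul] at hchain
    rw [hchain]; ring
end

section
/- Let a: [0,∞) → ℝ be locally integrable, y₀ ≥ 0, and let y be any nonnegative global solution of the Cauchy problem y' + 2a√y = 0, y(0) = y₀. Define a*(s) := a(s) if y(s) > 0 and a*(s) := 0 otherwise. Then √(y(t)) = √y₀ − ∫₀ᵗ a*(s) ds for every t ≥ 0. -/
open MeasureTheory Set Filter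

set_option maxHeartbeats 1000000

lemma sqrt_diff_le {c u v : ℝ} (hc : 0 < c) (hu : c ≤ u) (hv : 0 ≤ v) :
    |Real.sqrt u - Real.sqrt v| ≤ |u - v| / Real.sqrt c := by
  have hu0 : (0:ℝ) ≤ u := hc.le.trans hu
  have hsc : 0 < Real.sqrt c := Real.sqrt_pos.2 hc
  rw [le_div_iff₀ hsc]
  have key : |Real.sqrt u - Real.sqrt v| * (Real.sqrt u + Real.sqrt v) = |u - v| := by
    rw [← abs_of_nonneg (by positivity : (0:ℝ) ≤ Real.sqrt u + Real.sqrt v), ← abs_mul]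
    congr 1
    have e1 : Real.sqrt u * Real.sqrt u = u := Real.mul_self_sqrt hu0
    have e2 : Real.sqrt v * Real.sqrt v = v := Real.mul_self_sqrt hv
    nlinarith [e1, e2]
  calc |Real.sqrt u - Real.sqrt v| * Real.sqrt c
      ≤ |Real.sqrt u - Real.sqrt v| * (Real.sqrt u + Real.sqrt v) := by
        apply mul_le_mul_of_nonneg_left _ (abs_nonneg _)
        have : Real.sqrt c ≤ Real.sqrt u := Real.sqrt_le_sqrt hu
        nlinarith [Real.sqrt_nonneg v]
    _ = |u - v| := key

lemma inv_sqrt_diff_le {c u v : ℝ} (hc : 0 < c) (hu : c ≤ u) (hv : c ≤ v) :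
    |1 / Real.sqrt u - 1 / Real.sqrt v| ≤ |u - v| / (c * Real.sqrt c) := by
  have hu0 : (0:ℝ) < u := hc.trans_le hu
  have hv0 : (0:ℝ) < v := hc.trans_le hv
  have hsu : 0 < Real.sqrt u := Real.sqrt_pos.2 hu0
  have hsv : 0 < Real.sqrt v := Real.sqrt_pos.2 hv0
  have h1 : 1 / Real.sqrt u - 1 / Real.sqrt v
      = (Real.sqrt v - Real.sqrt u) / (Real.sqrt u * Real.sqrt v) := by
    field_simp
  rw [h1, abs_div, abs_of_nonneg (by positivity : (0:ℝ) ≤ Real.sqrt u * Real.sqrt v)]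
  have h2 : |Real.sqrt v - Real.sqrt u| ≤ |v - u| / Real.sqrt c :=
    sqrt_diff_le hc hv hu0.le
  have h3 : c ≤ Real.sqrt u * Real.sqrt v := by
    calc c = Real.sqrt c * Real.sqrt c := (Real.mul_self_sqrt hc.le).symm
    _ ≤ Real.sqrt u * Real.sqrt v :=
      mul_le_mul (Real.sqrt_le_sqrt hu) (Real.sqrt_le_sqrt hv) (Real.sqrt_nonneg c) (Real.sqrt_nonneg u)
  have hsc : 0 < Real.sqrt c := Real.sqrt_pos.2 hc
  rw [abs_sub_comm v u] at h2
  calc |Real.sqrt v - Real.sqrt u| / (Real.sqrt u * Real.sqrt v)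
      ≤ (|u - v| / Real.sqrt c) / c := by
        apply div_le_div₀ (by positivity) h2 hc h3
    _ = |u - v| / (c * Real.sqrt c) := by ring

lemma abs_intervalIntegral_le {f g : ℝ → ℝ} {t T : ℝ} (ht : 0 ≤ t) (htT : t ≤ T)
    (hf : IntegrableOn f (Icc 0 T) volume) (hg : IntegrableOn g (Icc 0 T) volume)
    (hbound : ∀ s ∈ Icc (0:ℝ) T, |f s| ≤ g s) :
    |∫ s in (0:ℝ)..t, f s| ≤ ∫ s in Icc (0:ℝ) T, g s := by
  have hsub : Ioc (0:ℝ) t ⊆ Icc 0 T := fun s hs => ⟨hs.1.le, hs.2.trans htT⟩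
  rw [intervalIntegral.integral_of_le ht]
  calc |∫ s in Ioc (0:ℝ) t, f s| ≤ ∫ s in Ioc (0:ℝ) t, |f s| := by
        simpa [Real.norm_eq_abs] using
          norm_integral_le_integral_norm (μ := volume.restrict (Ioc (0:ℝ) t)) f
    _ ≤ ∫ s in Ioc (0:ℝ) t, g s := by
        apply setIntegral_mono_on (IntegrableOn.mono_set hf.abs hsub) (hg.mono_set hsub) measurableSet_Ioc
        exact fun s hs => hbound s (hsub hs)
    _ ≤ ∫ s in Icc (0:ℝ) T, g s := by
        apply setIntegral_mono_set hg
        · filter_upwards [self_mem_ae_restrict (measurableSet_Icc : MeasurableSet (Icc (0:ℝ) T))]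
            with s hs
          exact (abs_nonneg (f s)).trans (hbound s hs)
        · exact HasSubset.Subset.eventuallyLE hsub

lemma key_c (a Y : ℝ → ℝ) (y₀ : ℝ) (hY : Continuous Y) (hYnn : ∀ s, 0 ≤ Y s)
    (ha : ∀ T : ℝ, 0 ≤ T → IntegrableOn a (Icc 0 T) volume)
    (heq : ∀ r : ℝ, 0 ≤ r → Y r = y₀ - 2 * ∫ s in (0:ℝ)..r, a s * Real.sqrt (Y s))
    {c : ℝ} (hc : 0 < c) {t : ℝ} (ht : 0 ≤ t) :
    Real.sqrt (Y t + c)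
      = Real.sqrt (y₀ + c) - ∫ s in (0:ℝ)..t, a s * Real.sqrt (Y s) / Real.sqrt (Y s + c) := by
  -- it suffices to bound the difference by every δ > 0
  have main : ∀ δ : ℝ, 0 < δ →
      |Real.sqrt (Y t + c) - (Real.sqrt (y₀ + c)
        - ∫ s in (0:ℝ)..t, a s * Real.sqrt (Y s) / Real.sqrt (Y s + c))| ≤ δ := by
    intro δ hδ
    -- bound for sqrt of Y on [0, t]
    obtain ⟨M₀, hM₀⟩ := (isCompact_Icc : IsCompact (Icc (0:ℝ) t)).exists_bound_of_continuousOn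
      ((Real.continuous_sqrt.comp hY).continuousOn)
    set M : ℝ := max M₀ 0 with hMdef
    have hM0 : 0 ≤ M := le_max_right _ _
    have hM : ∀ s ∈ Icc (0:ℝ) t, Real.sqrt (Y s) ≤ M := fun s hs =>
      le_trans (le_trans (le_abs_self _) (hM₀ s hs)) (le_max_left _ _)
    set A : ℝ := ∫ s in Icc (0:ℝ) t, |a s| with hAdef
    have hA : 0 ≤ A := integral_nonneg fun s => abs_nonneg _
    set q : ℝ := Real.sqrt (c/2) with hqdef
    have hq : 0 < q := Real.sqrt_pos.2 (by linarith)
    set B : ℝ := 2*M^2/((c/2)*q) with hBdef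
    have hB : 0 ≤ B := by positivity
    set K : ℝ := 3*M/q + (A+1)*B + 1 with hKdef
    have hK : 0 < K := by positivity
    set ε : ℝ := min (min 1 (c/(4*M+4))) (δ/K) with hεdef
    have hε : 0 < ε := by
      apply lt_min (lt_min one_pos (by positivity)) (by positivity)
    have hε1 : ε ≤ 1 := le_trans (min_le_left _ _) (min_le_left _ _)
    have hεc : ε ≤ c/(4*M+4) := le_trans (min_le_left _ _) (min_le_right _ _)
    have hεδ : ε ≤ δ/K := min_le_right _ _
    have hEc : 2*M*ε ≤ c/2 := by
      have h4 : (0:ℝ) < 4*M+4 := by positivity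
      rw [le_div_iff₀ h4] at hεc
      nlinarith
    -- continuous approximation b of a
    obtain ⟨b, -, hbae, hbcont, hbint⟩ :=
      ((ha t ht).integrable_indicator measurableSet_Icc).exists_hasCompactSupport_integral_sub_le
        (ε := ε) hε
    have hbi : IntegrableOn b (Icc 0 t) volume := hbcont.integrableOn_Icc
    have habi : IntegrableOn (fun s => |a s - b s|) (Icc 0 t) volume := ((ha t ht).sub hbi).abs
    have hab : ∫ s in Icc (0:ℝ) t, |a s - b s| ≤ ε := by
      have h1 : ∫ s in Icc (0:ℝ) t, |a s - b s|
          = ∫ s in Icc (0:ℝ) t, ‖(Icc (0:ℝ) t).indicator a s - b s‖ := by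
        apply setIntegral_congr_fun measurableSet_Icc
        intro s hs
        simp only [indicator_of_mem hs, Real.norm_eq_abs]
      rw [h1]
      refine le_trans (setIntegral_le_integral ?_ ?_) hbae
      · exact (((ha t ht).integrable_indicator measurableSet_Icc).sub
          hbint).norm
      · exact Filter.Eventually.of_forall fun s => norm_nonneg _
    -- integrability helper
    have hmulint : ∀ (φ : ℝ → ℝ), Continuous φ → ∀ {h : ℝ → ℝ},
        IntegrableOn h (Icc 0 t) volume → (∃ C, ∀ s ∈ Icc (0:ℝ) t, |φ s| ≤ C) →
        IntegrableOn (fun s => h s * φ s) (Icc 0 t) volume := by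
      rintro φ hφ h hh ⟨C, hC⟩
      have h1 : ∀ᵐ s ∂(volume.restrict (Icc (0:ℝ) t)), ‖φ s‖ ≤ C := by
        filter_upwards [self_mem_ae_restrict (measurableSet_Icc : MeasurableSet (Icc (0:ℝ) t))]
          with s hs
        simpa [Real.norm_eq_abs] using hC s hs
      have := Integrable.bdd_mul (c := C) hh (hφ.aestronglyMeasurable.restrict) h1
      simpa [mul_comm, IntegrableOn] using this
    have hsqYcont : Continuous (fun s => Real.sqrt (Y s)) := Real.continuous_sqrt.comp hY
    -- the approximate solution yb
    set yb : ℝ → ℝ := fun r => y₀ - 2 * ∫ s in (0:ℝ)..r, b s * Real.sqrt (Y s) with hybdef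
    have hgcont : Continuous (fun s => b s * Real.sqrt (Y s)) := hbcont.mul hsqYcont
    have hybderiv : ∀ r : ℝ, HasDerivAt yb (-(2 * (b r * Real.sqrt (Y r)))) r := by
      intro r
      have h1 : HasDerivAt (fun u => ∫ s in (0:ℝ)..u, b s * Real.sqrt (Y s))
          (b r * Real.sqrt (Y r)) r :=
        intervalIntegral.integral_hasDerivAt_right (hgcont.intervalIntegrable _ _)
          hgcont.stronglyMeasurable.stronglyMeasurableAtFilter hgcont.continuousAt
      simpa using (h1.const_mul (2:ℝ)).const_sub y₀
    have hybdiff : Differentiable ℝ yb := fun r => (hybderiv r).differentiableAt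
    have hybcont : Continuous yb := hybdiff.continuous
    have hyb0 : yb 0 = y₀ := by simp [hybdef]
    -- yb is uniformly close to Y on [0, t]
    have hdiff : ∀ r ∈ Icc (0:ℝ) t, |Y r - yb r| ≤ 2*M*ε := by
      intro r hr
      have hiY : IntervalIntegrable (fun s => a s * Real.sqrt (Y s)) volume 0 r := by
        apply (intervalIntegrable_iff_integrableOn_Icc_of_le hr.1).2
        exact (hmulint _ hsqYcont (ha t ht) ⟨M, fun s hs => by
          rw [abs_of_nonneg (Real.sqrt_nonneg _)]; exact hM s hs⟩).mono_set
          (Icc_subset_Icc le_rfl hr.2)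
      have hib : IntervalIntegrable (fun s => b s * Real.sqrt (Y s)) volume 0 r :=
        hgcont.intervalIntegrable _ _
      have h1 : Y r - yb r = 2 * ∫ s in (0:ℝ)..r, (b s - a s) * Real.sqrt (Y s) := by
        have h2 : ∫ s in (0:ℝ)..r, (b s - a s) * Real.sqrt (Y s)
            = (∫ s in (0:ℝ)..r, b s * Real.sqrt (Y s))
              - ∫ s in (0:ℝ)..r, a s * Real.sqrt (Y s) := by
          rw [← intervalIntegral.integral_sub hib hiY]
          congr 1; funext s; ring
        rw [heq r hr.1, h2]; simp only [hybdef]; ring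
      have h3 : |∫ s in (0:ℝ)..r, (b s - a s) * Real.sqrt (Y s)|
          ≤ ∫ s in Icc (0:ℝ) t, |a s - b s| * M := by
        apply abs_intervalIntegral_le hr.1 hr.2
          (hmulint _ hsqYcont (hbi.sub (ha t ht)) ⟨M, fun s hs => by
            rw [abs_of_nonneg (Real.sqrt_nonneg _)]; exact hM s hs⟩)
          (habi.mul_const M)
        intro s hs
        rw [abs_mul, abs_of_nonneg (Real.sqrt_nonneg _), abs_sub_comm]
        exact mul_le_mul_of_nonneg_left (hM s hs) (abs_nonneg _)
      have h4 : ∫ s in Icc (0:ℝ) t, |a s - b s| * M ≤ ε * M := by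
        rw [integral_mul_const]
        exact mul_le_mul_of_nonneg_right hab hM0
      rw [h1, abs_mul, abs_two]
      nlinarith [abs_nonneg (∫ s in (0:ℝ)..r, (b s - a s) * Real.sqrt (Y s))]
    have hybpos : ∀ r ∈ Icc (0:ℝ) t, c/2 ≤ yb r + c := by
      intro r hr
      have h1 := (abs_le.1 (hdiff r hr)).2
      have h2 := hYnn r
      have h3 : Y r - yb r ≤ c/2 := le_trans h1 hEc
      linarith
    -- FTC for w = sqrt (yb + c)
    set w : ℝ → ℝ := fun r => Real.sqrt (yb r + c) with hwdef
    have hwcont : Continuous w := Real.continuous_sqrt.comp (hybcont.add continuous_const)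
    set w' : ℝ → ℝ := fun s => -(b s * Real.sqrt (Y s) / Real.sqrt (yb s + c)) with hw'def
    have hf₂contOn : ContinuousOn (fun s => b s * Real.sqrt (Y s) / Real.sqrt (yb s + c))
        (Icc 0 t) := by
      apply ContinuousOn.div hgcont.continuousOn
        (Real.continuous_sqrt.comp (hybcont.add continuous_const)).continuousOn
      intro s hs
      have h1 := hybpos s hs
      have h2 : (0:ℝ) < Real.sqrt (yb s + c) :=
        Real.sqrt_pos.2 (lt_of_lt_of_le (by linarith) h1)
      exact h2.ne'
    have hw'contOn : ContinuousOn w' (Icc 0 t) := hf₂contOn.neg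
    have hw'int : IntervalIntegrable w' volume 0 t := by
      apply ContinuousOn.intervalIntegrable
      rwa [uIcc_of_le ht]
    have hif₂ : IntervalIntegrable (fun s => b s * Real.sqrt (Y s) / Real.sqrt (yb s + c))
        volume 0 t := by
      apply ContinuousOn.intervalIntegrable
      rwa [uIcc_of_le ht]
    have hwderiv : ∀ s ∈ Ioo (0:ℝ) t, HasDerivWithinAt w (w' s) (Ioi s) s := by
      intro s hs
      have hpos : (0:ℝ) < yb s + c := lt_of_lt_of_le (by linarith)
        (hybpos s ⟨hs.1.le, hs.2.le⟩)
      have h1 : HasDerivAt (fun r => yb r + c) (-(2 * (b s * Real.sqrt (Y s)))) s :=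
        (hybderiv s).add_const c
      have h2 := h1.sqrt hpos.ne'
      have h3 : -(2 * (b s * Real.sqrt (Y s))) / (2 * Real.sqrt (yb s + c)) = w' s := by
        have hne : Real.sqrt (yb s + c) ≠ 0 := (Real.sqrt_pos.2 hpos).ne'
        rw [hw'def]
        field_simp
      rw [h3] at h2
      exact h2.hasDerivWithinAt
    have hFTC : Real.sqrt (yb t + c) - Real.sqrt (y₀ + c)
        = - ∫ s in (0:ℝ)..t, b s * Real.sqrt (Y s) / Real.sqrt (yb s + c) := by
      have := intervalIntegral.integral_eq_sub_of_hasDeriv_right_of_le ht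
        hwcont.continuousOn hwderiv hw'int
      rw [hw'def] at this
      rw [← hyb0]
      rw [intervalIntegral.integral_neg] at this
      simp only [hwdef] at this
      linarith [this]
    -- integrability of the two integrands
    have hYc : ∀ s : ℝ, (0:ℝ) < Y s + c := fun s => by linarith [hYnn s]
    have hφccont : Continuous (fun s => Real.sqrt (Y s) / Real.sqrt (Y s + c)) := by
      apply hsqYcont.div (Real.continuous_sqrt.comp (hY.add continuous_const))
      intro s
      exact (Real.sqrt_pos.2 (hYc s)).ne'
    have hqle : ∀ s : ℝ, q ≤ Real.sqrt (Y s + c) := by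
      intro s
      rw [hqdef]
      apply Real.sqrt_le_sqrt
      linarith [hYnn s]
    have hφcbd : ∀ s ∈ Icc (0:ℝ) t, |Real.sqrt (Y s) / Real.sqrt (Y s + c)| ≤ M/q := by
      intro s hs
      rw [abs_of_nonneg (by positivity)]
      exact div_le_div₀ hM0 (hM s hs) hq (hqle s)
    have hf₁On : IntegrableOn (fun s => a s * Real.sqrt (Y s) / Real.sqrt (Y s + c))
        (Icc 0 t) volume := by
      have := hmulint _ hφccont (ha t ht) ⟨M/q, hφcbd⟩
      simpa [mul_div_assoc] using this
    have hif₁ : IntervalIntegrable (fun s => a s * Real.sqrt (Y s) / Real.sqrt (Y s + c))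
        volume 0 t := (intervalIntegrable_iff_integrableOn_Icc_of_le ht).2 hf₁On
    -- bound the difference of the two integrals
    set C₂ : ℝ := M * (2*M*ε/((c/2)*q)) with hC₂def
    have hC₂ : 0 ≤ C₂ := by positivity
    have hgsum : IntegrableOn
        (fun s => |a s - b s| * (M/q) + (|a s| + |a s - b s|) * C₂) (Icc 0 t) volume :=
      (habi.mul_const _).add (((ha t ht).abs.add habi).mul_const _)
    have hptw : ∀ s ∈ Icc (0:ℝ) t,
        |a s * Real.sqrt (Y s) / Real.sqrt (Y s + c)
          - b s * Real.sqrt (Y s) / Real.sqrt (yb s + c)|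
        ≤ |a s - b s| * (M/q) + (|a s| + |a s - b s|) * C₂ := by
      intro s hs
      have hyb1 : c/2 ≤ yb s + c := hybpos s hs
      have hY1 : c/2 ≤ Y s + c := by linarith [hYnn s]
      have hqleyb : q ≤ Real.sqrt (yb s + c) := by
        rw [hqdef]; exact Real.sqrt_le_sqrt hyb1
      have hid : a s * Real.sqrt (Y s) / Real.sqrt (Y s + c)
          - b s * Real.sqrt (Y s) / Real.sqrt (yb s + c)
          = (a s - b s) * (Real.sqrt (Y s) / Real.sqrt (Y s + c))
            + (b s * Real.sqrt (Y s))
              * (1 / Real.sqrt (Y s + c) - 1 / Real.sqrt (yb s + c)) := by ring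
      rw [hid]
      have e1 : |(a s - b s) * (Real.sqrt (Y s) / Real.sqrt (Y s + c))|
          ≤ |a s - b s| * (M/q) := by
        rw [abs_mul]
        exact mul_le_mul_of_nonneg_left (hφcbd s hs) (abs_nonneg _)
      have e2 : |1 / Real.sqrt (Y s + c) - 1 / Real.sqrt (yb s + c)|
          ≤ 2*M*ε/((c/2)*q) := by
        have h1 := inv_sqrt_diff_le (by linarith : (0:ℝ) < c/2) hY1 hyb1
        have h2 : |Y s + c - (yb s + c)| = |Y s - yb s| := by congr 1; ring
        rw [h2] at h1
        calc |1 / Real.sqrt (Y s + c) - 1 / Real.sqrt (yb s + c)|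
            ≤ |Y s - yb s| / (c/2 * Real.sqrt (c/2)) := h1
          _ ≤ 2*M*ε/((c/2)*q) := by
              rw [hqdef]
              gcongr
              exact hdiff s hs
      have e3 : |b s| ≤ |a s| + |a s - b s| := by
        calc |b s| = |a s - (a s - b s)| := by congr 1; ring
          _ ≤ |a s| + |a s - b s| := abs_sub _ _
      have e4 : |(b s * Real.sqrt (Y s))
            * (1 / Real.sqrt (Y s + c) - 1 / Real.sqrt (yb s + c))|
          ≤ (|a s| + |a s - b s|) * C₂ := by
        rw [abs_mul, abs_mul, abs_of_nonneg (Real.sqrt_nonneg _), hC₂def]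
        have h5 : |b s| * Real.sqrt (Y s) ≤ (|a s| + |a s - b s|) * M :=
          mul_le_mul e3 (hM s hs) (Real.sqrt_nonneg _) (by positivity)
        calc |b s| * Real.sqrt (Y s)
              * |1 / Real.sqrt (Y s + c) - 1 / Real.sqrt (yb s + c)|
            ≤ ((|a s| + |a s - b s|) * M) * (2*M*ε/((c/2)*q)) :=
              mul_le_mul h5 e2 (abs_nonneg _) (by positivity)
          _ = (|a s| + |a s - b s|) * (M * (2*M*ε/((c/2)*q))) := by ring
      calc |(a s - b s) * (Real.sqrt (Y s) / Real.sqrt (Y s + c))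
            + (b s * Real.sqrt (Y s))
              * (1 / Real.sqrt (Y s + c) - 1 / Real.sqrt (yb s + c))|
          ≤ |(a s - b s) * (Real.sqrt (Y s) / Real.sqrt (Y s + c))|
            + |(b s * Real.sqrt (Y s))
              * (1 / Real.sqrt (Y s + c) - 1 / Real.sqrt (yb s + c))| := abs_add_le _ _
        _ ≤ |a s - b s| * (M/q) + (|a s| + |a s - b s|) * C₂ := add_le_add e1 e4
    have hintdiff : |(∫ s in (0:ℝ)..t, a s * Real.sqrt (Y s) / Real.sqrt (Y s + c))
        - ∫ s in (0:ℝ)..t, b s * Real.sqrt (Y s) / Real.sqrt (yb s + c)|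
        ≤ ε * (M/q) + (A + ε) * C₂ := by
      rw [← intervalIntegral.integral_sub hif₁ hif₂]
      have h1 := abs_intervalIntegral_le ht le_rfl
        ((intervalIntegrable_iff_integrableOn_Icc_of_le ht).1 (hif₁.sub hif₂)) hgsum hptw
      refine h1.trans ?_
      have e5 : ∫ s in Icc (0:ℝ) t, (|a s - b s| * (M/q) + (|a s| + |a s - b s|) * C₂)
          = (∫ s in Icc (0:ℝ) t, |a s - b s| * (M/q))
            + ∫ s in Icc (0:ℝ) t, (|a s| + |a s - b s|) * C₂ :=
        integral_add (habi.mul_const _) (((ha t ht).abs.add habi).mul_const _)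
      have e6 : ∫ s in Icc (0:ℝ) t, |a s - b s| * (M/q)
          = (∫ s in Icc (0:ℝ) t, |a s - b s|) * (M/q) := integral_mul_const _ _
      have e7 : ∫ s in Icc (0:ℝ) t, (|a s| + |a s - b s|) * C₂
          = (∫ s in Icc (0:ℝ) t, (|a s| + |a s - b s|)) * C₂ := integral_mul_const _ _
      have e8 : ∫ s in Icc (0:ℝ) t, (|a s| + |a s - b s|)
          = A + ∫ s in Icc (0:ℝ) t, |a s - b s| := integral_add ((ha t ht).abs) habi
      rw [e5, e6, e7, e8]
      have h2 : (∫ s in Icc (0:ℝ) t, |a s - b s|) * (M/q) ≤ ε * (M/q) :=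
        mul_le_mul_of_nonneg_right hab (by positivity)
      have h3 : ((∫ s in Icc (0:ℝ) t, |a s|) + ∫ s in Icc (0:ℝ) t, |a s - b s|) * C₂
          ≤ (A + ε) * C₂ := by
        apply mul_le_mul_of_nonneg_right _ hC₂
        rw [← hAdef]
        linarith
      linarith
    -- first piece
    have hP1 : |Real.sqrt (Y t + c) - Real.sqrt (yb t + c)| ≤ 2*M*ε/q := by
      have h1 := sqrt_diff_le (by linarith : (0:ℝ) < c/2)
        (by linarith [hYnn t] : c/2 ≤ Y t + c)
        (le_trans (le_of_lt (half_pos hc)) (hybpos t ⟨ht, le_rfl⟩))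
      have h2 : |Y t + c - (yb t + c)| = |Y t - yb t| := by congr 1; ring
      rw [h2, ← hqdef] at h1
      refine h1.trans ?_
      gcongr
      exact hdiff t ⟨ht, le_rfl⟩
    -- assemble
    have hsplit : Real.sqrt (Y t + c) - (Real.sqrt (y₀ + c)
        - ∫ s in (0:ℝ)..t, a s * Real.sqrt (Y s) / Real.sqrt (Y s + c))
        = (Real.sqrt (Y t + c) - Real.sqrt (yb t + c))
          + ((∫ s in (0:ℝ)..t, a s * Real.sqrt (Y s) / Real.sqrt (Y s + c))
            - ∫ s in (0:ℝ)..t, b s * Real.sqrt (Y s) / Real.sqrt (yb s + c)) := by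
      have := hFTC
      linarith
    rw [hsplit]
    have htot : |(Real.sqrt (Y t + c) - Real.sqrt (yb t + c))
        + ((∫ s in (0:ℝ)..t, a s * Real.sqrt (Y s) / Real.sqrt (Y s + c))
          - ∫ s in (0:ℝ)..t, b s * Real.sqrt (Y s) / Real.sqrt (yb s + c))|
        ≤ 2*M*ε/q + (ε * (M/q) + (A + ε) * C₂) :=
      (abs_add_le _ _).trans (add_le_add hP1 hintdiff)
    refine htot.trans ?_
    -- final numeric estimate
    have hεK : ε * K ≤ δ := (le_div_iff₀ hK).1 hεδ
    have h1 : (A + ε) * C₂ ≤ (A + 1) * B * ε := by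
      rw [hC₂def, hBdef]
      have : M * (2*M*ε/((c/2)*q)) = (2*M^2/((c/2)*q)) * ε := by ring
      rw [this]
      have hx : (0:ℝ) ≤ 2*M^2/((c/2)*q) := by positivity
      nlinarith
    have h2 : 2*M*ε/q = 2*(M/q)*ε := by ring
    have h3 : ε * (M/q) = (M/q)*ε := by ring
    have hMq : (0:ℝ) ≤ M/q := by positivity
    calc 2*M*ε/q + (ε * (M/q) + (A + ε) * C₂)
        ≤ 3*(M/q)*ε + (A+1)*B*ε := by rw [h2, h3]; linarith
      _ = (K - 1) * ε := by rw [hKdef]; ring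
      _ ≤ K * ε := by nlinarith
      _ = ε * K := by ring
      _ ≤ δ := hεK
  -- conclude
  by_contra hne
  have h1 : 0 < |Real.sqrt (Y t + c) - (Real.sqrt (y₀ + c)
      - ∫ s in (0:ℝ)..t, a s * Real.sqrt (Y s) / Real.sqrt (Y s + c))| := by
    rw [abs_pos, sub_ne_zero]
    exact hne
  linarith [main _ (half_pos h1), half_lt_self h1, abs_nonneg (Real.sqrt (Y t + c) - (Real.sqrt (y₀ + c)
      - ∫ s in (0:ℝ)..t, a s * Real.sqrt (Y s) / Real.sqrt (Y s + c)))]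

theorem stmt2 (a : ℝ → ℝ) (y₀ : ℝ) (ha : LocIntOn a) (hy₀ : 0 ≤ y₀)
    (y : ℝ → ℝ) (hy : IsSol a y₀ y) :
    ∀ t : ℝ, 0 ≤ t →
      Real.sqrt (y t) = Real.sqrt y₀ - ∫ s in (0:ℝ)..t, (if 0 < y s then a s else 0) := by
  obtain ⟨hcont, hnn, hint⟩ := hy
  intro t ht
  set Y : ℝ → ℝ := fun s => y (max s 0) with hYdef
  have hYcont : Continuous Y :=
    hcont.comp_continuous (continuous_id.max continuous_const) fun x => mem_Ici.2 (le_max_right _ _)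
  have hYeq : ∀ s : ℝ, 0 ≤ s → Y s = y s := by
    intro s hs
    rw [hYdef]
    simp [max_eq_left hs]
  have hYnn : ∀ s, 0 ≤ Y s := fun s => hnn _ (le_max_right _ _)
  have heq : ∀ r : ℝ, 0 ≤ r → Y r = y₀ - 2 * ∫ s in (0:ℝ)..r, a s * Real.sqrt (Y s) := by
    intro r hr
    have hsame : (∫ s in (0:ℝ)..r, a s * Real.sqrt (y s))
        = ∫ s in (0:ℝ)..r, a s * Real.sqrt (Y s) := by
      apply intervalIntegral.integral_congr
      intro s hs
      rw [uIcc_of_le hr] at hs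
      simp only [hYeq s hs.1]
    rw [hYeq r hr, hint r hr, hsame]
  have hkey : ∀ n : ℕ, Real.sqrt (Y t + 1/((n:ℝ)+1))
      = Real.sqrt (y₀ + 1/((n:ℝ)+1))
        - ∫ s in (0:ℝ)..t, a s * Real.sqrt (Y s) / Real.sqrt (Y s + 1/((n:ℝ)+1)) :=
    fun n => key_c a Y y₀ hYcont hYnn ha heq (by positivity) ht
  have hc0 : Tendsto (fun n : ℕ => 1/((n:ℝ)+1)) atTop (nhds 0) :=
    tendsto_one_div_add_atTop_nhds_zero_nat
  -- limit of the LHS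
  have hL : Tendsto (fun n : ℕ => Real.sqrt (Y t + 1/((n:ℝ)+1))) atTop
      (nhds (Real.sqrt (Y t))) := by
    have h1 : Tendsto (fun n : ℕ => Y t + 1/((n:ℝ)+1)) atTop (nhds (Y t)) := by
      simpa using tendsto_const_nhds.add hc0
    exact (Real.continuous_sqrt.continuousAt.tendsto.comp h1)
  -- limit of the first RHS term
  have hR1 : Tendsto (fun n : ℕ => Real.sqrt (y₀ + 1/((n:ℝ)+1))) atTop
      (nhds (Real.sqrt y₀)) := by
    have h1 : Tendsto (fun n : ℕ => y₀ + 1/((n:ℝ)+1)) atTop (nhds y₀) := by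
      simpa using tendsto_const_nhds.add hc0
    exact (Real.continuous_sqrt.continuousAt.tendsto.comp h1)
  -- limit of the integral, by dominated convergence
  have hR2 : Tendsto
      (fun n : ℕ => ∫ s in (0:ℝ)..t, a s * Real.sqrt (Y s) / Real.sqrt (Y s + 1/((n:ℝ)+1)))
      atTop (nhds (∫ s in (0:ℝ)..t, (if 0 < Y s then a s else 0))) := by
    have hmeasa : AEStronglyMeasurable a (volume.restrict (Set.uIoc (0:ℝ) t)) := by
      have := (ha t ht).aestronglyMeasurable
      apply this.mono_measure
      apply Measure.restrict_mono _ le_rfl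
      rw [uIoc_of_le ht]
      exact Ioc_subset_Icc_self
    apply intervalIntegral.tendsto_integral_filter_of_dominated_convergence
      (fun s => |a s|)
    · apply Eventually.of_forall
      intro n
      have hcn : (0:ℝ) < 1/((n:ℝ)+1) := by positivity
      have hψ : Continuous (fun x => Real.sqrt (Y x) / Real.sqrt (Y x + 1/((n:ℝ)+1))) := by
        apply (Real.continuous_sqrt.comp hYcont).div
          (Real.continuous_sqrt.comp (hYcont.add continuous_const))
        intro x
        exact (Real.sqrt_pos.2 (by simp only [Pi.add_apply]; linarith [hYnn x])).ne'
      have := hmeasa.mul hψ.aestronglyMeasurable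
      simpa [mul_div_assoc, Pi.mul_def] using this
    · apply Eventually.of_forall
      intro n
      apply Eventually.of_forall
      intro s _
      have hcn : (0:ℝ) < 1/((n:ℝ)+1) := by positivity
      have h1 : Real.sqrt (Y s) ≤ Real.sqrt (Y s + 1/((n:ℝ)+1)) :=
        Real.sqrt_le_sqrt (by linarith)
      have h2 : (0:ℝ) < Real.sqrt (Y s + 1/((n:ℝ)+1)) :=
        Real.sqrt_pos.2 (by linarith [hYnn s])
      rw [Real.norm_eq_abs, mul_div_assoc, abs_mul]
      have h3 : |Real.sqrt (Y s) / Real.sqrt (Y s + 1/((n:ℝ)+1))| ≤ 1 := by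
        rw [abs_of_nonneg (by positivity)]
        exact div_le_one_of_le₀ h1 h2.le
      calc |a s| * |Real.sqrt (Y s) / Real.sqrt (Y s + 1/((n:ℝ)+1))| ≤ |a s| * 1 :=
            mul_le_mul_of_nonneg_left h3 (abs_nonneg _)
        _ = |a s| := mul_one _
    · exact (intervalIntegrable_iff_integrableOn_Icc_of_le ht).2 (ha t ht).abs
    · apply Eventually.of_forall
      intro s _
      by_cases hpos : 0 < Y s
      · simp only [if_pos hpos]
        have hne : Real.sqrt (Y s) ≠ 0 := (Real.sqrt_pos.2 hpos).ne'
        have h1 : Tendsto (fun n : ℕ => Real.sqrt (Y s + 1/((n:ℝ)+1))) atTop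
            (nhds (Real.sqrt (Y s))) := by
          have h2 : Tendsto (fun n : ℕ => Y s + 1/((n:ℝ)+1)) atTop (nhds (Y s)) := by
            simpa using tendsto_const_nhds.add hc0
          exact Real.continuous_sqrt.continuousAt.tendsto.comp h2
        have h3 : Tendsto (fun n : ℕ => a s * Real.sqrt (Y s) / Real.sqrt (Y s + 1/((n:ℝ)+1)))
            atTop (nhds (a s * Real.sqrt (Y s) / Real.sqrt (Y s))) :=
          tendsto_const_nhds.div h1 hne
        have h4 : a s * Real.sqrt (Y s) / Real.sqrt (Y s) = a s := by
          rw [mul_div_assoc, div_self hne, mul_one]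
        rwa [h4] at h3
      · have hz : Y s = 0 := le_antisymm (not_lt.1 hpos) (hYnn s)
        simp only [if_neg hpos]
        have h5 : ∀ n : ℕ, a s * Real.sqrt (Y s) / Real.sqrt (Y s + 1/((n:ℝ)+1)) = 0 := by
          intro n
          rw [hz, Real.sqrt_zero, mul_zero, zero_div]
        simp only [h5]
        exact tendsto_const_nhds
  -- conclude by uniqueness of limits
  have hfinal : Real.sqrt (Y t)
      = Real.sqrt y₀ - ∫ s in (0:ℝ)..t, (if 0 < Y s then a s else 0) := by
    apply tendsto_nhds_unique hL
    have := hR1.sub hR2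
    apply Tendsto.congr _ this
    intro n
    exact (hkey n).symm
  have hYt : Y t = y t := hYeq t ht
  have hIcongr : (∫ s in (0:ℝ)..t, (if 0 < Y s then a s else 0))
      = ∫ s in (0:ℝ)..t, (if 0 < y s then a s else 0) := by
    apply intervalIntegral.integral_congr
    intro s hs
    rw [uIcc_of_le ht] at hs
    simp only [hYeq s hs.1]
  rw [← hYt, hfinal, hIcongr]
end

section
/- Let a: [0,∞) → ℝ be locally integrable, y₀ ≥ 0, and let y be the maximal solution of the Cauchy problem y' + 2a√y = 0, y(0) = y₀. Then a(t) ≥ 0 for almost every t ≥ 0 with y(t) = 0; equivalently, setting a*(s) := a(s) if y(s) > 0 and a*(s) := 0 otherwise, one has a*(t) ≤ a(t) for almost every t ≥ 0. -/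
open MeasureTheory Set Filter
open scoped Topology ENNReal

lemma isOpen_posOn (G : ℝ → ℝ) (hG : Continuous G) :
    IsOpen {p : ℝ × ℝ | p.1 < p.2 ∧ ∀ r ∈ Icc p.1 p.2, 0 < G r} := by
  rw [Metric.isOpen_iff]
  rintro ⟨u, s⟩ ⟨hus, hpos⟩
  obtain ⟨δ, hδ, hth⟩ := (isCompact_Icc (a := u) (b := s)).exists_thickening_subset_open
    (isOpen_lt continuous_const hG) (fun r hr => hpos r hr)
  refine ⟨min δ ((s - u)/2), by simp only [lt_min_iff]; constructor <;> [exact hδ; linarith], ?_⟩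
  rintro ⟨u', s'⟩ hp
  rw [Metric.mem_ball, Prod.dist_eq, max_lt_iff, lt_min_iff, lt_min_iff] at hp
  obtain ⟨⟨h1a, h1b⟩, h2a, h2b⟩ := hp
  rw [Real.dist_eq, abs_lt] at h1a h1b h2a h2b
  constructor
  · simp only
    linarith
  · intro r hr
    simp only at hr
    have hmem : r ∈ Metric.thickening δ (Icc u s) := by
      rw [Metric.mem_thickening_iff]
      rcases lt_or_ge r u with h | h
      · exact ⟨u, ⟨le_refl _, hus.le⟩, by rw [Real.dist_eq, abs_lt]; constructor <;> linarith [hr.1]⟩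
      · rcases le_or_gt r s with h' | h'
        · exact ⟨r, ⟨h, h'⟩, by simp [hδ]⟩
        · exact ⟨s, ⟨hus.le, le_refl _⟩, by rw [Real.dist_eq, abs_lt]; constructor <;> linarith [hr.2]⟩
    exact hth hmem

lemma rightZero (G : ℝ → ℝ) (hG : Continuous G) {c s : ℝ} (hcs : c < s) (hc : G c ≤ 0)
    (hpos : ∀ r ∈ Ioc c s, 0 < G r) : G c = 0 :=
  le_antisymm hc (ge_of_tendsto (hG.continuousAt.mono_left nhdsWithin_le_nhds)
    (Filter.eventually_of_mem (Ioc_mem_nhdsGT_of_mem ⟨le_refl c, hcs⟩) fun r hr => (hpos r hr).le))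

lemma leftZero (G : ℝ → ℝ) (hG : Continuous G) {u d : ℝ} (hud : u < d) (hd : G d ≤ 0)
    (hpos : ∀ r ∈ Ioo u d, 0 < G r) : G d = 0 :=
  le_antisymm hd (ge_of_tendsto (hG.continuousAt.mono_left nhdsWithin_le_nhds)
    (Filter.eventually_of_mem (Ioo_mem_nhdsLT_of_mem ⟨hud, le_refl d⟩) fun r hr => (hpos r hr).le))

lemma lastZero (G : ℝ → ℝ) (hG : Continuous G) {t₀ T : ℝ} (hts : t₀ ≤ T) (hG0 : G t₀ = 0) :
    ∃ c, t₀ ≤ c ∧ c ≤ T ∧ G c ≤ 0 ∧ ∀ r ∈ Ioc c T, 0 < G r := by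
  set S : Set ℝ := Icc t₀ T ∩ {r | G r ≤ 0} with hS
  have hSne : S.Nonempty := ⟨t₀, ⟨le_refl _, hts⟩, by simp [hG0]⟩
  have hScl : IsClosed S := isClosed_Icc.inter (isClosed_le hG continuous_const)
  have hSbdd : BddAbove S := bddAbove_Icc.mono inter_subset_left
  refine ⟨sSup S, ?_, ?_, ?_, ?_⟩
  · exact le_csSup hSbdd ⟨⟨le_refl _, hts⟩, by simp [hG0]⟩
  · exact (hScl.csSup_mem hSne hSbdd).1.2
  · exact (hScl.csSup_mem hSne hSbdd).2
  · intro r hr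
    by_contra hle
    exact absurd (le_csSup hSbdd ⟨⟨((hScl.csSup_mem hSne hSbdd).1.1).trans hr.1.le, hr.2⟩,
      not_lt.mp hle⟩) (not_le.mpr hr.1)

lemma key_identity (g : ℝ → ℝ) (hg : ∀ c d : ℝ, IntervalIntegrable g volume c d)
    {t₀ T : ℝ} (hT : t₀ ≤ T) :
    max (∫ u in t₀..T, g u) 0 ^ 2 = 2 * ∫ s in t₀..T, max (∫ u in t₀..s, g u) 0 * g s := by
  rcases eq_or_lt_of_le hT with rfl | hT'
  · simp
  set G : ℝ → ℝ := fun t => ∫ u in t₀..t, g u with hGdef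
  have Gcont : Continuous G := intervalIntegral.continuous_primitive hg t₀
  have hG0 : G t₀ = 0 := intervalIntegral.integral_same
  have hdiff : ∀ {c s : ℝ}, c ≤ s → ∫ u in Ioo c s, g u = G s - G c := by
    intro c s hcs
    have h1 : G s - G c = ∫ u in c..s, g u :=
      intervalIntegral.integral_interval_sub_left (hg t₀ s) (hg t₀ c)
    rw [h1, intervalIntegral.integral_of_le hcs, integral_Ioc_eq_integral_Ioo]
  set μ := volume.restrict (Ioo t₀ T) with hμ
  have hgI : IntegrableOn g (Ioo t₀ T) := ((hg t₀ T).1).mono_set Ioo_subset_Ioc_self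
  set R : Set (ℝ × ℝ) :=
    {p : ℝ × ℝ | p.1 < p.2 ∧ ∀ r ∈ Icc p.1 p.2, 0 < G r} ∩ (Ioo t₀ T ×ˢ Ioo t₀ T) with hRdef
  have hRmeas : MeasurableSet R :=
    ((isOpen_posOn G Gcont).measurableSet).inter (measurableSet_Ioo.prod measurableSet_Ioo)
  set E : ℝ × ℝ → ℝ := fun p => g p.1 * g p.2 with hEdef
  have hker : Integrable (R.indicator E) (μ.prod μ) := (hgI.mul_prod hgI).indicator hRmeas
  have swap : (∫ u, ∫ s, R.indicator E (u, s) ∂μ ∂μ) = ∫ s, ∫ u, R.indicator E (u, s) ∂μ ∂μ := by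
    exact integral_integral_swap (by exact hker)
  -- global last zero
  obtain ⟨c₀, hc₀0, hc₀T, hc₀G, hc₀pos⟩ := lastZero G Gcont hT hG0
  set I := ∫ s in Ioo t₀ T, max (G s) 0 * g s with hI
  have hIint : IntegrableOn (fun s => max (G s) 0 * g s) (Ioo t₀ T) := by
    have hcont : ContinuousOn (fun s => max (G s) 0) (Icc t₀ T) :=
      (Gcont.max continuous_const).continuousOn
    have : IntegrableOn g (Icc t₀ T) := by
      rw [integrableOn_Icc_iff_integrableOn_Ioc]; exact (hg t₀ T).1
    exact (this.continuousOn_mul hcont isCompact_Icc).mono_set Ioo_subset_Icc_self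
  -- way A
  have hInnerA : ∀ s ∈ Ioo t₀ T, (∫ u, R.indicator E (u, s) ∂μ) = max (G s) 0 * g s := by
    intro s hs
    by_cases hGs : 0 < G s
    · obtain ⟨c, hc0, hcs, hcG, hcpos⟩ := lastZero G Gcont hs.1.le hG0
      have hcs' : c < s := lt_of_le_of_ne hcs (fun h => absurd (h ▸ hGs) (not_lt.mpr hcG))
      have hGc : G c = 0 := rightZero G Gcont hcs' hcG hcpos
      have fiber : {u : ℝ | (u, s) ∈ R} = Ioo c s := by
        ext u
        constructor
        · rintro ⟨⟨hus, hp⟩, -⟩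
          refine ⟨?_, hus⟩
          by_contra h
          push_neg at h
          exact absurd (hp c ⟨h, hcs⟩) (not_lt.mpr hcG)
        · rintro ⟨hcu, hus⟩
          exact ⟨⟨hus, fun r hr => hcpos r ⟨lt_of_lt_of_le hcu hr.1, hr.2⟩⟩,
            ⟨hc0.trans_lt hcu, hus.trans hs.2⟩, hs⟩
      have heq : (fun u => R.indicator E (u, s)) = (Ioo c s).indicator (fun u => g u * g s) := by
        funext u
        by_cases h : (u, s) ∈ R
        · have h2 : u ∈ Ioo c s := by rw [← fiber]; exact h
          rw [Set.indicator_of_mem h, Set.indicator_of_mem h2]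
        · have h2 : u ∉ Ioo c s := by rw [← fiber]; exact h
          rw [Set.indicator_of_notMem h, Set.indicator_of_notMem h2]
      have hsub : Ioo c s ∩ Ioo t₀ T = Ioo c s :=
        inter_eq_left.mpr (fun r hr => ⟨hc0.trans_lt hr.1, hr.2.trans hs.2⟩)
      rw [heq, hμ, integral_indicator measurableSet_Ioo,
        Measure.restrict_restrict measurableSet_Ioo, hsub,
        integral_mul_const, hdiff hcs'.le, hGc, sub_zero, max_eq_left hGs.le]
    · have heq : (fun u => R.indicator E (u, s)) = fun _ => (0 : ℝ) := by
        funext u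
        apply Set.indicator_of_notMem
        rintro ⟨⟨hus, hp⟩, -⟩
        exact hGs (hp s ⟨hus.le, le_refl s⟩)
      rw [heq, integral_zero, max_eq_right (not_lt.mp hGs), zero_mul]
  have hWayA : (∫ s, ∫ u, R.indicator E (u, s) ∂μ ∂μ) = I :=
    setIntegral_congr_fun measurableSet_Ioo (fun s hs => hInnerA s hs)
  -- way B
  have hInnerB : ∀ u ∈ Ioo t₀ T, (∫ s, R.indicator E (u, s) ∂μ)
      = (Ioi c₀).indicator (fun _ => max (G T) 0) u * g u - max (G u) 0 * g u := by
    intro u hu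
    by_cases hGu : 0 < G u
    · set S₁ : Set ℝ := (Icc u T ∩ {r | G r ≤ 0}) ∪ {T} with hS₁def
      have hS₁ne : S₁.Nonempty := ⟨T, Or.inr rfl⟩
      have hS₁cl : IsClosed S₁ :=
        (isClosed_Icc.inter (isClosed_le Gcont continuous_const)).union isClosed_singleton
      have hS₁lb : ∀ r ∈ S₁, u ≤ r := by
        rintro r (⟨⟨h1, -⟩, -⟩ | rfl)
        · exact h1
        · exact hu.2.le
      have hS₁bdd : BddBelow S₁ := ⟨u, hS₁lb⟩
      set d := sInf S₁ with hddef
      have hdS : d ∈ S₁ := hS₁cl.csInf_mem hS₁ne hS₁bdd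
      have hud : u ≤ d := le_csInf hS₁ne hS₁lb
      have hdT : d ≤ T := csInf_le hS₁bdd (Or.inr rfl)
      have hud' : u < d := by
        rcases eq_or_lt_of_le hud with h | h
        · exfalso
          rcases hdS with ⟨-, hGd⟩ | hTd
          · exact absurd (h ▸ hGd) (not_le.mpr hGu)
          · rw [mem_singleton_iff] at hTd
            exact absurd (h.trans hTd) (ne_of_lt hu.2)
        · exact h
      have hposd : ∀ r ∈ Ioo u d, 0 < G r := by
        intro r hr
        by_contra hle
        exact absurd (csInf_le hS₁bdd (Or.inl ⟨⟨hr.1.le, hr.2.le.trans hdT⟩, not_lt.mp hle⟩))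
          (not_le.mpr hr.2)
      have fiber : {s' : ℝ | (u, s') ∈ R} = Ioo u d := by
        ext s'
        constructor
        · rintro ⟨⟨hus, hp⟩, -, hs'⟩
          refine ⟨hus, ?_⟩
          by_contra h
          push_neg at h
          rcases hdS with ⟨⟨hd1, -⟩, hGd⟩ | hTd
          · exact absurd (hp d ⟨hud, h⟩) (not_lt.mpr hGd)
          · rw [mem_singleton_iff] at hTd
            exact absurd (hTd ▸ h) (not_le.mpr hs'.2)
        · rintro ⟨hus, hsd⟩
          refine ⟨⟨hus, fun r hr => ?_⟩, hu, ⟨hu.1.trans hus, lt_of_lt_of_le hsd hdT⟩⟩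
          rcases eq_or_lt_of_le hr.1 with h | h
          · exact h ▸ hGu
          · exact hposd r ⟨h, lt_of_le_of_lt hr.2 hsd⟩
      have heq : (fun s' => R.indicator E (u, s')) = (Ioo u d).indicator (fun s' => g u * g s') := by
        funext s'
        by_cases h : (u, s') ∈ R
        · have h2 : s' ∈ Ioo u d := by rw [← fiber]; exact h
          rw [Set.indicator_of_mem h, Set.indicator_of_mem h2]
        · have h2 : s' ∉ Ioo u d := by rw [← fiber]; exact h
          rw [Set.indicator_of_notMem h, Set.indicator_of_notMem h2]
      have hsub : Ioo u d ∩ Ioo t₀ T = Ioo u d :=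
        inter_eq_left.mpr (fun r hr => ⟨hu.1.trans hr.1, lt_of_lt_of_le hr.2 hdT⟩)
      rw [heq, hμ, integral_indicator measurableSet_Ioo,
        Measure.restrict_restrict measurableSet_Ioo, hsub,
        integral_const_mul, hdiff hud]
      rcases lt_or_ge c₀ u with hcu | huc
      · have hdT' : d = T := by
          refine le_antisymm hdT (le_csInf hS₁ne ?_)
          rintro r (⟨⟨h1, h2⟩, hGr⟩ | rfl)
          · exact absurd hGr (not_le.mpr (hc₀pos r ⟨lt_of_lt_of_le hcu h1, h2⟩))
          · exact le_refl _
        have hGT : 0 < G T := hc₀pos T ⟨hcu.trans hu.2, le_refl T⟩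
        rw [Set.indicator_of_mem (mem_Ioi.mpr hcu), hdT', max_eq_left hGT.le,
          max_eq_left hGu.le]
        ring
      · have hdc : d ≤ c₀ := csInf_le hS₁bdd (Or.inl ⟨⟨huc, hc₀T⟩, hc₀G⟩)
        have hGdle : G d ≤ 0 := by
          rcases hdS with ⟨-, hGd⟩ | hTd
          · exact hGd
          · rw [mem_singleton_iff] at hTd
            have : c₀ = T := le_antisymm hc₀T (hTd ▸ hdc)
            exact hTd ▸ (this ▸ hc₀G)
        have hGd : G d = 0 := leftZero G Gcont hud' hGdle hposd
        rw [Set.indicator_of_notMem (by simpa using huc), hGd, max_eq_left hGu.le]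
        ring
    · have heq : (fun s' => R.indicator E (u, s')) = fun _ => (0 : ℝ) := by
        funext s'
        apply Set.indicator_of_notMem
        rintro ⟨⟨hus, hp⟩, -⟩
        exact hGu (hp u ⟨le_refl u, hus.le⟩)
      have h2 : u ∉ Ioi c₀ := fun h => hGu (hc₀pos u ⟨h, hu.2.le⟩)
      rw [heq, integral_zero, Set.indicator_of_notMem h2, max_eq_right (not_lt.mp hGu)]
      ring
  have hind : Integrable (fun u => (Ioi c₀).indicator (fun _ => max (G T) 0) u * g u) μ := by
    have : (fun u => (Ioi c₀).indicator (fun _ => max (G T) 0) u * g u)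
        = (Ioi c₀).indicator (fun u => max (G T) 0 * g u) := by
      funext u
      by_cases h : u ∈ Ioi c₀
      · rw [Set.indicator_of_mem h, Set.indicator_of_mem h]
      · rw [Set.indicator_of_notMem h, Set.indicator_of_notMem h, zero_mul]
    rw [this]
    exact (hgI.const_mul _).indicator measurableSet_Ioi
  have hWayB : (∫ u, ∫ s, R.indicator E (u, s) ∂μ ∂μ)
      = (∫ u in Ioo t₀ T, (Ioi c₀).indicator (fun _ => max (G T) 0) u * g u) - I := by
    rw [setIntegral_congr_fun measurableSet_Ioo (fun u hu => hInnerB u hu)]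
    exact integral_sub hind hIint
  have hIndVal : (∫ u in Ioo t₀ T, (Ioi c₀).indicator (fun _ => max (G T) 0) u * g u)
      = max (G T) 0 * (G T - G c₀) := by
    have h1 : (fun u => (Ioi c₀).indicator (fun _ => max (G T) 0) u * g u)
        = (Ioi c₀).indicator (fun u => max (G T) 0 * g u) := by
      funext u
      by_cases h : u ∈ Ioi c₀
      · rw [Set.indicator_of_mem h, Set.indicator_of_mem h]
      · rw [Set.indicator_of_notMem h, Set.indicator_of_notMem h, zero_mul]
    rw [h1, integral_indicator measurableSet_Ioi,
      Measure.restrict_restrict measurableSet_Ioi]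
    have h2 : Ioi c₀ ∩ Ioo t₀ T = Ioo c₀ T := by
      ext x
      constructor
      · rintro ⟨hx1, -, hx3⟩
        exact ⟨hx1, hx3⟩
      · rintro ⟨hx1, hx2⟩
        exact ⟨hx1, hc₀0.trans_lt hx1, hx2⟩
    rw [h2, integral_const_mul, hdiff hc₀T]
  have hkey : max (G T) 0 * (G T - G c₀) - I = I := by
    rw [← hIndVal, ← hWayB, swap, hWayA]
  have hIoc : (∫ s in t₀..T, max (G s) 0 * g s) = I := by
    rw [intervalIntegral.integral_of_le hT, integral_Ioc_eq_integral_Ioo]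
  rw [hIoc]
  by_cases hGT : 0 < G T
  · have hc₀T' : c₀ < T := by
      rcases eq_or_lt_of_le hc₀T with h | h
      · exact absurd (h ▸ hc₀G) (not_le.mpr (h ▸ hGT))
      · exact h
    have hGc₀ : G c₀ = 0 := rightZero G Gcont hc₀T' hc₀G hc₀pos
    rw [hGc₀, sub_zero, max_eq_left hGT.le] at hkey
    rw [max_eq_left hGT.le]
    nlinarith [hkey]
  · have : max (G T) 0 = 0 := max_eq_right (not_lt.mp hGT)
    rw [this, zero_mul, zero_sub] at hkey
    rw [this]
    nlinarith [hkey]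

lemma bext_integrableOn {a : ℝ → ℝ} (ha : LocIntOn a) (c d : ℝ) :
    IntegrableOn ((Ici (0:ℝ)).indicator a) (Icc c d) volume := by
  have h1 : IntegrableOn a (Icc 0 (max d 0)) volume := ha _ (le_max_right _ _)
  have h2 : IntegrableOn a (Ici 0 ∩ Icc c d) volume :=
    h1.mono_set (fun x hx => ⟨hx.1, hx.2.2.trans (le_max_left _ _)⟩)
  rw [IntegrableOn, integrable_indicator_iff measurableSet_Ici, IntegrableOn,
    Measure.restrict_restrict measurableSet_Ici]
  exact h2

lemma bext_intervalIntegrable {a : ℝ → ℝ} (ha : LocIntOn a) (c d : ℝ) :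
    IntervalIntegrable (fun s => -((Ici (0:ℝ)).indicator a s)) volume c d := by
  apply IntervalIntegrable.neg
  rw [intervalIntegrable_iff]
  exact (bext_integrableOn ha (min c d) (max c d)).mono_set
    (fun x hx => ⟨hx.1.le, hx.2⟩)

lemma step1 (a : ℝ → ℝ) (y₀ : ℝ) (y : ℝ → ℝ) (ha : LocIntOn a) (hy : IsMaxSol a y₀ y)
    {t₀ t₁ : ℝ} (h0 : 0 ≤ t₀) (h01 : t₀ ≤ t₁) (hz0 : y t₀ = 0) (hz1 : y t₁ = 0) :
    0 ≤ ∫ s in t₀..t₁, a s := by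
  rcases eq_or_lt_of_le h01 with rfl | h01'
  · simp
  obtain ⟨⟨ycont, ynn, yeq⟩, ymax⟩ := hy
  set b : ℝ → ℝ := fun s => -((Ici (0:ℝ)).indicator a s) with hbdef
  have hbint : ∀ c d : ℝ, IntervalIntegrable b volume c d := fun c d =>
    bext_intervalIntegrable ha c d
  set G : ℝ → ℝ := fun t => ∫ u in t₀..t, b u with hGdef
  have Gcont : Continuous G := intervalIntegral.continuous_primitive hbint t₀
  have hG0 : G t₀ = 0 := intervalIntegral.integral_same
  have ymcont : Continuous (fun t : ℝ => y (max t 0)) :=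
    ycont.comp_continuous (continuous_id.max continuous_const)
      (fun t => mem_Ici.mpr (le_max_right _ _))
  set v : ℝ → ℝ := fun t => max (G t) 0 ^ 2 with hvdef
  have vcont : Continuous v := (Gcont.max continuous_const).pow 2
  set z : ℝ → ℝ := fun t => if t ≤ t₀ then y (max t 0) else v t with hzdef
  have hvt₀ : v t₀ = 0 := by simp [hvdef, hG0]
  have zcont : Continuous z := by
    apply Continuous.if_le ymcont vcont continuous_id continuous_const
    intro t ht
    simp only [id_eq] at ht
    rw [ht, max_eq_left h0, hz0, hvt₀]
  have hzy : ∀ s, 0 ≤ s → s ≤ t₀ → z s = y s := by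
    intro s hs hst
    simp [hzdef, hst, max_eq_left hs]
  have hsqz : ∀ s, t₀ ≤ s → Real.sqrt (z s) = max (G s) 0 := by
    intro s hs
    rcases eq_or_lt_of_le hs with h | h
    · rw [← h, hzy t₀ h0 le_rfl, hz0, hG0, Real.sqrt_zero, max_self]
    · have hzv : z s = v s := by simp [hzdef, not_le.mpr h]
      rw [hzv, hvdef]
      exact Real.sqrt_sq (le_max_right _ _)
  have haint : ∀ (w : ℝ → ℝ), ContinuousOn w (Ici 0) → ∀ t, 0 ≤ t →
      IntegrableOn (fun s => a s * Real.sqrt (w s)) (Icc 0 t) volume := by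
    intro w hw t ht
    exact (ha t ht).mul_continuousOn
      (Real.continuous_sqrt.comp_continuousOn (hw.mono Icc_subset_Ici_self)) isCompact_Icc
  have hii : ∀ (w : ℝ → ℝ), ContinuousOn w (Ici 0) → ∀ p q : ℝ, 0 ≤ p → p ≤ q →
      IntervalIntegrable (fun s => a s * Real.sqrt (w s)) volume p q := by
    intro w hw p q hp hpq
    rw [intervalIntegrable_iff, uIoc_of_le hpq]
    exact (haint w hw q (hp.trans hpq)).mono_set
      (fun x hx => ⟨hp.trans hx.1.le, hx.2⟩)
  have znn : ∀ t, 0 ≤ t → 0 ≤ z t := by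
    intro t ht
    by_cases h : t ≤ t₀
    · rw [hzy t ht h]; exact ynn t ht
    · simp only [hzdef, if_neg h, hvdef]
      positivity
  have zsol : IsSol a y₀ z := by
    refine ⟨zcont.continuousOn, znn, ?_⟩
    intro t ht
    by_cases htt : t ≤ t₀
    · have hcong : ∫ s in (0:ℝ)..t, a s * Real.sqrt (z s)
          = ∫ s in (0:ℝ)..t, a s * Real.sqrt (y s) := by
        apply intervalIntegral.integral_congr
        intro s hs
        rw [Set.uIcc_of_le ht] at hs
        show a s * Real.sqrt (z s) = a s * Real.sqrt (y s)
        rw [hzy s hs.1 (hs.2.trans htt)]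
      rw [hcong, hzy t ht htt]
      exact yeq t ht
    · push_neg at htt
      have ht₀t : t₀ ≤ t := htt.le
      have h1 : IntervalIntegrable (fun s => a s * Real.sqrt (z s)) volume 0 t₀ :=
        hii z zcont.continuousOn 0 t₀ le_rfl h0
      have h2 : IntervalIntegrable (fun s => a s * Real.sqrt (z s)) volume t₀ t :=
        hii z zcont.continuousOn t₀ t h0 ht₀t
      have hsplit : ∫ s in (0:ℝ)..t, a s * Real.sqrt (z s)
          = (∫ s in (0:ℝ)..t₀, a s * Real.sqrt (z s))
            + ∫ s in t₀..t, a s * Real.sqrt (z s) :=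
        (intervalIntegral.integral_add_adjacent_intervals h1 h2).symm
      have hA : ∫ s in (0:ℝ)..t₀, a s * Real.sqrt (z s) = y₀ / 2 := by
        have hcong : ∫ s in (0:ℝ)..t₀, a s * Real.sqrt (z s)
            = ∫ s in (0:ℝ)..t₀, a s * Real.sqrt (y s) := by
          apply intervalIntegral.integral_congr
          intro s hs
          rw [Set.uIcc_of_le h0] at hs
          show a s * Real.sqrt (z s) = a s * Real.sqrt (y s)
          rw [hzy s hs.1 hs.2]
        have h3 := yeq t₀ h0
        rw [hz0] at h3
        rw [hcong]
        linarith
      have hB : ∫ s in t₀..t, a s * Real.sqrt (z s) = -(max (G t) 0 ^ 2 / 2) := by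
        have hcong : ∫ s in t₀..t, a s * Real.sqrt (z s)
            = ∫ s in t₀..t, -(max (G s) 0 * b s) := by
          apply intervalIntegral.integral_congr
          intro s hs
          rw [Set.uIcc_of_le ht₀t] at hs
          have h0s : (0:ℝ) ≤ s := h0.trans hs.1
          have hbs : b s = -a s := by
            simp [hbdef, Set.indicator_of_mem (mem_Ici.mpr h0s)]
          show a s * Real.sqrt (z s) = -(max (G s) 0 * b s)
          rw [hsqz s hs.1, hbs]
          ring
        have hkey : max (G t) 0 ^ 2 = 2 * ∫ s in t₀..t, max (G s) 0 * b s :=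
          key_identity b hbint ht₀t
        rw [hcong, intervalIntegral.integral_neg]
        linarith
      have hzt : z t = max (G t) 0 ^ 2 := by
        simp [hzdef, not_le.mpr htt, hvdef]
      rw [hzt, hsplit, hA, hB]
      ring
  have hmax := ymax z zsol t₁ (h0.trans h01)
  rw [hz1] at hmax
  have hzt₁ : z t₁ = max (G t₁) 0 ^ 2 := by
    simp [hzdef, not_le.mpr h01', hvdef]
  rw [hzt₁] at hmax
  have hmax0 : max (G t₁) 0 = 0 := by
    have h4 : (0:ℝ) ≤ max (G t₁) 0 := le_max_right _ _
    nlinarith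
  have h3 : G t₁ ≤ 0 := by
    have := le_max_left (G t₁) (0:ℝ)
    rw [hmax0] at this
    exact this
  have hgb : G t₁ = -∫ s in t₀..t₁, a s := by
    have : G t₁ = ∫ s in t₀..t₁, b s := rfl
    rw [this, ← intervalIntegral.integral_neg]
    apply intervalIntegral.integral_congr
    intro s hs
    rw [Set.uIcc_of_le h01] at hs
    simp [hbdef, Set.indicator_of_mem (mem_Ici.mpr (h0.trans hs.1))]
  linarith [hgb ▸ h3]

theorem stmt3 (a : ℝ → ℝ) (y₀ : ℝ) (ha : LocIntOn a) (hy₀ : 0 ≤ y₀)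
    (y : ℝ → ℝ) (hy : IsMaxSol a y₀ y) :
    (∀ᵐ t ∂(MeasureTheory.volume : MeasureTheory.Measure ℝ), 0 ≤ t → y t = 0 → 0 ≤ a t) ∧
    (∀ᵐ t ∂(MeasureTheory.volume : MeasureTheory.Measure ℝ), 0 ≤ t →
      (if 0 < y t then a t else 0) ≤ a t) := by
  have ycont := hy.1.1
  have ynn := hy.1.2.1
  set b : ℝ → ℝ := (Ici (0:ℝ)).indicator a with hbdef
  have hbloc : LocallyIntegrable b volume := by
    rw [locallyIntegrable_iff]
    intro K hK
    exact (bext_integrableOn ha (sInf K) (sSup K)).mono_set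
      hK.isBounded.subset_Icc_sInf_sSup
  have hbm := hbloc.aestronglyMeasurable
  set b' : ℝ → ℝ := hbm.mk b with hb'def
  have hb'ae : b =ᵐ[volume] b' := hbm.ae_eq_mk
  have hb'sm : StronglyMeasurable b' := hbm.stronglyMeasurable_mk
  have hb'loc : LocallyIntegrable b' volume := by
    rw [locallyIntegrable_iff]
    intro K hK
    exact (hbloc.integrableOn_isCompact hK).congr (ae_restrict_of_ae hb'ae)
  have hZclosed : IsClosed (Ici (0:ℝ) ∩ y ⁻¹' ({0} : Set ℝ)) :=
    ycont.preimage_isClosed_of_isClosed isClosed_Ici isClosed_singleton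
  set N : Set ℝ := ({t : ℝ | 0 < t ∧ y t = 0}) ∩ b' ⁻¹' (Iio 0) with hNdef
  have hNmeas : MeasurableSet N := by
    have h1 : MeasurableSet {t : ℝ | 0 < t ∧ y t = 0} := by
      have heq : {t : ℝ | 0 < t ∧ y t = 0}
          = Ioi 0 ∩ (Ici (0:ℝ) ∩ y ⁻¹' ({0} : Set ℝ)) := by
        ext t
        constructor
        · rintro ⟨h1, h2⟩
          exact ⟨h1, le_of_lt h1, h2⟩
        · rintro ⟨h1, -, h2⟩
          exact ⟨h1, h2⟩
      rw [heq]
      exact measurableSet_Ioi.inter hZclosed.measurableSet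
    exact h1.inter (hb'sm.measurable measurableSet_Iio)
  have keyN : volume N = 0 := by
    by_contra hvol
    have hres : (volume.restrict N) ≠ 0 := by
      rw [Ne, Measure.restrict_eq_zero]
      exact hvol
    have : (ae (volume.restrict N)).NeBot := ae_neBot.mpr hres
    have hae1 : ∀ᵐ t₀ ∂volume.restrict N, t₀ ∈ N := ae_restrict_mem hNmeas
    have hae2 := VitaliFamily.ae_tendsto_measure_inter_div
      (IsUnifLocDoublingMeasure.vitaliFamily (volume : Measure ℝ) 1) N
    have hae3 : ∀ᵐ t₀ ∂volume.restrict N, Tendsto (fun A => ⨍ r in A, ‖b' r - b' t₀‖)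
        ((IsUnifLocDoublingMeasure.vitaliFamily (volume : Measure ℝ) 1).filterAt t₀)
        (𝓝 0) :=
      ae_restrict_of_ae
        ((IsUnifLocDoublingMeasure.vitaliFamily (volume : Measure ℝ) 1).ae_tendsto_average_norm_sub hb'loc)
    obtain ⟨t₀, ht₀N, ht₀d, ht₀l⟩ := (hae1.and (hae2.and hae3)).exists
    obtain ⟨⟨hpos₀, hy₀'⟩, hb₀⟩ := ht₀N
    have hd := ht₀d.comp (Real.tendsto_Icc_vitaliFamily_right t₀)
    have hl := ht₀l.comp (Real.tendsto_Icc_vitaliFamily_right t₀)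
    set c : ℝ := -b' t₀ with hcdef
    have hc : 0 < c := by
      have : b' t₀ < 0 := hb₀
      simp only [hcdef]
      linarith
    have hev2 : ∀ᶠ u in 𝓝[>] t₀, (⨍ r in Icc t₀ u, ‖b' r - b' t₀‖) < c/4 :=
      hl.eventually_lt_const (by positivity)
    obtain ⟨w, hw, hsub⟩ :=
      (mem_nhdsGT_iff_exists_Ioo_subset' (lt_add_one t₀)).mp hev2
    have hev1 : ∀ᶠ u in 𝓝[>] t₀,
        (1/2 : ℝ≥0∞) < volume (N ∩ Icc t₀ u) / volume (Icc t₀ u) :=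
      hd.eventually_const_lt (by
        rw [show (1/2 : ℝ≥0∞) = 1/2 from rfl]
        exact ENNReal.half_lt_self one_ne_zero ENNReal.one_ne_top)
    obtain ⟨u, hu1, hu2⟩ := (hev1.and (Ioo_mem_nhdsGT_of_mem ⟨le_refl t₀, hw⟩)).exists
    have hNum : volume (N ∩ Icc t₀ u) ≠ 0 := by
      intro h
      rw [h, ENNReal.zero_div] at hu1
      exact (ENNReal.not_lt_zero) hu1
    have hsingle : volume (N ∩ Icc t₀ u ∩ {t₀}ᶜ) ≠ 0 := by
      intro h
      apply hNum
      have hsubs : N ∩ Icc t₀ u ⊆ (N ∩ Icc t₀ u ∩ {t₀}ᶜ) ∪ ({t₀} : Set ℝ) := by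
        intro x hx
        by_cases hx0 : x = t₀
        · exact Or.inr (by simp [hx0])
        · exact Or.inl ⟨hx, hx0⟩
      have hle := (measure_mono hsubs).trans (measure_union_le (μ := (volume : Measure ℝ)) _ _)
      rw [h, measure_singleton, zero_add] at hle
      exact le_antisymm hle (by simp)
    obtain ⟨t₁, ⟨⟨ht₁N, ht₁I⟩, ht₁ne⟩⟩ := nonempty_of_measure_ne_zero hsingle
    have ht₀₁ : t₀ < t₁ := lt_of_le_of_ne ht₁I.1 (Ne.symm ht₁ne)
    have havg : (⨍ r in Icc t₀ t₁, ‖b' r - b' t₀‖) < c/4 :=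
      hsub ⟨ht₀₁, lt_of_le_of_lt ht₁I.2 hu2.2⟩
    have hIccvol : volume (Icc t₀ t₁) = ENNReal.ofReal (t₁ - t₀) := Real.volume_Icc
    have hIbound : ∫ r in Icc t₀ t₁, ‖b' r - b' t₀‖ < (c/4) * (t₁ - t₀) := by
      rw [setAverage_eq, measureReal_def, hIccvol, ENNReal.toReal_ofReal (by linarith), smul_eq_mul] at havg
      have hpos' : (0:ℝ) < t₁ - t₀ := by linarith
      calc ∫ r in Icc t₀ t₁, ‖b' r - b' t₀‖
          = (t₁ - t₀) * ((t₁ - t₀)⁻¹ * ∫ r in Icc t₀ t₁, ‖b' r - b' t₀‖) := by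
            field_simp
        _ < (t₁ - t₀) * (c/4) := mul_lt_mul_of_pos_left havg hpos'
        _ = (c/4) * (t₁ - t₀) := by ring
    have hb'ii : IntervalIntegrable b' volume t₀ t₁ := by
      rw [intervalIntegrable_iff]
      exact (hb'loc.integrableOn_isCompact (isCompact_Icc
        (a := min t₀ t₁) (b := max t₀ t₁))).mono_set (fun x hx => ⟨hx.1.le, hx.2⟩)
    have hnormint : IntervalIntegrable (fun s => ‖b' s - b' t₀‖) volume t₀ t₁ :=
      (hb'ii.sub intervalIntegrable_const).norm
    have hIb : ∫ s in t₀..t₁, b' s < 0 := by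
      have hsplit : ∫ s in t₀..t₁, b' s
          = (∫ s in t₀..t₁, (b' s - b' t₀)) + (t₁ - t₀) * b' t₀ := by
        rw [intervalIntegral.integral_sub hb'ii intervalIntegrable_const,
          intervalIntegral.integral_const, smul_eq_mul]
        ring
      have h2 : (∫ s in t₀..t₁, (b' s - b' t₀)) ≤ ∫ s in t₀..t₁, ‖b' s - b' t₀‖ := by
        apply intervalIntegral.integral_mono_on ht₀₁.le (hb'ii.sub intervalIntegrable_const)
          hnormint
        intro s _
        exact le_abs_self _
      have h3 : ∫ s in t₀..t₁, ‖b' s - b' t₀‖ = ∫ r in Icc t₀ t₁, ‖b' r - b' t₀‖ := by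
        rw [intervalIntegral.integral_of_le ht₀₁.le, ← integral_Icc_eq_integral_Ioc]
      have hbt : b' t₀ = -c := by simp [hcdef]
      have hlt := h2.trans_lt (h3 ▸ hIbound)
      rw [hbt] at hsplit hlt
      rw [hsplit]
      nlinarith [mul_pos (sub_pos.mpr ht₀₁) hc]
    have hstep := step1 a y₀ y ha hy hpos₀.le ht₀₁.le hy₀' ht₁N.1.2
    have hab : ∫ s in t₀..t₁, a s = ∫ s in t₀..t₁, b' s := by
      have h1 : ∫ s in t₀..t₁, a s = ∫ s in t₀..t₁, b s := by
        apply intervalIntegral.integral_congr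
        intro s hs
        rw [Set.uIcc_of_le ht₀₁.le] at hs
        show a s = b s
        rw [hbdef, Set.indicator_of_mem (mem_Ici.mpr (hpos₀.le.trans hs.1))]
      have h2 : ∫ s in t₀..t₁, b s = ∫ s in t₀..t₁, b' s :=
        intervalIntegral.integral_congr_ae (hb'ae.mono fun s h _ => h)
      rw [h1, h2]
    rw [hab] at hstep
    linarith
  have hae0 : ∀ᵐ t : ℝ ∂volume, t ∉ ({0} : Set ℝ) :=
    measure_eq_zero_iff_ae_notMem.mp (measure_singleton 0)
  have haeN : ∀ᵐ t : ℝ ∂volume, t ∉ N := measure_eq_zero_iff_ae_notMem.mp keyN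
  have main : ∀ᵐ t ∂(volume : Measure ℝ), 0 ≤ t → y t = 0 → 0 ≤ a t := by
    filter_upwards [haeN, hae0, hb'ae] with t htN ht0 htb
    intro htge hty
    by_contra hat
    push_neg at hat
    have htpos : 0 < t := lt_of_le_of_ne htge (Ne.symm (by simpa using ht0))
    apply htN
    refine ⟨⟨htpos, hty⟩, ?_⟩
    show b' t < 0
    rw [← htb, hbdef, Set.indicator_of_mem (mem_Ici.mpr htge)]
    exact hat
  refine ⟨main, ?_⟩
  filter_upwards [main] with t h ht
  by_cases h' : 0 < y t
  · rw [if_pos h']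
  · rw [if_neg h']
    exact h ht (le_antisymm (not_lt.mp h') (ynn t ht))
end

section
/- For i = 1, 2, let aᵢ: [0,∞) → ℝ be locally integrable, let y₀ ≥ 0, and let yᵢ be the maximal solution of the Cauchy problem y' + 2aᵢ√y = 0, y(0) = y₀. Then for every t ≥ 0, sup_{s ∈ [0,t]} |√(y₁(s)) − √(y₂(s))| ≤ ∫₀ᵗ |a₁(s) − a₂(s)| ds. -/
open MeasureTheory Set Filter

open Topology

namespace Stmt5Aux

lemma chainRule {H Hd : ℝ → ℝ} {L : NNReal} (hH : ∀ x, HasDerivAt H (Hd x) x)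
    (hLip : LipschitzWith L Hd) {f : ℝ → ℝ} (hf : Integrable f volume)
    (C : ℝ) {T₀ T : ℝ} (hT : T₀ ≤ T) :
    H (C + ∫ s in T₀..T, f s) = H C + ∫ s in T₀..T, Hd (C + ∫ u in T₀..s, f u) * f s := by
  have hHdc : Continuous Hd := hLip.continuous
  have hHc : Continuous H := by
    rw [continuous_iff_continuousAt]; exact fun x => (hH x).continuousAt
  set Φ : ℝ → ℝ := fun s => C + ∫ u in T₀..s, f u with hΦdef
  have hΦc : Continuous Φ :=
    continuous_const.add (intervalIntegral.continuous_primitive (fun a b => hf.intervalIntegrable) T₀)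
  obtain ⟨B, hB⟩ := (isCompact_Icc (a := T₀) (b := T)).exists_bound_of_continuousOn
    ((hHdc.comp hΦc).continuousOn)
  have hB0 : 0 ≤ B := le_trans (norm_nonneg _) (hB T₀ (left_mem_Icc.2 hT))
  have happrox : ∀ n : ℕ, ∃ gg : ℝ → ℝ, Continuous gg ∧ Integrable gg volume ∧
      (∫ x, ‖f x - gg x‖) ≤ 1/(n+1) := by
    intro n
    obtain ⟨gg, _, h1, h2, h3⟩ :=
      hf.exists_hasCompactSupport_integral_sub_le (by positivity : (0:ℝ) < 1/(n+1))
    exact ⟨gg, h2, h3, h1⟩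
  choose g hgc hgi hgL1 using happrox
  have hsub : ∀ n : ℕ, Integrable (fun u => g n u - f u) volume := fun n => (hgi n).sub hf
  set Φn : ℕ → ℝ → ℝ := fun n s => C + ∫ u in T₀..s, g n u with hΦn
  have hΦnDeriv : ∀ n s, HasDerivAt (Φn n) (g n s) s := by
    intro n s
    exact (((hgc n).integral_hasStrictDerivAt T₀ s).hasDerivAt).const_add C
  have hΦnc : ∀ n, Continuous (Φn n) := fun n =>
    continuous_iff_continuousAt.2 (fun s => (hΦnDeriv n s).continuousAt)
  have hkey : ∀ n, H (Φn n T) = H C + ∫ s in T₀..T, Hd (Φn n s) * g n s := by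
    intro n
    have hderiv : ∀ s ∈ uIcc T₀ T, HasDerivAt (H ∘ Φn n) (Hd (Φn n s) * g n s) s := by
      intro s _
      exact (hH (Φn n s)).comp s (hΦnDeriv n s)
    have hint : IntervalIntegrable (fun s => Hd (Φn n s) * g n s) volume T₀ T :=
      ((hHdc.comp (hΦnc n)).mul (hgc n)).intervalIntegrable _ _
    have h2 := intervalIntegral.integral_eq_sub_of_hasDerivAt hderiv hint
    have hT0 : Φn n T₀ = C := by simp [hΦn]
    simp only [Function.comp_apply, hT0] at h2
    linarith
  have hclose : ∀ n, ∀ s ∈ Icc T₀ T, |Φn n s - Φ s| ≤ 1/(n+1) := by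
    intro n s hs
    have hint1 : IntervalIntegrable (g n) volume T₀ s := (hgi n).intervalIntegrable
    have hint2 : IntervalIntegrable f volume T₀ s := hf.intervalIntegrable
    have heq : Φn n s - Φ s = ∫ u in T₀..s, (g n u - f u) := by
      rw [intervalIntegral.integral_sub hint1 hint2]; simp [hΦn, hΦdef]
    rw [heq]
    calc |∫ u in T₀..s, (g n u - f u)| ≤ ∫ u in T₀..s, |g n u - f u| :=
          intervalIntegral.abs_integral_le_integral_abs hs.1
      _ = ∫ u in Ioc T₀ s, |g n u - f u| := intervalIntegral.integral_of_le hs.1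
      _ ≤ ∫ u, |g n u - f u| := by
          apply setIntegral_le_integral (hsub n).abs
          filter_upwards with x using abs_nonneg _
      _ = ∫ u, ‖f u - g n u‖ := by
          congr 1; funext u; rw [Real.norm_eq_abs, abs_sub_comm]
      _ ≤ 1/(n+1) := hgL1 n
  have hten : Tendsto (fun n : ℕ => 1/((n:ℝ)+1)) atTop (𝓝 0) :=
    tendsto_one_div_add_atTop_nhds_zero_nat
  have hL : Tendsto (fun n => H (Φn n T)) atTop (𝓝 (H (Φ T))) := by
    have h1 : Tendsto (fun n => Φn n T) atTop (𝓝 (Φ T)) := by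
      rw [tendsto_iff_dist_tendsto_zero]
      refine squeeze_zero (fun n => dist_nonneg) (fun n => ?_) hten
      rw [Real.dist_eq]; exact hclose n T (right_mem_Icc.2 hT)
    exact hHc.continuousAt.tendsto.comp h1
  have hfn1 : ∀ n : ℕ, (∫ u, |g n u|) ≤ (∫ u, ‖f u‖) + 1 := by
    intro n
    have hpt : ∀ u, |g n u| ≤ ‖f u - g n u‖ + ‖f u‖ := by
      intro u
      rw [Real.norm_eq_abs, Real.norm_eq_abs]
      calc |g n u| = |(g n u - f u) + f u| := by ring_nf
        _ ≤ |g n u - f u| + |f u| := abs_add_le _ _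
        _ = |f u - g n u| + |f u| := by rw [abs_sub_comm]
    calc (∫ u, |g n u|) ≤ ∫ u, (‖f u - g n u‖ + ‖f u‖) := by
          exact integral_mono (hgi n).abs ((hf.sub (hgi n)).norm.add hf.norm) hpt
      _ = (∫ u, ‖f u - g n u‖) + ∫ u, ‖f u‖ :=
          integral_add (hf.sub (hgi n)).norm hf.norm
      _ ≤ 1/(n+1) + ∫ u, ‖f u‖ := by
          have := hgL1 n; linarith
      _ ≤ (∫ u, ‖f u‖) + 1 := by
          have : (1:ℝ)/(n+1) ≤ 1 := by
            rw [div_le_one (by positivity)]; linarith [Nat.cast_nonneg (α := ℝ) n]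
          linarith
  set M : ℝ := (∫ u, ‖f u‖) + 1 with hM
  have hR : Tendsto (fun n => ∫ s in T₀..T, Hd (Φn n s) * g n s) atTop
      (𝓝 (∫ s in T₀..T, Hd (Φ s) * f s)) := by
    rw [tendsto_iff_dist_tendsto_zero]
    have hIbdd : ∀ n : ℕ, dist (∫ s in T₀..T, Hd (Φn n s) * g n s)
        (∫ s in T₀..T, Hd (Φ s) * f s) ≤ ((L:ℝ) * M + B) * (1/(n+1)) := by
      intro n
      have hi1 : IntegrableOn (fun s => Hd (Φn n s) * g n s) (Ioc T₀ T) volume :=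
        (((hHdc.comp (hΦnc n)).mul (hgc n)).integrableOn_Icc).mono_set Ioc_subset_Icc_self
      have hi2 : IntegrableOn (fun s => Hd (Φ s) * f s) (Ioc T₀ T) volume := by
        apply Integrable.bdd_mul (c := B) (hf.restrict) ((hHdc.comp hΦc).aestronglyMeasurable)
        filter_upwards [ae_restrict_mem measurableSet_Ioc] with x hx
        exact hB x (Ioc_subset_Icc_self hx)
      rw [Real.dist_eq, intervalIntegral.integral_of_le hT, intervalIntegral.integral_of_le hT,
        ← integral_sub hi1 hi2]
      calc |∫ s in Ioc T₀ T, (Hd (Φn n s) * g n s - Hd (Φ s) * f s)|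
          ≤ ∫ s in Ioc T₀ T, |Hd (Φn n s) * g n s - Hd (Φ s) * f s| := by
            simpa using norm_integral_le_integral_norm
              (fun s => Hd (Φn n s) * g n s - Hd (Φ s) * f s) (μ := volume.restrict (Ioc T₀ T))
        _ ≤ ∫ s in Ioc T₀ T, ((L:ℝ) * (1/(n+1)) * |g n s| + B * |g n s - f s|) := by
            apply setIntegral_mono_on (hi1.sub hi2).abs
            · exact (((hgi n).abs.const_mul _).add ((hsub n).abs.const_mul _)).integrableOn
            · exact measurableSet_Ioc
            · intro s hs
              simp only [Pi.sub_apply]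
              have hs' : s ∈ Icc T₀ T := Ioc_subset_Icc_self hs
              have hsplit : Hd (Φn n s) * g n s - Hd (Φ s) * f s
                  = (Hd (Φn n s) - Hd (Φ s)) * g n s + Hd (Φ s) * (g n s - f s) := by ring
              rw [hsplit]
              calc |(Hd (Φn n s) - Hd (Φ s)) * g n s + Hd (Φ s) * (g n s - f s)|
                  ≤ |(Hd (Φn n s) - Hd (Φ s)) * g n s| + |Hd (Φ s) * (g n s - f s)| := abs_add_le _ _
                _ = |Hd (Φn n s) - Hd (Φ s)| * |g n s| + |Hd (Φ s)| * |g n s - f s| := by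
                    rw [abs_mul, abs_mul]
                _ ≤ (L:ℝ) * (1/(n+1)) * |g n s| + B * |g n s - f s| := by
                    have h1 : |Hd (Φn n s) - Hd (Φ s)| ≤ (L:ℝ) * (1/(n+1)) := by
                      have := hLip.dist_le_mul (Φn n s) (Φ s)
                      rw [Real.dist_eq, Real.dist_eq] at this
                      exact this.trans (by
                        have := hclose n s hs'
                        have hL0 : (0:ℝ) ≤ (L:ℝ) := L.coe_nonneg
                        nlinarith [abs_nonneg (Φn n s - Φ s)])
                    have h2 : |Hd (Φ s)| ≤ B := by
                      have := hB s hs'; rwa [Real.norm_eq_abs] at this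
                    have := abs_nonneg (g n s)
                    have := abs_nonneg (g n s - f s)
                    nlinarith
        _ ≤ (L:ℝ) * (1/(n+1)) * M + B * (1/(n+1)) := by
            rw [integral_add (((hgi n).abs.const_mul _).integrableOn)
              (((hsub n).abs.const_mul _).integrableOn),
              integral_const_mul, integral_const_mul]
            have hL0 : (0:ℝ) ≤ (L:ℝ) := L.coe_nonneg
            have e1 : (∫ s in Ioc T₀ T, |g n s|) ≤ M := by
              refine le_trans (setIntegral_le_integral (hgi n).abs ?_) (hfn1 n)
              filter_upwards with x using abs_nonneg _
            have e2 : (∫ s in Ioc T₀ T, |g n s - f s|) ≤ 1/(n+1) := by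
              refine le_trans (setIntegral_le_integral (hsub n).abs ?_) ?_
              · filter_upwards with x using abs_nonneg _
              · refine le_trans (le_of_eq ?_) (hgL1 n)
                congr 1; funext u; rw [Real.norm_eq_abs, abs_sub_comm]
            have e0 : (0:ℝ) ≤ 1/((n:ℝ)+1) := by positivity
            have h4 : (0:ℝ) ≤ (L:ℝ) * (1/(n+1)) := mul_nonneg hL0 e0
            have h5 := mul_le_mul_of_nonneg_left e1 h4
            have h6 := mul_le_mul_of_nonneg_left e2 hB0
            linarith
        _ = ((L:ℝ) * M + B) * (1/(n+1)) := by ring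
    refine squeeze_zero (fun n => dist_nonneg) hIbdd ?_
    have := hten.const_mul ((L:ℝ) * M + B)
    simpa using this
  have hL' : Tendsto (fun n => H C + ∫ s in T₀..T, Hd (Φn n s) * g n s) atTop (𝓝 (H (Φ T))) := by
    simp only [← hkey]; exact hL
  have hR' := hR.const_add (H C)
  exact tendsto_nhds_unique hL' hR'

lemma chainRule_On {H Hd : ℝ → ℝ} {L : NNReal} (hH : ∀ x, HasDerivAt H (Hd x) x)
    (hLip : LipschitzWith L Hd) {f : ℝ → ℝ} {T₀ T : ℝ} (hT : T₀ ≤ T)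
    (hf : IntegrableOn f (Icc T₀ T) volume) {φ : ℝ → ℝ}
    (hφ : ∀ s ∈ Icc T₀ T, φ s = φ T₀ + ∫ u in T₀..s, f u) :
    H (φ T) = H (φ T₀) + ∫ s in T₀..T, Hd (φ s) * f s := by
  have hgi : Integrable ((Icc T₀ T).indicator f) volume :=
    (integrable_indicator_iff measurableSet_Icc).2 hf
  have hgint : ∀ s ∈ Icc T₀ T,
      (∫ u in T₀..s, (Icc T₀ T).indicator f u) = ∫ u in T₀..s, f u := by
    intro s hs
    rw [intervalIntegral.integral_of_le hs.1, intervalIntegral.integral_of_le hs.1]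
    apply setIntegral_congr_fun measurableSet_Ioc
    intro u hu
    exact indicator_of_mem (show u ∈ Icc T₀ T from ⟨hu.1.le, hu.2.trans hs.2⟩) f
  have hmain := chainRule hH hLip hgi (φ T₀) hT
  rw [hgint T (right_mem_Icc.2 hT), ← hφ T (right_mem_Icc.2 hT)] at hmain
  rw [hmain]
  congr 1
  apply intervalIntegral.integral_congr
  intro s hs
  rw [uIcc_of_le hT] at hs
  have h1 : (Icc T₀ T).indicator f s = f s := indicator_of_mem hs f
  have h2 : (φ T₀ + ∫ u in T₀..s, (Icc T₀ T).indicator f u) = φ s := by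
    rw [hgint s hs, ← hφ s hs]
  simp only [h1, h2]

lemma hasDerivAt_posSq (x : ℝ) : HasDerivAt (fun y : ℝ => (max y 0)^2) (2 * max x 0) x := by
  rcases lt_trichotomy x 0 with hx | hx | hx
  · have hconst : HasDerivAt (fun _ : ℝ => (0:ℝ)) 0 x := hasDerivAt_const x 0
    have heq : (fun y : ℝ => (max y 0)^2) =ᶠ[𝓝 x] (fun _ : ℝ => (0:ℝ)) := by
      filter_upwards [Iio_mem_nhds hx] with y hy
      simp [max_eq_right (le_of_lt (mem_Iio.1 hy))]
    have := hconst.congr_of_eventuallyEq heq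
    simpa [max_eq_right hx.le] using this
  · subst hx
    have h0 : HasDerivAt (fun y : ℝ => (max y 0)^2) 0 0 := by
      rw [hasDerivAt_iff_isLittleO, Asymptotics.isLittleO_iff]
      intro c hc
      filter_upwards [Metric.ball_mem_nhds (0:ℝ) hc] with h hh
      rw [Metric.mem_ball, Real.dist_eq, sub_zero] at hh
      have h1 : max h 0 ≤ |h| := max_le (le_abs_self h) (abs_nonneg h)
      have h2 : (0:ℝ) ≤ max h 0 := le_max_right _ _
      simp only [Real.norm_eq_abs, sub_zero, smul_eq_mul, mul_zero]
      have he : |(max h 0)^2 - (max (0:ℝ) 0)^2| = (max h 0)^2 := by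
        simp [abs_of_nonneg (sq_nonneg (max h 0))]
      rw [he]
      nlinarith [abs_nonneg h]
    simpa using h0
  · have hsq : HasDerivAt (fun y : ℝ => y^2) (2*x) x := by
      simpa using hasDerivAt_pow 2 x
    have heq : (fun y : ℝ => (max y 0)^2) =ᶠ[𝓝 x] (fun y : ℝ => y^2) := by
      filter_upwards [Ioi_mem_nhds hx] with y hy
      simp [max_eq_left (le_of_lt (mem_Ioi.1 hy))]
    have := hsq.congr_of_eventuallyEq heq
    simpa [max_eq_left hx.le] using this

lemma lipschitz_posSq' : LipschitzWith 2 (fun x : ℝ => 2 * max x 0) := by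
  apply LipschitzWith.of_dist_le_mul
  intro a b
  rw [Real.dist_eq, Real.dist_eq]
  have h := abs_max_sub_max_le_abs a b 0
  have : |2 * max a 0 - 2 * max b 0| = 2 * |max a 0 - max b 0| := by
    rw [← mul_sub, abs_mul]; norm_num
  rw [this]
  push_cast
  linarith

noncomputable def sqLin (δ : ℝ) (x : ℝ) : ℝ :=
  if x ≤ δ then Real.sqrt δ + (x - δ)/(2*Real.sqrt δ) else Real.sqrt x

noncomputable def sqLin' (δ : ℝ) (x : ℝ) : ℝ := 1/(2*Real.sqrt (max x δ))

lemma sqLin_of_ge {δ x : ℝ} (hδ : 0 ≤ δ) (hx : δ ≤ x) : sqLin δ x = Real.sqrt x := by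
  rcases eq_or_lt_of_le hx with h | h
  · subst h; simp [sqLin]
  · simp [sqLin, not_le.2 h]

lemma hasDerivAt_sqLin {δ : ℝ} (hδ : 0 < δ) (x : ℝ) :
    HasDerivAt (sqLin δ) (sqLin' δ x) x := by
  have hsδ : 0 < Real.sqrt δ := Real.sqrt_pos.2 hδ
  have hlin : ∀ z : ℝ, HasDerivAt (fun y => Real.sqrt δ + (y - δ)/(2*Real.sqrt δ))
      (1/(2*Real.sqrt δ)) z := by
    intro z
    simpa using (((hasDerivAt_id z).sub_const δ).div_const (2*Real.sqrt δ)).const_add (Real.sqrt δ)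
  rcases lt_trichotomy x δ with hx | hx | hx
  · have heq : (fun y => sqLin δ y) =ᶠ[𝓝 x] (fun y => Real.sqrt δ + (y - δ)/(2*Real.sqrt δ)) := by
      filter_upwards [Iio_mem_nhds hx] with y hy
      simp [sqLin, le_of_lt (mem_Iio.1 hy)]
    have := (hlin x).congr_of_eventuallyEq heq
    have hval : sqLin' δ x = 1/(2*Real.sqrt δ) := by
      simp [sqLin', max_eq_right hx.le]
    rw [hval]
    exact this
  · subst hx
    have hIic : HasDerivWithinAt (sqLin x) (1/(2*Real.sqrt x)) (Iic x) x := by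
      refine ((hlin x).hasDerivWithinAt).congr ?_ ?_
      · intro y hy; simp [sqLin, (mem_Iic.1 hy : y ≤ x)]
      · simp [sqLin]
    have hIci : HasDerivWithinAt (sqLin x) (1/(2*Real.sqrt x)) (Ici x) x := by
      have hsq : HasDerivAt Real.sqrt (1/(2*Real.sqrt x)) x := Real.hasDerivAt_sqrt (ne_of_gt hδ)
      refine (hsq.hasDerivWithinAt).congr ?_ ?_
      · intro y hy; exact sqLin_of_ge hδ.le (mem_Ici.1 hy : x ≤ y)
      · simp [sqLin]
    have hu := hIic.union hIci
    rw [Iic_union_Ici] at hu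
    rw [hasDerivWithinAt_univ] at hu
    have hval : sqLin' x x = 1/(2*Real.sqrt x) := by simp [sqLin']
    rw [hval]
    exact hu
  · have hsq : HasDerivAt Real.sqrt (1/(2*Real.sqrt x)) x :=
      Real.hasDerivAt_sqrt (ne_of_gt (hδ.trans hx))
    have heq : (fun y => sqLin δ y) =ᶠ[𝓝 x] Real.sqrt := by
      filter_upwards [Ioi_mem_nhds hx] with y hy
      exact sqLin_of_ge hδ.le (le_of_lt (mem_Ioi.1 hy))
    have := hsq.congr_of_eventuallyEq heq
    have hval : sqLin' δ x = 1/(2*Real.sqrt x) := by simp [sqLin', max_eq_left hx.le]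
    rw [hval]
    exact this

lemma lipschitz_sqLin' {δ : ℝ} (hδ : 0 < δ) :
    LipschitzWith ((1/(4*δ*Real.sqrt δ)).toNNReal) (sqLin' δ) := by
  apply LipschitzWith.of_dist_le_mul
  intro a b
  rw [Real.dist_eq, Real.dist_eq]
  set u := max a δ with hu'
  set v := max b δ with hv'
  have hu : δ ≤ u := le_max_right _ _
  have hv : δ ≤ v := le_max_right _ _
  have hsδ : 0 < Real.sqrt δ := Real.sqrt_pos.2 hδ
  have hsu : Real.sqrt δ ≤ Real.sqrt u := Real.sqrt_le_sqrt hu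
  have hsv : Real.sqrt δ ≤ Real.sqrt v := Real.sqrt_le_sqrt hv
  have hsu0 : 0 < Real.sqrt u := lt_of_lt_of_le hsδ hsu
  have hsv0 : 0 < Real.sqrt v := lt_of_lt_of_le hsδ hsv
  have hK : (((1/(4*δ*Real.sqrt δ)).toNNReal : NNReal) : ℝ) = 1/(4*δ*Real.sqrt δ) :=
    Real.coe_toNNReal _ (by positivity)
  rw [hK]
  have hdiff : sqLin' δ a - sqLin' δ b
      = (Real.sqrt v - Real.sqrt u)/(2*Real.sqrt u*Real.sqrt v) := by
    rw [sqLin', sqLin', ← hu', ← hv']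
    field_simp
  have hsqv : Real.sqrt v ^ 2 = v := Real.sq_sqrt (hδ.le.trans hv)
  have hsqu : Real.sqrt u ^ 2 = u := Real.sq_sqrt (hδ.le.trans hu)
  have hid : (Real.sqrt v - Real.sqrt u) * (Real.sqrt v + Real.sqrt u) = v - u := by
    nlinarith [hsqv, hsqu]
  have habs : |Real.sqrt v - Real.sqrt u| * (Real.sqrt v + Real.sqrt u) = |v - u| := by
    rw [← abs_of_pos (show (0:ℝ) < Real.sqrt v + Real.sqrt u by positivity), ← abs_mul, hid]
  have hvu : |v - u| ≤ |a - b| := by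
    have h := abs_max_sub_max_le_abs b a δ
    rw [abs_sub_comm b a] at h
    exact h
  have hδδ : Real.sqrt δ * Real.sqrt δ = δ := Real.mul_self_sqrt hδ.le
  have hprod : δ ≤ Real.sqrt u * Real.sqrt v := by nlinarith
  rw [hdiff, abs_div, abs_of_pos (show (0:ℝ) < 2*Real.sqrt u*Real.sqrt v by positivity)]
  rw [div_le_iff₀ (by positivity)]
  -- |√v - √u| ≤ (1/(4δ√δ)) * |a-b| * (2√u√v)
  have h1 : |Real.sqrt v - Real.sqrt u| = |v - u| / (Real.sqrt v + Real.sqrt u) := by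
    rw [eq_div_iff (by positivity)]; exact habs
  rw [h1, div_le_iff₀ (by positivity)]
  -- |v - u| ≤ (1/(4δ√δ)) * |a-b| * (2√u√v) * (√v + √u)
  have h2 : 4*δ*Real.sqrt δ ≤ 2*Real.sqrt u*Real.sqrt v*(Real.sqrt v + Real.sqrt u) := by
    nlinarith
  have h3 : (0:ℝ) ≤ |a - b| := abs_nonneg _
  rw [div_mul_eq_mul_div, div_mul_eq_mul_div, div_mul_eq_mul_div, one_mul]
  rw [le_div_iff₀ (by positivity)]
  nlinarith [mul_le_mul_of_nonneg_right hvu (show (0:ℝ) ≤ 4*δ*Real.sqrt δ by positivity),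
    mul_le_mul_of_nonneg_left h2 h3]

/-! ### primitives -/


lemma II_loc {a : ℝ → ℝ} (ha : LocIntOn a) {τ s : ℝ} (h0 : 0 ≤ τ) (hτs : τ ≤ s) :
    IntervalIntegrable a volume τ s :=
  (intervalIntegrable_iff_integrableOn_Icc_of_le hτs).2
    ((ha s (h0.trans hτs)).mono_set (Icc_subset_Icc h0 le_rfl))

lemma contOn_primitive {f : ℝ → ℝ} (hf : LocIntOn f) :
    ContinuousOn (fun t => ∫ s in (0:ℝ)..t, f s) (Ici 0) := by
  intro t ht
  have ht' : (0:ℝ) ≤ t := ht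
  have h1 : ContinuousOn (fun x => ∫ s in (0:ℝ)..x, f s) (Icc 0 (t+1)) := by
    have h2 := intervalIntegral.continuousOn_primitive (μ := volume) (a := 0) (b := t+1)
      (hf (t+1) (by linarith))
    apply h2.congr
    intro x hx
    exact intervalIntegral.integral_of_le hx.1
  have hmem : Icc (0:ℝ) (t+1) ∈ 𝓝[Ici 0] t := by
    have he : Icc (0:ℝ) (t+1) = Ici 0 ∩ Iic (t+1) := by rw [Ici_inter_Iic]
    rw [he]
    exact Filter.inter_mem self_mem_nhdsWithin
      (mem_nhdsWithin_of_mem_nhds (Iic_mem_nhds (by linarith)))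
  exact (h1 t ⟨ht', by linarith⟩).mono_of_mem_nhdsWithin hmem

lemma integrableOn_mul_sqrt {a y : ℝ → ℝ} (ha : LocIntOn a) (hy : ContinuousOn y (Ici 0))
    {t : ℝ} (ht : 0 ≤ t) :
    IntegrableOn (fun s => a s * Real.sqrt (y s)) (Icc 0 t) volume := by
  have hyc : ContinuousOn (fun s => Real.sqrt (y s)) (Icc 0 t) :=
    Real.continuous_sqrt.comp_continuousOn (hy.mono Icc_subset_Ici_self)
  obtain ⟨B, hB⟩ := isCompact_Icc.exists_bound_of_continuousOn hyc
  have h1 : IntegrableOn (fun s => Real.sqrt (y s) * a s) (Icc 0 t) volume := by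
    apply Integrable.bdd_mul (c := B) (ha t ht)
      (hyc.aestronglyMeasurable measurableSet_Icc)
    filter_upwards [ae_restrict_mem measurableSet_Icc] with x hx
    exact hB x hx
  exact (integrable_congr (Eventually.of_forall fun x => mul_comm _ _)).1 h1

lemma II_mul_sqrt {a y : ℝ → ℝ} (ha : LocIntOn a) (hy : ContinuousOn y (Ici 0))
    {τ s : ℝ} (h0 : 0 ≤ τ) (hτs : τ ≤ s) :
    IntervalIntegrable (fun u => a u * Real.sqrt (y u)) volume τ s :=
  (intervalIntegrable_iff_integrableOn_Icc_of_le hτs).2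
    ((integrableOn_mul_sqrt ha hy (h0.trans hτs)).mono_set (Icc_subset_Icc h0 le_rfl))

/-! ### the sqrt identity on intervals of positivity -/

lemma sqrt_sol_eq {a y : ℝ → ℝ} {y₀ : ℝ} (ha : LocIntOn a) (hy : IsSol a y₀ y)
    {τ s : ℝ} (hτ0 : 0 ≤ τ) (hτs : τ ≤ s) (hpos : ∀ σ ∈ Ioc τ s, 0 < y σ) :
    Real.sqrt (y s) = Real.sqrt (y τ) - ∫ σ in τ..s, a σ := by
  obtain ⟨hc, hnn, hid⟩ := hy
  rcases eq_or_lt_of_le hτs with rfl | hτs'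
  · simp
  have hs0 : 0 ≤ s := hτ0.trans hτs
  have hstep : ∀ τ' ∈ Ioc τ s, Real.sqrt (y s) = Real.sqrt (y τ') - ∫ σ in τ'..s, a σ := by
    intro τ' hτ'
    have hτ'0 : 0 ≤ τ' := hτ0.trans hτ'.1.le
    have hycont : ContinuousOn y (Icc τ' s) := hc.mono (fun x hx => hτ'0.trans hx.1)
    obtain ⟨m, hm, hmin⟩ := isCompact_Icc.exists_isMinOn (nonempty_Icc.2 hτ'.2) hycont
    have hδpos : 0 < y m := hpos m ⟨lt_of_lt_of_le hτ'.1 hm.1, hm.2⟩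
    have hyδ : ∀ σ ∈ Icc τ' s, y m ≤ y σ := fun σ hσ => hmin hσ
    have hfint : IntegrableOn (fun σ => -2 * (a σ * Real.sqrt (y σ))) (Icc τ' s) volume :=
      ((integrableOn_mul_sqrt ha hc hs0).mono_set (Icc_subset_Icc hτ'0 le_rfl)).const_mul (-2)
    have hφ : ∀ σ ∈ Icc τ' s, y σ = y τ' + ∫ u in τ'..σ, (-2 * (a u * Real.sqrt (y u))) := by
      intro σ hσ
      have h1 := hid σ (hτ'0.trans hσ.1)
      have h2 := hid τ' hτ'0
      have hsplit : (∫ u in (0:ℝ)..σ, a u * Real.sqrt (y u))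
          = (∫ u in (0:ℝ)..τ', a u * Real.sqrt (y u)) + ∫ u in τ'..σ, a u * Real.sqrt (y u) := by
        rw [intervalIntegral.integral_add_adjacent_intervals
          (II_mul_sqrt ha hc le_rfl hτ'0) (II_mul_sqrt ha hc hτ'0 hσ.1)]
      rw [intervalIntegral.integral_const_mul, h1, h2, hsplit]
      ring
    have hCR := chainRule_On (hasDerivAt_sqLin hδpos) (lipschitz_sqLin' hδpos)
      hτ'.2 hfint hφ
    have hys : sqLin (y m) (y s) = Real.sqrt (y s) :=
      sqLin_of_ge hδpos.le (hyδ s ⟨hτ'.2, le_rfl⟩)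
    have hyτ' : sqLin (y m) (y τ') = Real.sqrt (y τ') :=
      sqLin_of_ge hδpos.le (hyδ τ' ⟨le_rfl, hτ'.2⟩)
    have hint_congr : (∫ σ in τ'..s, sqLin' (y m) (y σ) * (-2 * (a σ * Real.sqrt (y σ))))
        = ∫ σ in τ'..s, -(a σ) := by
      apply intervalIntegral.integral_congr
      intro σ hσ
      rw [uIcc_of_le hτ'.2] at hσ
      have h3 : y m ≤ y σ := hyδ σ hσ
      have h4 : 0 < y σ := lt_of_lt_of_le hδpos h3
      have h5 : max (y σ) (y m) = y σ := max_eq_left h3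
      have h6 : 0 < Real.sqrt (y σ) := Real.sqrt_pos.2 h4
      simp only [sqLin', h5]
      field_simp
    rw [hys, hyτ', hint_congr, intervalIntegral.integral_neg] at hCR
    linarith
  -- limit τ' → τ⁺
  set τn : ℕ → ℝ := fun n => τ + (s - τ) * (1/(n+1)) with hτn
  have hτn_mem : ∀ n : ℕ, τn n ∈ Ioc τ s := by
    intro n
    constructor
    · have hp : (0:ℝ) < (s - τ) * (1/(n+1)) :=
        mul_pos (by linarith) (by positivity)
      simp only [hτn]; linarith
    · simp only [hτn]
      have h1 : (1:ℝ)/(n+1) ≤ 1 := by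
        rw [div_le_one (by positivity)]; linarith [Nat.cast_nonneg (α := ℝ) n]
      nlinarith
  have hten : Tendsto (fun n : ℕ => 1/((n:ℝ)+1)) atTop (𝓝 0) :=
    tendsto_one_div_add_atTop_nhds_zero_nat
  have htend : Tendsto τn atTop (𝓝 τ) := by
    have h := (hten.const_mul (s - τ)).const_add τ
    simp only [mul_zero, add_zero] at h
    exact h
  have htendW : Tendsto τn atTop (𝓝[Ici 0] τ) := by
    apply tendsto_nhdsWithin_of_tendsto_nhds_of_eventually_within _ htend
    filter_upwards with n
    exact mem_Ici.2 (le_trans hτ0 (hτn_mem n).1.le)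
  have h1 : Tendsto (fun n => Real.sqrt (y (τn n))) atTop (𝓝 (Real.sqrt (y τ))) :=
    (Real.continuous_sqrt.continuousAt.tendsto).comp (((hc τ (mem_Ici.2 hτ0)).tendsto).comp htendW)
  have h2 : Tendsto (fun n => ∫ u in (0:ℝ)..(τn n), a u) atTop
      (𝓝 (∫ u in (0:ℝ)..τ, a u)) :=
    ((contOn_primitive ha τ (mem_Ici.2 hτ0)).tendsto).comp htendW
  have h3 : ∀ n, (∫ σ in (τn n)..s, a σ)
      = (∫ u in (0:ℝ)..s, a u) - ∫ u in (0:ℝ)..(τn n), a u := by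
    intro n
    have hn0 : 0 ≤ τn n := le_trans hτ0 (hτn_mem n).1.le
    have h := intervalIntegral.integral_add_adjacent_intervals
      (II_loc ha le_rfl hn0) (II_loc ha hn0 (hτn_mem n).2)
    linarith
  have h4 : Tendsto (fun n => Real.sqrt (y (τn n)) - ∫ σ in (τn n)..s, a σ) atTop
      (𝓝 (Real.sqrt (y τ) - ((∫ u in (0:ℝ)..s, a u) - ∫ u in (0:ℝ)..τ, a u))) := by
    have h4' := h1.sub ((tendsto_const_nhds (x := ∫ u in (0:ℝ)..s, a u)).sub h2)
    exact h4'.congr (fun n => by rw [h3 n])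
  have h7 : Real.sqrt (y s)
      = Real.sqrt (y τ) - ((∫ u in (0:ℝ)..s, a u) - ∫ u in (0:ℝ)..τ, a u) := by
    refine tendsto_nhds_unique ?_ h4
    have he : (fun n : ℕ => Real.sqrt (y (τn n)) - ∫ σ in (τn n)..s, a σ)
        = fun _ : ℕ => Real.sqrt (y s) := by
      funext n
      have := hstep (τn n) (hτn_mem n)
      linarith
    rw [he]
    exact tendsto_const_nhds
  have h8 : (∫ σ in τ..s, a σ) = (∫ u in (0:ℝ)..s, a u) - ∫ u in (0:ℝ)..τ, a u := by
    have h := intervalIntegral.integral_add_adjacent_intervals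
      (II_loc ha le_rfl hτ0) (II_loc ha hτ0 hτs)
    linarith
  rw [h7, h8]

/-! ### the candidate maximal solution -/

noncomputable def cand (a : ℝ → ℝ) (y₀ τ : ℝ) (s : ℝ) : ℝ :=
  (max (max (Real.sqrt y₀) (∫ u in (0:ℝ)..(min s τ), a u) - ∫ u in (0:ℝ)..s, a u) 0)^2

lemma maxshift (p q : ℝ) : max (max p q - q) 0 = max (p - q) 0 := by
  rw [← max_sub_sub_right, sub_self, max_assoc, max_self]

lemma cand_cont {a : ℝ → ℝ} (ha : LocIntOn a) (y₀ τ : ℝ) (hτ : 0 ≤ τ) :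
    ContinuousOn (fun s => max (max (Real.sqrt y₀) (∫ u in (0:ℝ)..(min s τ), a u)
      - ∫ u in (0:ℝ)..s, a u) 0) (Ici 0) := by
  have hAc : ContinuousOn (fun r => ∫ u in (0:ℝ)..r, a u) (Ici 0) := contOn_primitive ha
  have hminc : ContinuousOn (fun s : ℝ => ∫ u in (0:ℝ)..(min s τ), a u) (Ici 0) :=
    hAc.comp ((continuous_id.min continuous_const).continuousOn)
      (fun x hx => mem_Ici.2 (le_min (mem_Ici.1 hx) hτ))
  exact ((continuousOn_const.sup hminc).sub hAc).sup continuousOn_const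

lemma cand_isSol {a : ℝ → ℝ} {y₀ τ : ℝ} (ha : LocIntOn a) (hy₀ : 0 ≤ y₀) (hτ : 0 ≤ τ) :
    IsSol a y₀ (cand a y₀ τ) := by
  have hwc := cand_cont ha y₀ τ hτ
  have hcc : ContinuousOn (cand a y₀ τ) (Ici 0) := hwc.pow 2
  have hwnn : ∀ s, (0:ℝ) ≤ max (max (Real.sqrt y₀) (∫ u in (0:ℝ)..(min s τ), a u)
      - ∫ u in (0:ℝ)..s, a u) 0 := fun s => le_max_right _ _
  have hsqrt_cand : ∀ s, Real.sqrt (cand a y₀ τ s)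
      = max (max (Real.sqrt y₀) (∫ u in (0:ℝ)..(min s τ), a u) - ∫ u in (0:ℝ)..s, a u) 0 :=
    fun s => Real.sqrt_sq (hwnn s)
  have claim1 : ∀ t, 0 ≤ t → t ≤ τ →
      cand a y₀ τ t = y₀ - 2 * ∫ u in (0:ℝ)..t, a u * Real.sqrt (cand a y₀ τ u) := by
    intro t ht htτ
    have hφ : ∀ r ∈ Icc (0:ℝ) t, (Real.sqrt y₀ - ∫ u in (0:ℝ)..r, a u)
        = (Real.sqrt y₀ - ∫ u in (0:ℝ)..(0:ℝ), a u) + ∫ u in (0:ℝ)..r, -(a u) := by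
      intro r hr
      rw [intervalIntegral.integral_same, intervalIntegral.integral_neg]
      ring
    have hCR := chainRule_On (f := fun u => -(a u))
      (φ := fun r => Real.sqrt y₀ - ∫ u in (0:ℝ)..r, a u)
      hasDerivAt_posSq lipschitz_posSq' ht (by exact (ha t ht).neg) hφ
    have hL : cand a y₀ τ t = (max (Real.sqrt y₀ - ∫ u in (0:ℝ)..t, a u) 0)^2 := by
      simp only [cand, min_eq_left htτ, maxshift]
    have hR0 : (max (Real.sqrt y₀ - ∫ u in (0:ℝ)..(0:ℝ), a u) 0)^2 = y₀ := by
      rw [intervalIntegral.integral_same, sub_zero, max_eq_left (Real.sqrt_nonneg y₀),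
        Real.sq_sqrt hy₀]
    have hcong : (∫ r in (0:ℝ)..t,
          (2 * max (Real.sqrt y₀ - ∫ u in (0:ℝ)..r, a u) 0) * -(a r))
        = ∫ r in (0:ℝ)..t, (-2) * (a r * Real.sqrt (cand a y₀ τ r)) := by
      apply intervalIntegral.integral_congr
      intro r hr
      rw [uIcc_of_le ht] at hr
      have h1 : Real.sqrt (cand a y₀ τ r)
          = max (Real.sqrt y₀ - ∫ u in (0:ℝ)..r, a u) 0 := by
        rw [hsqrt_cand r, min_eq_left (hr.2.trans htτ), maxshift]
      simp only [h1]; ring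
    calc cand a y₀ τ t = (max (Real.sqrt y₀ - ∫ u in (0:ℝ)..t, a u) 0)^2 := hL
      _ = (max (Real.sqrt y₀ - ∫ u in (0:ℝ)..(0:ℝ), a u) 0)^2
          + ∫ r in (0:ℝ)..t, (2 * max (Real.sqrt y₀ - ∫ u in (0:ℝ)..r, a u) 0) * -(a r) := hCR
      _ = y₀ + ∫ r in (0:ℝ)..t, (-2) * (a r * Real.sqrt (cand a y₀ τ r)) := by
          rw [hR0, hcong]
      _ = y₀ - 2 * ∫ u in (0:ℝ)..t, a u * Real.sqrt (cand a y₀ τ u) := by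
          rw [intervalIntegral.integral_const_mul]; ring
  refine ⟨hcc, fun t ht => by simpa [cand] using sq_nonneg _, ?_⟩
  intro t ht
  rcases le_total t τ with htτ | hτt
  · exact claim1 t ht htτ
  · have hφ2 : ∀ r ∈ Icc τ t,
        (max (Real.sqrt y₀) (∫ u in (0:ℝ)..τ, a u) - ∫ u in (0:ℝ)..r, a u)
        = (max (Real.sqrt y₀) (∫ u in (0:ℝ)..τ, a u) - ∫ u in (0:ℝ)..τ, a u)
          + ∫ u in τ..r, -(a u) := by
      intro r hr
      have h := intervalIntegral.integral_add_adjacent_intervals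
        (II_loc ha le_rfl hτ) (II_loc ha hτ hr.1)
      rw [intervalIntegral.integral_neg]
      linarith
    have hCR := chainRule_On (f := fun u => -(a u))
      (φ := fun r => max (Real.sqrt y₀) (∫ u in (0:ℝ)..τ, a u) - ∫ u in (0:ℝ)..r, a u)
      hasDerivAt_posSq lipschitz_posSq' hτt
      (by exact ((ha t ht).mono_set (Icc_subset_Icc hτ le_rfl)).neg) hφ2
    have hL2 : cand a y₀ τ t
        = (max (max (Real.sqrt y₀) (∫ u in (0:ℝ)..τ, a u) - ∫ u in (0:ℝ)..t, a u) 0)^2 := by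
      simp only [cand, min_eq_right hτt]
    have hmid : (max (max (Real.sqrt y₀) (∫ u in (0:ℝ)..τ, a u) - ∫ u in (0:ℝ)..τ, a u) 0)^2
        = cand a y₀ τ τ := by
      simp only [cand, min_self]
    have hcong2 : (∫ r in τ..t,
          (2 * max (max (Real.sqrt y₀) (∫ u in (0:ℝ)..τ, a u) - ∫ u in (0:ℝ)..r, a u) 0) * -(a r))
        = ∫ r in τ..t, (-2) * (a r * Real.sqrt (cand a y₀ τ r)) := by
      apply intervalIntegral.integral_congr
      intro r hr
      rw [uIcc_of_le hτt] at hr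
      have h1 : Real.sqrt (cand a y₀ τ r)
          = max (max (Real.sqrt y₀) (∫ u in (0:ℝ)..τ, a u) - ∫ u in (0:ℝ)..r, a u) 0 := by
        rw [hsqrt_cand r, min_eq_right hr.1]
      simp only [h1]; ring
    have hsplit : (∫ u in (0:ℝ)..t, a u * Real.sqrt (cand a y₀ τ u))
        = (∫ u in (0:ℝ)..τ, a u * Real.sqrt (cand a y₀ τ u))
          + ∫ u in τ..t, a u * Real.sqrt (cand a y₀ τ u) := by
      rw [intervalIntegral.integral_add_adjacent_intervals
        (II_mul_sqrt ha hcc le_rfl hτ) (II_mul_sqrt ha hcc hτ hτt)]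
    have hc1 := claim1 τ hτ le_rfl
    have hfinal : (∫ r in τ..t, (-2) * (a r * Real.sqrt (cand a y₀ τ r)))
        = (-2) * ∫ r in τ..t, a r * Real.sqrt (cand a y₀ τ r) :=
      intervalIntegral.integral_const_mul _ _
    rw [hL2, hCR, hmid, hcong2, hfinal, hc1, hsplit]
    ring

/-! ### key one-sided comparison -/

lemma key {a₁ a₂ : ℝ → ℝ} {y₀ : ℝ} (ha₁ : LocIntOn a₁) (ha₂ : LocIntOn a₂) (hy₀ : 0 ≤ y₀)
    {y₁ y₂ : ℝ → ℝ} (hy₁ : IsMaxSol a₁ y₀ y₁) (hy₂ : IsMaxSol a₂ y₀ y₂)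
    {t s : ℝ} (ht : 0 ≤ t) (hs : s ∈ Icc 0 t) :
    Real.sqrt (y₁ s) - Real.sqrt (y₂ s) ≤ ∫ τ in (0:ℝ)..t, |a₁ τ - a₂ τ| := by
  have hs0 : (0:ℝ) ≤ s := hs.1
  have hF : LocIntOn (fun u => |a₁ u - a₂ u|) := by
    intro r hr
    exact ((ha₁ r hr).sub (ha₂ r hr)).abs
  have hFnn : ∀ (p q : ℝ), 0 ≤ p → p ≤ q → (0:ℝ) ≤ ∫ u in p..q, |a₁ u - a₂ u| := by
    intro p q hp hpq
    exact intervalIntegral.integral_nonneg hpq (fun u _ => abs_nonneg _)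
  rcases eq_or_lt_of_le (hy₁.1.2.1 s hs0) with hzero | hposs
  · rw [← hzero, Real.sqrt_zero]
    have := Real.sqrt_nonneg (y₂ s)
    have := hFnn 0 t le_rfl ht
    linarith
  -- choose τ
  have hτex : ∃ τ, 0 ≤ τ ∧ τ ≤ s ∧ (∀ σ ∈ Ioc τ s, 0 < y₁ σ) ∧
      Real.sqrt (y₁ τ) + (∫ u in (0:ℝ)..τ, a₂ u)
        ≤ max (Real.sqrt y₀) (∫ u in (0:ℝ)..τ, a₂ u) := by
    by_cases hZ : (Icc 0 s ∩ y₁ ⁻¹' {0}).Nonempty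
    · have hZclosed : IsClosed (Icc 0 s ∩ y₁ ⁻¹' {0}) :=
        ContinuousOn.preimage_isClosed_of_isClosed
          (hy₁.1.1.mono (Icc_subset_Ici_self)) isClosed_Icc isClosed_singleton
      have hZbdd : BddAbove (Icc 0 s ∩ y₁ ⁻¹' {0}) := ⟨s, fun σ hσ => hσ.1.2⟩
      have hZcpt : IsCompact (Icc 0 s ∩ y₁ ⁻¹' {0}) :=
        IsCompact.of_isClosed_subset isCompact_Icc hZclosed inter_subset_left
      have hmem := hZcpt.sSup_mem hZ
      set τ := sSup (Icc 0 s ∩ y₁ ⁻¹' {0}) with hτdef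
      refine ⟨τ, hmem.1.1, hmem.1.2, ?_, ?_⟩
      · intro σ hσ
        rcases eq_or_lt_of_le (hy₁.1.2.1 σ (hmem.1.1.trans hσ.1.le)) with hz | hp
        · exfalso
          have hσZ : σ ∈ Icc 0 s ∩ y₁ ⁻¹' {0} :=
            ⟨⟨hmem.1.1.trans hσ.1.le, hσ.2⟩, by simp [← hz]⟩
          exact absurd (le_csSup hZbdd hσZ) (not_le.2 hσ.1)
        · exact hp
      · have hyτ : y₁ τ = 0 := hmem.2
        rw [hyτ, Real.sqrt_zero, zero_add]
        exact le_max_right _ _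
    · refine ⟨0, le_rfl, hs0, ?_, ?_⟩
      · intro σ hσ
        rcases eq_or_lt_of_le (hy₁.1.2.1 σ hσ.1.le) with hz | hp
        · exact absurd ⟨⟨hσ.1.le, hσ.2⟩, by simp [← hz]⟩ (fun h => hZ ⟨σ, h⟩)
        · exact hp
      · have hy10 : y₁ 0 = y₀ := by
          have := hy₁.1.2.2 0 le_rfl
          simpa using this
        rw [hy10, intervalIntegral.integral_same, add_zero]
        exact le_max_left _ _
  obtain ⟨τ, hτ0, hτs, hpos, hτbound⟩ := hτex
  have hid1 := sqrt_sol_eq ha₁ hy₁.1 hτ0 hτs hpos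
  -- candidate solution for a₂
  have hcand := cand_isSol (a := a₂) (y₀ := y₀) (τ := τ) ha₂ hy₀ hτ0
  have hle : cand a₂ y₀ τ s ≤ y₂ s := hy₂.2 _ hcand s hs0
  have hsqrtle : Real.sqrt (cand a₂ y₀ τ s) ≤ Real.sqrt (y₂ s) := Real.sqrt_le_sqrt hle
  have hsqcand : Real.sqrt (cand a₂ y₀ τ s)
      = max (max (Real.sqrt y₀) (∫ u in (0:ℝ)..τ, a₂ u) - ∫ u in (0:ℝ)..s, a₂ u) 0 := by
    rw [show cand a₂ y₀ τ s
      = (max (max (Real.sqrt y₀) (∫ u in (0:ℝ)..(min s τ), a₂ u) - ∫ u in (0:ℝ)..s, a₂ u) 0)^2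
      from rfl, min_eq_right hτs]
    exact Real.sqrt_sq (le_max_right _ _)
  have h2 : max (Real.sqrt y₀) (∫ u in (0:ℝ)..τ, a₂ u) - (∫ u in (0:ℝ)..s, a₂ u)
      ≤ Real.sqrt (y₂ s) := by
    calc max (Real.sqrt y₀) (∫ u in (0:ℝ)..τ, a₂ u) - (∫ u in (0:ℝ)..s, a₂ u)
        ≤ max (max (Real.sqrt y₀) (∫ u in (0:ℝ)..τ, a₂ u) - ∫ u in (0:ℝ)..s, a₂ u) 0 :=
          le_max_left _ _
      _ = Real.sqrt (cand a₂ y₀ τ s) := hsqcand.symm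
      _ ≤ Real.sqrt (y₂ s) := hsqrtle
  have hA2split : (∫ u in (0:ℝ)..s, a₂ u)
      = (∫ u in (0:ℝ)..τ, a₂ u) + ∫ u in τ..s, a₂ u := by
    rw [intervalIntegral.integral_add_adjacent_intervals (II_loc ha₂ le_rfl hτ0) (II_loc ha₂ hτ0 hτs)]
  have hmono : (∫ u in τ..s, a₂ u) - (∫ u in τ..s, a₁ u) ≤ ∫ u in τ..s, |a₁ u - a₂ u| := by
    rw [← intervalIntegral.integral_sub (II_loc ha₂ hτ0 hτs) (II_loc ha₁ hτ0 hτs)]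
    apply intervalIntegral.integral_mono_on hτs
      ((II_loc ha₂ hτ0 hτs).sub (II_loc ha₁ hτ0 hτs)) (II_loc hF hτ0 hτs)
    intro u _
    rw [abs_sub_comm]
    exact le_abs_self _
  have hFsplit : (∫ u in (0:ℝ)..t, |a₁ u - a₂ u|)
      = (∫ u in (0:ℝ)..τ, |a₁ u - a₂ u|) + ((∫ u in τ..s, |a₁ u - a₂ u|)
        + ∫ u in s..t, |a₁ u - a₂ u|) := by
    rw [intervalIntegral.integral_add_adjacent_intervals (II_loc hF hτ0 hτs) (II_loc hF hs0 hs.2),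
      intervalIntegral.integral_add_adjacent_intervals (II_loc hF le_rfl hτ0)
        (II_loc hF hτ0 (hτs.trans hs.2))]
  have e1 := hFnn 0 τ le_rfl hτ0
  have e2 := hFnn s t hs0 hs.2
  linarith

end Stmt5Aux

theorem stmt5 (a₁ a₂ : ℝ → ℝ) (y₀ : ℝ) (ha₁ : LocIntOn a₁) (ha₂ : LocIntOn a₂) (hy₀ : 0 ≤ y₀)
    (y₁ y₂ : ℝ → ℝ) (hy₁ : IsMaxSol a₁ y₀ y₁) (hy₂ : IsMaxSol a₂ y₀ y₂) :
    ∀ t : ℝ, 0 ≤ t → ∀ s ∈ Set.Icc (0:ℝ) t,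
      |Real.sqrt (y₁ s) - Real.sqrt (y₂ s)| ≤ ∫ τ in (0:ℝ)..t, |a₁ τ - a₂ τ| := by
  intro t ht s hs
  have h1 := Stmt5Aux.key ha₁ ha₂ hy₀ hy₁ hy₂ ht hs
  have h2 := Stmt5Aux.key ha₂ ha₁ hy₀ hy₂ hy₁ ht hs
  have hcomm : (∫ τ in (0:ℝ)..t, |a₂ τ - a₁ τ|) = ∫ τ in (0:ℝ)..t, |a₁ τ - a₂ τ| := by
    apply intervalIntegral.integral_congr
    intro u _
    exact abs_sub_comm _ _
  rw [abs_sub_le_iff]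
  exact ⟨h1, hcomm ▸ h2⟩
end

section
/- Let a: [0,∞) → ℝ be locally integrable with a(t) ≥ 0 for almost every t ≥ 0, and let y₀ ≥ 0. Then the Cauchy problem y' + 2a√y = 0, y(0) = y₀ has exactly one nonnegative global solution, given by y(t) = (max(√y₀ − ∫₀ᵗ a(s) ds, 0))² for every t ≥ 0. -/
open MeasureTheory Set Filter

section Aux
open Topology

lemma prim_indicator {g : ℝ → ℝ} {t s : ℝ} (hs : 0 ≤ s) (hst : s ≤ t) :
    (∫ u in (0:ℝ)..s, (Set.Icc (0:ℝ) t).indicator g u) = ∫ u in (0:ℝ)..s, g u := by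
  rw [intervalIntegral.integral_of_le hs, intervalIntegral.integral_of_le hs,
    MeasureTheory.setIntegral_indicator measurableSet_Icc,
    Set.inter_eq_left.mpr (Set.Ioc_subset_Icc_self.trans (Set.Icc_subset_Icc_right hst))]

lemma prim_abs_le {g : ℝ → ℝ} (hg : Integrable g (volume : Measure ℝ)) {s : ℝ} (hs : 0 ≤ s) :
    (∫ u in (0:ℝ)..s, |g u|) ≤ ∫ x, |g x| := by
  rw [intervalIntegral.integral_of_le hs]
  exact setIntegral_le_integral hg.abs (Eventually.of_forall fun x => abs_nonneg _)

lemma prim_abs_le' {g : ℝ → ℝ} (hg : Integrable g (volume : Measure ℝ)) {s : ℝ} (hs : 0 ≤ s) :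
    |∫ u in (0:ℝ)..s, g u| ≤ ∫ x, |g x| :=
  le_trans (intervalIntegral.abs_integral_le_integral_abs hs) (prim_abs_le hg hs)

lemma lemL' {g : ℝ → ℝ} (hg : Integrable g (volume : Measure ℝ)) {φ φ' : ℝ → ℝ}
    (hφ : ∀ x, HasDerivAt φ (φ' x) x) (hφ' : Continuous φ') {t : ℝ} (ht : 0 ≤ t) :
    (∫ s in (0:ℝ)..t, φ' (∫ u in (0:ℝ)..s, g u) * g s)
      = φ (∫ u in (0:ℝ)..t, g u) - φ 0 := by
  have hφc : Continuous φ := continuous_iff_continuousAt.mpr fun x => (hφ x).continuousAt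
  have hch : ∀ n : ℕ, ∃ h : ℝ → ℝ, Continuous h ∧ Integrable h volume ∧
      (∫ x, |g x - h x|) ≤ 1/(n+1) := by
    intro n
    obtain ⟨h, -, hle, hc, hi⟩ := hg.exists_hasCompactSupport_integral_sub_le
      (by positivity : (0:ℝ) < 1/(n+1))
    exact ⟨h, hc, hi, by simpa [Real.norm_eq_abs] using hle⟩
  choose h hcont hint hle using hch
  set G : ℝ → ℝ := fun s => ∫ u in (0:ℝ)..s, g u with hGdef
  set Gn : ℕ → ℝ → ℝ := fun n s => ∫ u in (0:ℝ)..s, h n u with hGndef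
  have hGc : Continuous G := hg.continuous_primitive 0
  have hGnc : ∀ n, Continuous (Gn n) := fun n => (hint n).continuous_primitive 0
  set ε : ℕ → ℝ := fun n => ∫ x, |g x - h n x| with hεdef
  have hε0 : ∀ n, 0 ≤ ε n := fun n => integral_nonneg fun x => abs_nonneg _
  have hεlim : Tendsto ε atTop (𝓝 0) :=
    squeeze_zero hε0 hle tendsto_one_div_add_atTop_nhds_zero_nat
  have hsubint : ∀ n, Integrable (fun u => h n u - g u) volume := fun n => (hint n).sub hg
  have habs : ∀ n, (∫ x, |h n x - g x|) = ε n := by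
    intro n; simp only [hεdef, abs_sub_comm]
  have hclose : ∀ n, ∀ s : ℝ, 0 ≤ s → |Gn n s - G s| ≤ ε n := by
    intro n s hs
    have h1 : Gn n s - G s = ∫ u in (0:ℝ)..s, (h n u - g u) :=
      (intervalIntegral.integral_sub ((hint n).intervalIntegrable)
        hg.intervalIntegrable).symm
    rw [h1, ← habs n]
    exact prim_abs_le' (hsubint n) hs
  set C₀ : ℝ := ∫ x, |g x| with hC₀def
  have hC₀ : 0 ≤ C₀ := integral_nonneg fun x => abs_nonneg _
  have hGb : ∀ s : ℝ, 0 ≤ s → |G s| ≤ C₀ := fun s hs => prim_abs_le' hg hs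
  have h1n : ∀ n : ℕ, (1:ℝ)/(n+1) ≤ 1 := by
    intro n
    rw [div_le_one (by positivity)]
    linarith [Nat.cast_nonneg (α := ℝ) n]
  have hGnb : ∀ n, ∀ s : ℝ, 0 ≤ s → |Gn n s| ≤ C₀ + 1 := by
    intro n s hs
    have := hclose n s hs
    have h2 := hGb s hs
    have h3 := (hle n).trans (h1n n)
    have := abs_sub_abs_le_abs_sub (Gn n s) (G s)
    linarith
  obtain ⟨K, hK⟩ := (isCompact_Icc (a := -(C₀+1)) (b := C₀+1)).exists_bound_of_continuousOn
    hφ'.continuousOn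
  have hK' : ∀ x : ℝ, |x| ≤ C₀ + 1 → |φ' x| ≤ K := by
    intro x hx
    have := hK x (abs_le.mp hx)
    simpa [Real.norm_eq_abs] using this
  have hK0 : 0 ≤ K := le_trans (abs_nonneg (φ' 0)) (hK' 0 (by simp; linarith))
  -- identity for continuous approximation
  have hGnd : ∀ n (s : ℝ), HasDerivAt (Gn n) (h n s) s := fun n s =>
    intervalIntegral.integral_hasDerivAt_right ((hint n).intervalIntegrable)
      ((hcont n).aestronglyMeasurable.stronglyMeasurableAtFilter) ((hcont n).continuousAt)
  have idn : ∀ n, (∫ s in (0:ℝ)..t, φ' (Gn n s) * h n s) = φ (Gn n t) - φ 0 := by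
    intro n
    have := intervalIntegral.integral_eq_sub_of_hasDerivAt
      (f := fun s => φ (Gn n s)) (f' := fun s => φ' (Gn n s) * h n s)
      (fun s _ => (hφ (Gn n s)).comp s (hGnd n s))
      (Continuous.intervalIntegrable ((hφ'.comp (hGnc n)).mul (hcont n)) 0 t)
    rw [this]
    show φ (Gn n t) - φ (Gn n 0) = φ (Gn n t) - φ 0
    have h0 : Gn n 0 = 0 := intervalIntegral.integral_same
    rw [h0]
  -- integrabilities
  have int1 : ∀ n, IntervalIntegrable (fun s => φ' (Gn n s) * (h n s - g s)) volume 0 t :=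
    fun n => ((hsubint n).intervalIntegrable).continuousOn_mul
      ((hφ'.comp (hGnc n)).continuousOn)
  have int2 : ∀ n, IntervalIntegrable (fun s => φ' (Gn n s) * g s) volume 0 t :=
    fun n => (hg.intervalIntegrable).continuousOn_mul ((hφ'.comp (hGnc n)).continuousOn)
  have hIdecomp : ∀ n, (∫ s in (0:ℝ)..t, φ' (Gn n s) * h n s)
      = (∫ s in (0:ℝ)..t, φ' (Gn n s) * (h n s - g s))
        + ∫ s in (0:ℝ)..t, φ' (Gn n s) * g s := by
    intro n
    rw [← intervalIntegral.integral_add (int1 n) (int2 n)]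
    apply intervalIntegral.integral_congr
    intro s _
    ring
  have hT1 : Tendsto (fun n => ∫ s in (0:ℝ)..t, φ' (Gn n s) * (h n s - g s)) atTop (𝓝 0) := by
    have hb : Tendsto (fun n => K * ε n) atTop (𝓝 0) := by simpa using hεlim.const_mul K
    apply squeeze_zero_norm _ hb
    intro n
    rw [Real.norm_eq_abs]
    calc |∫ s in (0:ℝ)..t, φ' (Gn n s) * (h n s - g s)|
          ≤ ∫ s in (0:ℝ)..t, |φ' (Gn n s) * (h n s - g s)| :=
            intervalIntegral.abs_integral_le_integral_abs ht
        _ ≤ ∫ s in (0:ℝ)..t, K * |h n s - g s| := by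
            apply intervalIntegral.integral_mono_on ht (int1 n).abs
              (((hsubint n).abs.intervalIntegrable).const_mul K)
            intro s hs
            rw [abs_mul]
            exact mul_le_mul_of_nonneg_right (hK' _ (hGnb n s hs.1)) (abs_nonneg _)
        _ = K * ∫ s in (0:ℝ)..t, |h n s - g s| := by
            rw [intervalIntegral.integral_const_mul]
        _ ≤ K * ε n := by
            apply mul_le_mul_of_nonneg_left _ hK0
            rw [← habs n]
            exact prim_abs_le (hsubint n) ht
  have hGnlim : ∀ s : ℝ, 0 ≤ s → Tendsto (fun n => Gn n s) atTop (𝓝 (G s)) := by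
    intro s hs
    have h1 : Tendsto (fun n => Gn n s - G s) atTop (𝓝 0) :=
      squeeze_zero_norm (fun n => hclose n s hs) hεlim
    simpa using h1.add_const (G s)
  have hT2 : Tendsto (fun n => ∫ s in (0:ℝ)..t, φ' (Gn n s) * g s) atTop
      (𝓝 (∫ s in (0:ℝ)..t, φ' (G s) * g s)) := by
    apply intervalIntegral.tendsto_integral_filter_of_dominated_convergence
      (fun s => K * |g s|)
    · exact Eventually.of_forall fun n =>
        ((hφ'.comp (hGnc n)).aestronglyMeasurable.restrict.mul
          hg.aestronglyMeasurable.restrict)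
    · apply Eventually.of_forall
      intro n
      apply Eventually.of_forall
      intro x hx
      rw [Set.uIoc_of_le ht] at hx
      rw [Real.norm_eq_abs, abs_mul]
      exact mul_le_mul_of_nonneg_right (hK' _ (hGnb n x hx.1.le)) (abs_nonneg _)
    · exact (hg.abs.intervalIntegrable).const_mul K
    · apply Eventually.of_forall
      intro x hx
      rw [Set.uIoc_of_le ht] at hx
      exact ((hφ'.continuousAt.tendsto.comp (hGnlim x hx.1.le)).mul_const (g x))
  have hlim1 : Tendsto (fun n => ∫ s in (0:ℝ)..t, φ' (Gn n s) * h n s) atTop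
      (𝓝 (∫ s in (0:ℝ)..t, φ' (G s) * g s)) := by
    have := hT1.add hT2
    rw [zero_add] at this
    exact this.congr fun n => (hIdecomp n).symm
  have hlim2 : Tendsto (fun n => ∫ s in (0:ℝ)..t, φ' (Gn n s) * h n s) atTop
      (𝓝 (φ (G t) - φ 0)) := by
    have h1 : Tendsto (fun n => φ (Gn n t) - φ 0) atTop (𝓝 (φ (G t) - φ 0)) :=
      (hφc.continuousAt.tendsto.comp (hGnlim t ht)).sub_const (φ 0)
    exact h1.congr fun n => (idn n).symm
  exact tendsto_nhds_unique hlim1 hlim2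

lemma lemL {g : ℝ → ℝ} {t : ℝ} (ht : 0 ≤ t)
    (hg : IntegrableOn g (Set.Icc 0 t) (volume : Measure ℝ)) {φ φ' : ℝ → ℝ}
    (hφ : ∀ x, HasDerivAt φ (φ' x) x) (hφ' : Continuous φ') :
    (∫ s in (0:ℝ)..t, φ' (∫ u in (0:ℝ)..s, g u) * g s)
      = φ (∫ u in (0:ℝ)..t, g u) - φ 0 := by
  have hgi : Integrable ((Set.Icc (0:ℝ) t).indicator g) volume :=
    hg.integrable_indicator measurableSet_Icc
  have h1 := lemL' hgi hφ hφ' ht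
  rw [prim_indicator ht le_rfl] at h1
  rw [← h1]
  apply intervalIntegral.integral_congr
  intro s hs
  rw [Set.uIcc_of_le ht] at hs
  show φ' (∫ u in (0:ℝ)..s, g u) * g s
      = φ' (∫ u in (0:ℝ)..s, (Set.Icc (0:ℝ) t).indicator g u) * (Set.Icc (0:ℝ) t).indicator g s
  rw [prim_indicator hs.1 hs.2, Set.indicator_of_mem hs g]

lemma hasDerivAt_mul_abs (x : ℝ) : HasDerivAt (fun u : ℝ => u * |u|) (2 * |x|) x := by
  apply hasDerivAt_of_hasDerivAt_of_ne' (x := 0) (g := fun u : ℝ => 2 * |u|)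
  · intro y hy
    rcases hy.lt_or_gt with h | h
    · have h2 := (hasDerivAt_id y).mul (hasDerivAt_abs_neg h)
      refine h2.congr_deriv (Eq.symm ?_)
      rw [abs_of_neg h]; simp [id]; ring
    · have h2 := (hasDerivAt_id y).mul (hasDerivAt_abs_pos h)
      refine h2.congr_deriv (Eq.symm ?_)
      rw [abs_of_pos h]; simp [id]; ring
  · exact (continuous_id.mul continuous_abs).continuousAt
  · exact (continuous_const.mul continuous_abs).continuousAt

lemma hasDerivAt_Phi (c x : ℝ) :
    HasDerivAt (fun x : ℝ => (c^2 - ((c-x)^2 + (c-x)*|c-x|)/2)/2) (max (c - x) 0) x := by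
  have h1 : HasDerivAt (fun x : ℝ => c - x) (-1) x := by
    simpa using (hasDerivAt_id x).const_sub c
  have h3 : HasDerivAt (fun x : ℝ => (c-x)*|c-x|) (2*|c-x| * (-1)) x :=
    (hasDerivAt_mul_abs (c-x)).comp x h1
  have h2 : HasDerivAt (fun x : ℝ => (c-x)^2) (((2:ℕ):ℝ) * (c-x)^(2-1) * (-1)) x := h1.pow 2
  have h4 := (((h2.add h3).div_const 2).const_sub (c^2)).div_const 2
  refine h4.congr_deriv (Eq.symm ?_)
  rcases le_total (c - x) 0 with h | h
  · rw [max_eq_right h, abs_of_nonpos h]; ring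
  · rw [max_eq_left h, abs_of_nonneg h]; ring

lemma Phi_eval (c x : ℝ) :
    (c^2 - ((c-x)^2 + (c-x)*|c-x|)/2)/2 = (c^2 - (max (c-x) 0)^2)/2 := by
  rcases le_total (c - x) 0 with h | h
  · rw [max_eq_right h, abs_of_nonpos h]; ring
  · rw [max_eq_left h, abs_of_nonneg h]; ring

lemma glue_sqrt {y₀ ε : ℝ} (hε : 0 < ε) :
    ∃ ψ ψ' : ℝ → ℝ, (∀ x, HasDerivAt ψ (ψ' x) x) ∧ Continuous ψ' ∧
      (∀ x, ε ≤ y₀ - 2*x → ψ x = Real.sqrt (y₀ - 2*x)) ∧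
      (∀ x, ε ≤ y₀ - 2*x → ψ' x = -1 / Real.sqrt (y₀ - 2*x)) := by
  set x₀ : ℝ := (y₀ - ε)/2 with hx₀
  have hsε : 0 < Real.sqrt ε := Real.sqrt_pos.mpr hε
  have hkey : ∀ x : ℝ, x ≤ x₀ ↔ ε ≤ y₀ - 2*x := by intro x; constructor <;> intro h <;> [linarith [h]; linarith [h]]
  refine ⟨fun x => if x ≤ x₀ then Real.sqrt (y₀ - 2*x) else Real.sqrt ε - (x - x₀)/Real.sqrt ε,
          fun x => -1 / Real.sqrt (max (y₀ - 2*x) ε), ?_, ?_, ?_, ?_⟩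
  · -- HasDerivAt
    have hcψ : Continuous (fun x : ℝ =>
        if x ≤ x₀ then Real.sqrt (y₀ - 2*x) else Real.sqrt ε - (x - x₀)/Real.sqrt ε) := by
      apply Continuous.if_le
      · exact Real.continuous_sqrt.comp (by continuity)
      · continuity
      · exact continuous_id
      · exact continuous_const
      · intro x hx
        rw [hx]
        rw [show y₀ - 2*x₀ = ε by rw [hx₀]; ring]
        simp
    have hcψ' : Continuous (fun x : ℝ => -1 / Real.sqrt (max (y₀ - 2*x) ε)) := by
      apply continuous_const.div (Real.continuous_sqrt.comp (by continuity))
      intro x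
      have : 0 < Real.sqrt (max (y₀ - 2*x) ε) :=
        Real.sqrt_pos.mpr (lt_of_lt_of_le hε (le_max_right _ _))
      exact ne_of_gt this
    intro x
    apply hasDerivAt_of_hasDerivAt_of_ne' (x := x₀) ?_ hcψ.continuousAt hcψ'.continuousAt
    intro y hy
    rcases hy.lt_or_gt with h | h
    · -- y < x₀
      have hyy : ε < y₀ - 2*y := by rw [hx₀] at h; linarith
      have hyy' : 0 < y₀ - 2*y := lt_trans hε hyy
      have hin : HasDerivAt (fun x : ℝ => y₀ - 2*x) (-2) y := by
        simpa using ((hasDerivAt_id y).const_mul 2).const_sub y₀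
      have h2 := (Real.hasDerivAt_sqrt (ne_of_gt hyy')).comp y hin
      have heq : (fun x : ℝ =>
          if x ≤ x₀ then Real.sqrt (y₀ - 2*x) else Real.sqrt ε - (x - x₀)/Real.sqrt ε)
          =ᶠ[nhds y] (fun x => Real.sqrt (y₀ - 2*x)) := by
        filter_upwards [isOpen_Iio.mem_nhds h] with u hu
        rw [if_pos (le_of_lt hu)]
      refine HasDerivAt.congr_of_eventuallyEq ?_ heq
      refine h2.congr_deriv (Eq.symm ?_)
      rw [max_eq_left (le_of_lt hyy)]
      have : Real.sqrt (y₀ - 2*y) ≠ 0 := ne_of_gt (Real.sqrt_pos.mpr hyy')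
      field_simp
    · -- x₀ < y
      have hyy : y₀ - 2*y < ε := by rw [hx₀] at h; linarith
      have h2 : HasDerivAt (fun x : ℝ => Real.sqrt ε - (x - x₀)/Real.sqrt ε)
          (-(1/Real.sqrt ε)) y := by
        simpa using (((hasDerivAt_id y).sub_const x₀).div_const (Real.sqrt ε)).const_sub
          (Real.sqrt ε)
      have heq : (fun x : ℝ =>
          if x ≤ x₀ then Real.sqrt (y₀ - 2*x) else Real.sqrt ε - (x - x₀)/Real.sqrt ε)
          =ᶠ[nhds y] (fun x => Real.sqrt ε - (x - x₀)/Real.sqrt ε) := by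
        filter_upwards [isOpen_Ioi.mem_nhds h] with u hu
        rw [if_neg (not_le.mpr hu)]
      refine HasDerivAt.congr_of_eventuallyEq ?_ heq
      refine h2.congr_deriv (Eq.symm ?_)
      rw [max_eq_right (le_of_lt hyy), neg_div, one_div]
  · -- continuity of ψ'
    apply continuous_const.div (Real.continuous_sqrt.comp (by continuity))
    intro x
    exact ne_of_gt (Real.sqrt_pos.mpr (lt_of_lt_of_le hε (le_max_right _ _)))
  · intro x hx
    beta_reduce
    rw [if_pos ((hkey x).mpr hx)]
  · intro x hx
    beta_reduce
    rw [max_eq_left hx]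

lemma contOn_prim {g : ℝ → ℝ}
    (hg : ∀ t : ℝ, 0 ≤ t → IntegrableOn g (Set.Icc 0 t) (volume : Measure ℝ)) :
    ContinuousOn (fun t => ∫ s in (0:ℝ)..t, g s) (Set.Ici 0) := by
  intro t₀ ht₀
  have ht₀' : (0:ℝ) ≤ t₀ := ht₀
  have h1 : Integrable ((Set.Icc (0:ℝ) (t₀+1)).indicator g) volume :=
    (hg (t₀+1) (by linarith)).integrable_indicator measurableSet_Icc
  have h2 : Continuous (fun u => ∫ s in (0:ℝ)..u, (Set.Icc (0:ℝ) (t₀+1)).indicator g s) :=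
    h1.continuous_primitive 0
  have hmem : Set.Icc (0:ℝ) (t₀+1) ∈ nhdsWithin t₀ (Set.Ici 0) := by
    apply mem_nhdsWithin.mpr ⟨Set.Iio (t₀+1), isOpen_Iio, by simp only [Set.mem_Iio]; linarith, ?_⟩
    rintro x ⟨hx1, hx2⟩
    exact ⟨hx2, le_of_lt hx1⟩
  apply ContinuousWithinAt.congr_of_eventuallyEq h2.continuousAt.continuousWithinAt
  · filter_upwards [hmem] with s hs
    exact (prim_indicator hs.1 hs.2).symm
  · exact (prim_indicator ht₀' (by linarith)).symm

lemma prim_mono {g : ℝ → ℝ}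
    (hg : ∀ t : ℝ, 0 ≤ t → IntegrableOn g (Set.Icc 0 t) (volume : Measure ℝ))
    (hg0 : ∀ᵐ s ∂(volume : Measure ℝ), 0 ≤ s → 0 ≤ g s) {s u : ℝ} (hs : 0 ≤ s) (hsu : s ≤ u) :
    (∫ x in (0:ℝ)..s, g x) ≤ ∫ x in (0:ℝ)..u, g x := by
  have hu : (0:ℝ) ≤ u := hs.trans hsu
  have h0s : IntervalIntegrable g volume 0 s := by
    rw [intervalIntegrable_iff_integrableOn_Ioc_of_le hs]
    exact (hg u hu).mono_set (Set.Ioc_subset_Icc_self.trans (Set.Icc_subset_Icc_right hsu))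
  have hsu' : IntervalIntegrable g volume s u := by
    rw [intervalIntegrable_iff_integrableOn_Ioc_of_le hsu]
    exact (hg u hu).mono_set ((Set.Ioc_subset_Icc_self).trans (Set.Icc_subset_Icc_left hs))
  rw [← intervalIntegral.integral_add_adjacent_intervals h0s hsu']
  have : 0 ≤ ∫ x in s..u, g x := by
    apply intervalIntegral.integral_nonneg_of_ae_restrict hsu
    apply (MeasureTheory.ae_restrict_iff' measurableSet_Icc).mpr
    filter_upwards [hg0] with x hx hxm
    exact hx (hs.trans hxm.1)
  linarith

end Aux

theorem stmt6 (a : ℝ → ℝ) (y₀ : ℝ) (ha : LocIntOn a)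
    (hann : ∀ᵐ t ∂(MeasureTheory.volume : MeasureTheory.Measure ℝ), 0 ≤ t → 0 ≤ a t)
    (hy₀ : 0 ≤ y₀) :
    IsSol a y₀ (fun t => (max (Real.sqrt y₀ - ∫ s in (0:ℝ)..t, a s) 0) ^ 2) ∧
      ∀ z : ℝ → ℝ, IsSol a y₀ z → ∀ t : ℝ, 0 ≤ t →
        z t = (max (Real.sqrt y₀ - ∫ s in (0:ℝ)..t, a s) 0) ^ 2 := by
  have hc0 : 0 ≤ Real.sqrt y₀ := Real.sqrt_nonneg _
  have hcsq : (Real.sqrt y₀)^2 = y₀ := Real.sq_sqrt hy₀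
  have hAcont : ContinuousOn (fun t => ∫ s in (0:ℝ)..t, a s) (Set.Ici 0) := contOn_prim ha
  have hA0 : (∫ s in (0:ℝ)..(0:ℝ), a s) = 0 := intervalIntegral.integral_same
  constructor
  · refine ⟨((continuousOn_const.sub hAcont).sup continuousOn_const).pow 2,
      fun t ht => sq_nonneg _, ?_⟩
    intro t ht
    show (max (Real.sqrt y₀ - ∫ s in (0:ℝ)..t, a s) 0) ^ 2
      = y₀ - 2 * ∫ s in (0:ℝ)..t, a s *
          Real.sqrt ((max (Real.sqrt y₀ - ∫ u in (0:ℝ)..s, a u) 0) ^ 2)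
    have h1 := lemL ht (ha t ht) (fun x => hasDerivAt_Phi (Real.sqrt y₀) x)
      (by continuity : Continuous fun x : ℝ => max (Real.sqrt y₀ - x) 0)
    beta_reduce at h1
    rw [Phi_eval, Phi_eval] at h1
    have h2 : (∫ s in (0:ℝ)..t, a s *
          Real.sqrt ((max (Real.sqrt y₀ - ∫ u in (0:ℝ)..s, a u) 0) ^ 2))
        = ∫ s in (0:ℝ)..t, max (Real.sqrt y₀ - ∫ u in (0:ℝ)..s, a u) 0 * a s := by
      apply intervalIntegral.integral_congr
      intro s _
      beta_reduce
      rw [Real.sqrt_sq (le_max_right _ _)]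
      ring
    rw [h2, h1]
    rw [sub_zero, max_eq_left hc0]
    linarith [hcsq]
  · rintro z ⟨hzc, hznn, hzeq⟩
    have hwint : ∀ T : ℝ, 0 ≤ T →
        IntegrableOn (fun s => a s * Real.sqrt (z s)) (Set.Icc 0 T) volume := by
      intro T hT
      exact (ha T hT).mul_continuousOn
        (Real.continuous_sqrt.comp_continuousOn (hzc.mono (fun x hx => hx.1))) isCompact_Icc
    have hw0 : ∀ᵐ s ∂(volume : Measure ℝ), 0 ≤ s → 0 ≤ a s * Real.sqrt (z s) := by
      filter_upwards [hann] with s hs hs0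
      exact mul_nonneg (hs hs0) (Real.sqrt_nonneg _)
    have hzmono : ∀ s u : ℝ, 0 ≤ s → s ≤ u → z u ≤ z s := by
      intro s u hs hsu
      rw [hzeq s hs, hzeq u (hs.trans hsu)]
      have := prim_mono hwint hw0 hs hsu
      linarith
    have hz0 : z 0 = y₀ := by
      have h0 := hzeq 0 le_rfl
      rw [intervalIntegral.integral_same] at h0
      linarith
    have key : ∀ s : ℝ, 0 ≤ s → (∀ u, u ∈ Set.Icc 0 s → 0 < z u) →
        Real.sqrt (z s) = Real.sqrt y₀ - ∫ u in (0:ℝ)..s, a u := by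
      intro s hs hpos
      have hεpos : 0 < z s := hpos s ⟨hs, le_rfl⟩
      have hεy : z s ≤ y₀ := by
        rw [← hz0]
        exact hzmono 0 s le_rfl hs
      obtain ⟨ψ, ψ', hψ, hψ'c, hψval, hψ'val⟩ := glue_sqrt (y₀ := y₀) hεpos
      have h1 := lemL hs (hwint s hs) hψ hψ'c
      have hzu : ∀ u, u ∈ Set.Icc 0 s →
          z u = y₀ - 2 * ∫ v in (0:ℝ)..u, a v * Real.sqrt (z v) := fun u hu => hzeq u hu.1
      have h2 : Set.EqOn
          (fun u => ψ' (∫ v in (0:ℝ)..u, a v * Real.sqrt (z v)) * (a u * Real.sqrt (z u)))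
          (fun u => -a u) (Set.uIcc 0 s) := by
        rw [Set.uIcc_of_le hs]
        intro u hu
        beta_reduce
        have hcond : z s ≤ y₀ - 2 * ∫ v in (0:ℝ)..u, a v * Real.sqrt (z v) := by
          rw [← hzu u hu]
          exact hzmono u s hu.1 hu.2
        rw [hψ'val _ hcond, ← hzu u hu]
        have hne : Real.sqrt (z u) ≠ 0 := ne_of_gt (Real.sqrt_pos.mpr (hpos u hu))
        field_simp
      rw [intervalIntegral.integral_congr h2, intervalIntegral.integral_neg] at h1
      have hψs : ψ (∫ v in (0:ℝ)..s, a v * Real.sqrt (z v)) = Real.sqrt (z s) := by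
        have hcond : z s ≤ y₀ - 2 * ∫ v in (0:ℝ)..s, a v * Real.sqrt (z v) := by
          rw [← hzu s ⟨hs, le_rfl⟩]
        rw [hψval _ hcond, ← hzu s ⟨hs, le_rfl⟩]
      have hψ0 : ψ 0 = Real.sqrt y₀ := by
        have := hψval 0 (by simpa using hεy)
        simpa using this
      rw [hψs, hψ0] at h1
      linarith
    intro t ht
    show z t = (max (Real.sqrt y₀ - ∫ s in (0:ℝ)..t, a s) 0) ^ 2
    by_cases hcase : ∀ u, u ∈ Set.Icc 0 t → 0 < z u
    · have h1 := key t ht hcase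
      have h2 : 0 ≤ Real.sqrt y₀ - ∫ s in (0:ℝ)..t, a s := h1 ▸ Real.sqrt_nonneg (z t)
      rw [max_eq_left h2, ← h1, Real.sq_sqrt (hznn t ht)]
    · push_neg at hcase
      obtain ⟨u₀, hu₀m, hu₀⟩ := hcase
      have hu₀0 : z u₀ = 0 := le_antisymm hu₀ (hznn u₀ hu₀m.1)
      have hZclosed : IsClosed (Set.Icc 0 t ∩ z ⁻¹' {0}) :=
        (hzc.mono (fun x hx => hx.1)).preimage_isClosed_of_isClosed isClosed_Icc
          isClosed_singleton
      have hZne : (Set.Icc 0 t ∩ z ⁻¹' {0}).Nonempty := ⟨u₀, hu₀m, hu₀0⟩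
      have hZbdd : BddBelow (Set.Icc 0 t ∩ z ⁻¹' {0}) := ⟨0, fun x hx => hx.1.1⟩
      have hTZ : sInf (Set.Icc 0 t ∩ z ⁻¹' {0}) ∈ Set.Icc 0 t ∩ z ⁻¹' {0} :=
        hZclosed.csInf_mem hZne hZbdd
      set T := sInf (Set.Icc 0 t ∩ z ⁻¹' {0}) with hTdef
      have hT0 : 0 ≤ T := hTZ.1.1
      have hTt : T ≤ t := hTZ.1.2
      have hzT : z T = 0 := hTZ.2
      have hAT : (∫ s in (0:ℝ)..T, a s) = Real.sqrt y₀ := by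
        rcases eq_or_lt_of_le hT0 with h0 | h0
        · have hz00 : z 0 = 0 := by rwa [← h0] at hzT
          have hy0 : y₀ = 0 := by rw [← hz0, hz00]
          rw [← h0, hA0, hy0, Real.sqrt_zero]
        · have hpos' : ∀ u, u ∈ Set.Ico 0 T → 0 < z u := by
            intro u hu
            rcases (hznn u hu.1).lt_or_eq with h | h
            · exact h
            · exfalso
              have hum : u ∈ Set.Icc 0 t ∩ z ⁻¹' {0} :=
                ⟨⟨hu.1, (lt_of_lt_of_le hu.2 hTt).le⟩, h.symm⟩
              exact absurd (csInf_le hZbdd hum) (not_le.mpr hu.2)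
          have heq : Set.EqOn (fun u => Real.sqrt (z u))
              (fun u => Real.sqrt y₀ - ∫ v in (0:ℝ)..u, a v) (Set.Ico 0 T) := by
            intro u hu
            have hp : ∀ v, v ∈ Set.Icc 0 u → 0 < z v := fun v hv =>
              hpos' v ⟨hv.1, lt_of_le_of_lt hv.2 hu.2⟩
            exact key u hu.1 hp
          have hcl : Set.EqOn (fun u => Real.sqrt (z u))
              (fun u => Real.sqrt y₀ - ∫ v in (0:ℝ)..u, a v) (Set.Icc 0 T) := by
            apply heq.of_subset_closure ?_ ?_ Set.Ico_subset_Icc_self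
              (by rw [closure_Ico (ne_of_lt h0)])
            · exact Real.continuous_sqrt.comp_continuousOn
                (hzc.mono (fun x hx => hx.1))
            · exact continuousOn_const.sub (hAcont.mono (fun x hx => hx.1))
          have hTT := hcl ⟨hT0, le_rfl⟩
          beta_reduce at hTT
          rw [hzT, Real.sqrt_zero] at hTT
          linarith
      have hzt0 : z t = 0 := le_antisymm (hzT ▸ hzmono T t hT0 hTt) (hznn t ht)
      have hAt : Real.sqrt y₀ ≤ ∫ s in (0:ℝ)..t, a s := by
        rw [← hAT]
        exact prim_mono ha hann hT0 hTt
      rw [hzt0, max_eq_right (by linarith)]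
      norm_num
end

section
/- Let a: [0,∞) → ℝ be locally integrable, let y₀ > 0, and let T > 0 be such that √y₀ − ∫₀ᵗ a(s) ds > 0 for every t ∈ [0,T]. Then the function y(t) := (√y₀ − ∫₀ᵗ a(s) ds)² is a strictly positive solution of the Cauchy problem y' + 2a√y = 0, y(0) = y₀ on [0,T], and it is the unique strictly positive solution there: every continuous z: [0,T] → (0,∞) satisfying z(t) = y₀ − 2∫₀ᵗ a(s)√(z(s)) ds for every t ∈ [0,T] coincides with y on [0,T]. -/
open MeasureTheory Set Filter

lemma key_sq (a : ℝ → ℝ) {t : ℝ} (ht : 0 ≤ t) (ha : IntegrableOn a (Icc 0 t)) :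
    ∫ s in (0:ℝ)..t, a s * ∫ u in (0:ℝ)..s, a u = (∫ s in (0:ℝ)..t, a s) ^ 2 / 2 := by
  set A : ℝ → ℝ := fun x => ∫ u in (0:ℝ)..x, a u with hA
  have h0t : IntervalIntegrable a volume 0 t :=
    (intervalIntegrable_iff_integrableOn_Icc_of_le ht).2 ha
  have hsub : ∀ c d : ℝ, c ∈ Icc 0 t → d ∈ Icc 0 t → IntervalIntegrable a volume c d := by
    intro c d hc hd
    refine (ha.mono_set ?_).intervalIntegrable
    exact uIcc_subset_Icc hc hd
  have hAcont : ContinuousOn A (Icc 0 t) := by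
    have := intervalIntegral.continuousOn_primitive_interval' h0t
      (a := 0) (by simp)
    rwa [uIcc_of_le ht] at this
  set ν : Measure ℝ := volume.restrict (Ioc 0 t) with hν
  have haI : Integrable a ν := ha.mono_set Ioc_subset_Icc_self
  have hB : MeasurableSet {p : ℝ × ℝ | p.2 ≤ p.1} :=
    measurableSet_le measurable_snd measurable_fst
  have hf : Integrable ({p : ℝ × ℝ | p.2 ≤ p.1}.indicator fun p => a p.1 * a p.2)
      (ν.prod ν) := (haI.mul_prod haI).indicator hB
  have hswap := MeasureTheory.integral_integral_swap
    (f := fun x y => ({p : ℝ × ℝ | p.2 ≤ p.1}.indicator (fun p => a p.1 * a p.2)) (x, y)) hf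
  have hL : (∫ x, ∫ y, ({p : ℝ × ℝ | p.2 ≤ p.1}.indicator (fun p => a p.1 * a p.2)) (x, y) ∂ν ∂ν)
      = ∫ x in Ioc 0 t, a x * A x := by
    refine setIntegral_congr_fun measurableSet_Ioc (fun x hx => ?_)
    have h1 : (fun y => ({p : ℝ × ℝ | p.2 ≤ p.1}.indicator (fun p => a p.1 * a p.2)) (x, y))
        = fun y => a x * (Iic x).indicator a y := by
      ext y
      by_cases h : y ≤ x <;> simp [Set.indicator_apply, h]
    rw [h1, MeasureTheory.integral_const_mul, setIntegral_indicator measurableSet_Iic,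
      Set.Ioc_inter_Iic, min_eq_right hx.2, ← intervalIntegral.integral_of_le hx.1.le]
  have hR : (∫ y, ∫ x, ({p : ℝ × ℝ | p.2 ≤ p.1}.indicator (fun p => a p.1 * a p.2)) (x, y) ∂ν ∂ν)
      = ∫ y in Ioc 0 t, (a y * A t - a y * A y) := by
    refine setIntegral_congr_fun measurableSet_Ioc (fun y hy => ?_)
    have h1 : (fun x => ({p : ℝ × ℝ | p.2 ≤ p.1}.indicator (fun p => a p.1 * a p.2)) (x, y))
        = fun x => a y * (Ici y).indicator a x := by
      ext x
      by_cases h : y ≤ x <;> simp [Set.indicator_apply, h, mul_comm]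
    rw [h1, MeasureTheory.integral_const_mul, setIntegral_indicator measurableSet_Ici]
    have h2 : Ioc 0 t ∩ Ici y = Icc y t := by
      ext x
      simp only [mem_inter_iff, mem_Ici, mem_Ioc, mem_Icc]
      constructor
      · rintro ⟨⟨_, h3'⟩, h1'⟩; exact ⟨h1', h3'⟩
      · rintro ⟨h1', h2'⟩; exact ⟨⟨lt_of_lt_of_le hy.1 h1', h2'⟩, h1'⟩
    rw [h2, setIntegral_congr_set Ioc_ae_eq_Icc.symm]
    have h3 : ∫ x in Ioc y t, a x = A t - A y := by
      have := intervalIntegral.integral_add_adjacent_intervals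
        (hsub 0 y (by simp [ht]) ⟨hy.1.le, hy.2⟩) (hsub y t ⟨hy.1.le, hy.2⟩ (by simp [ht]))
      rw [hA]
      rw [← intervalIntegral.integral_of_le hy.2]
      simp only at this ⊢
      linarith
    rw [h3]
    ring
  rw [hL, hR] at hswap
  have hAy : IntegrableOn (fun y => a y * A y) (Ioc 0 t) :=
    (ha.mul_continuousOn hAcont isCompact_Icc).mono_set Ioc_subset_Icc_self
  have hsplit : ∫ y in Ioc 0 t, (a y * A t - a y * A y)
      = (∫ y in Ioc 0 t, a y) * A t - ∫ y in Ioc 0 t, a y * A y := by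
    rw [integral_sub (haI.mul_const _) hAy, integral_mul_const]
  rw [hsplit] at hswap
  have hAt : ∫ y in Ioc 0 t, a y = A t := (intervalIntegral.integral_of_le ht).symm
  rw [intervalIntegral.integral_of_le ht, intervalIntegral.integral_of_le ht] at *
  rw [hAt] at hswap
  -- hswap : J = A t * A t - J
  have : (∫ x in Ioc 0 t, a x * A x) = A t * A t - ∫ x in Ioc 0 t, a x * A x := hswap
  rw [hAt]
  nlinarith [this]


lemma helper_mulint (a : ℝ → ℝ) {T : ℝ} (hInt : IntegrableOn a (Icc 0 T)) {w : ℝ → ℝ}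
    (hw : ContinuousOn w (Icc 0 T)) {c d : ℝ} (hc : c ∈ Icc 0 T) (hd : d ∈ Icc 0 T) :
    IntervalIntegrable (fun s => a s * w s) volume c d :=
  ((hInt.mul_continuousOn hw isCompact_Icc).mono_set (uIcc_subset_Icc hc hd)).intervalIntegrable

lemma helper_aint (a : ℝ → ℝ) {T : ℝ} (hInt : IntegrableOn a (Icc 0 T)) {c d : ℝ}
    (hc : c ∈ Icc 0 T) (hd : d ∈ Icc 0 T) : IntervalIntegrable a volume c d :=
  (hInt.mono_set (uIcc_subset_Icc hc hd)).intervalIntegrable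

theorem stmt7 (a : ℝ → ℝ) (y₀ T : ℝ) (ha : LocIntOn a) (hy₀ : 0 < y₀) (hT : 0 < T)
    (hpos : ∀ t ∈ Set.Icc (0:ℝ) T, 0 < Real.sqrt y₀ - ∫ s in (0:ℝ)..t, a s)
    (y : ℝ → ℝ) (hy : ∀ t : ℝ, y t = (Real.sqrt y₀ - ∫ s in (0:ℝ)..t, a s) ^ 2) :
    (ContinuousOn y (Set.Icc 0 T) ∧ (∀ t ∈ Set.Icc (0:ℝ) T, 0 < y t) ∧
      (∀ t ∈ Set.Icc (0:ℝ) T, y t = y₀ - 2 * ∫ s in (0:ℝ)..t, a s * Real.sqrt (y s))) ∧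
    ∀ z : ℝ → ℝ, ContinuousOn z (Set.Icc 0 T) → (∀ t ∈ Set.Icc (0:ℝ) T, 0 < z t) →
      (∀ t ∈ Set.Icc (0:ℝ) T, z t = y₀ - 2 * ∫ s in (0:ℝ)..t, a s * Real.sqrt (z s)) →
      ∀ t ∈ Set.Icc (0:ℝ) T, z t = y t := by
  have hInt : IntegrableOn a (Icc 0 T) := ha T hT.le
  set A : ℝ → ℝ := fun x => ∫ s in (0:ℝ)..x, a s with hA
  have hAcont : ContinuousOn A (Icc 0 T) := by
    have := intervalIntegral.continuousOn_primitive_interval'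
      (helper_aint a hInt (left_mem_Icc.2 hT.le) (right_mem_Icc.2 hT.le)) (a := 0)
      (by simp)
    rwa [uIcc_of_le hT.le] at this
  set F : ℝ → ℝ := fun x => Real.sqrt y₀ - A x with hF
  have hFcont : ContinuousOn F (Icc 0 T) := continuousOn_const.sub hAcont
  have hFpos : ∀ t ∈ Icc (0:ℝ) T, 0 < F t := hpos
  have hyF : ∀ t, y t = F t ^ 2 := fun t => hy t
  have hycont : ContinuousOn y (Icc 0 T) := by
    have : ContinuousOn (fun t => F t ^ 2) (Icc 0 T) := hFcont.pow 2
    exact this.congr (fun t _ => hyF t)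
  have hypos : ∀ t ∈ Icc (0:ℝ) T, 0 < y t := fun t htm => by
    rw [hyF]; exact pow_pos (hFpos t htm) 2
  have hsqrty : ∀ s ∈ Icc (0:ℝ) T, Real.sqrt (y s) = F s := fun s hs => by
    rw [hyF, Real.sqrt_sq (hFpos s hs).le]
  -- the integral equation for y
  have hyeq : ∀ t ∈ Icc (0:ℝ) T, y t = y₀ - 2 * ∫ s in (0:ℝ)..t, a s * Real.sqrt (y s) := by
    intro t htm
    have hsub : Icc (0:ℝ) t ⊆ Icc 0 T := Icc_subset_Icc le_rfl htm.2
    have h1 : ∫ s in (0:ℝ)..t, a s * Real.sqrt (y s) = ∫ s in (0:ℝ)..t, a s * F s := by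
      refine intervalIntegral.integral_congr (fun s hs => ?_)
      rw [uIcc_of_le htm.1] at hs
      rw [hsqrty s (hsub hs)]
    have h0t : t ∈ Icc (0:ℝ) T := htm
    have h0m : (0:ℝ) ∈ Icc (0:ℝ) T := left_mem_Icc.2 hT.le
    have haA : IntervalIntegrable (fun s => a s * A s) volume 0 t :=
      helper_mulint a hInt hAcont h0m h0t
    have haC : IntervalIntegrable (fun s => a s * Real.sqrt y₀) volume 0 t :=
      (helper_aint a hInt h0m h0t).mul_const _
    have h2 : ∫ s in (0:ℝ)..t, a s * F s
        = Real.sqrt y₀ * A t - ∫ s in (0:ℝ)..t, a s * A s := by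
      have : (fun s => a s * F s) = fun s => a s * Real.sqrt y₀ - a s * A s := by
        ext s; rw [hF]; ring
      rw [this, intervalIntegral.integral_sub haC haA]
      congr 1
      rw [intervalIntegral.integral_mul_const, mul_comm]
    have hkey := key_sq a htm.1 (ha t htm.1)
    have hs2 : Real.sqrt y₀ ^ 2 = y₀ := Real.sq_sqrt hy₀.le
    rw [hyF, h1, h2, hF]
    simp only [hA] at *
    nlinarith [hkey, hs2]
  refine ⟨⟨hycont, hypos, hyeq⟩, ?_⟩
  -- uniqueness
  intro z hzc hzpos hzeq
  -- minimum of sqrt z + sqrt y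
  have hφcont : ContinuousOn (fun s => Real.sqrt (z s) + Real.sqrt (y s)) (Icc 0 T) :=
    (Real.continuous_sqrt.comp_continuousOn hzc).add
      (Real.continuous_sqrt.comp_continuousOn hycont)
  obtain ⟨c, hcm, hcmin⟩ := isCompact_Icc.exists_isMinOn (nonempty_Icc.2 hT.le) hφcont
  set m : ℝ := Real.sqrt (z c) + Real.sqrt (y c) with hm
  have hmpos : 0 < m := by
    have h1 : 0 < Real.sqrt (z c) := Real.sqrt_pos.2 (hzpos c hcm)
    have h2 : 0 ≤ Real.sqrt (y c) := Real.sqrt_nonneg _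
    linarith
  have hmle : ∀ s ∈ Icc (0:ℝ) T, m ≤ Real.sqrt (z s) + Real.sqrt (y s) :=
    fun s hs => hcmin hs
  -- |sqrt z - sqrt y| ≤ |z - y| / m
  have hdiff : ∀ s ∈ Icc (0:ℝ) T, |Real.sqrt (z s) - Real.sqrt (y s)| ≤ |z s - y s| / m := by
    intro s hs
    have hzs := (hzpos s hs).le
    have hys := (hypos s hs).le
    have hprod : (Real.sqrt (z s) - Real.sqrt (y s)) * (Real.sqrt (z s) + Real.sqrt (y s))
        = z s - y s := by
      have h1 : Real.sqrt (z s) ^ 2 = z s := Real.sq_sqrt hzs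
      have h2 : Real.sqrt (y s) ^ 2 = y s := Real.sq_sqrt hys
      nlinarith
    rw [le_div_iff₀ hmpos]
    calc |Real.sqrt (z s) - Real.sqrt (y s)| * m
        ≤ |Real.sqrt (z s) - Real.sqrt (y s)| * (Real.sqrt (z s) + Real.sqrt (y s)) := by
          apply mul_le_mul_of_nonneg_left (hmle s hs) (abs_nonneg _)
      _ = |(Real.sqrt (z s) - Real.sqrt (y s)) * (Real.sqrt (z s) + Real.sqrt (y s))| := by
          rw [abs_mul, abs_of_nonneg (show (0:ℝ) ≤ Real.sqrt (z s) + Real.sqrt (y s) by positivity)]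
      _ = |z s - y s| := by rw [hprod]
  -- the key propagation step
  have hstep : ∀ t₁ t₂ : ℝ, t₁ ∈ Icc (0:ℝ) T → t₂ ∈ Icc (0:ℝ) T → t₁ ≤ t₂ →
      (∀ s ∈ Icc (0:ℝ) t₁, z s = y s) →
      (∫ s in t₁..t₂, 2 * |a s| / m) ≤ 1/2 → ∀ s ∈ Icc (0:ℝ) t₂, z s = y s := by
    intro t₁ t₂ ht₁ ht₂ h12 hzero hsmall
    have habs : ContinuousOn (fun s => |z s - y s|) (Icc 0 T) :=
      (hzc.sub hycont).abs
    obtain ⟨s₀, hs₀m, hs₀max⟩ := isCompact_Icc.exists_isMaxOn (nonempty_Icc.2 h12)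
      (habs.mono (Icc_subset_Icc ht₁.1 ht₂.2))
    set M : ℝ := |z s₀ - y s₀| with hM
    have hIccsub : Icc t₁ t₂ ⊆ Icc (0:ℝ) T := Icc_subset_Icc ht₁.1 ht₂.2
    have hMmax : ∀ s ∈ Icc t₁ t₂, |z s - y s| ≤ M := fun s hs => hs₀max hs
    -- main bound: for every s in [t₁, t₂], |z s - y s| ≤ M/2
    have hbound : ∀ s ∈ Icc t₁ t₂, |z s - y s| ≤ M * (1/2) := by
      intro s hs
      have hsT : s ∈ Icc (0:ℝ) T := hIccsub hs
      have sqz : ContinuousOn (fun u => Real.sqrt (z u)) (Icc 0 T) :=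
        Real.continuous_sqrt.comp_continuousOn hzc
      have sqy : ContinuousOn (fun u => Real.sqrt (y u)) (Icc 0 T) :=
        Real.continuous_sqrt.comp_continuousOn hycont
      have hz0t1 : IntervalIntegrable (fun u => a u * Real.sqrt (z u)) volume 0 t₁ :=
        helper_mulint a hInt sqz (left_mem_Icc.2 hT.le) ht₁
      have hy0t1 : IntervalIntegrable (fun u => a u * Real.sqrt (y u)) volume 0 t₁ :=
        helper_mulint a hInt sqy (left_mem_Icc.2 hT.le) ht₁
      have hzt1s : IntervalIntegrable (fun u => a u * Real.sqrt (z u)) volume t₁ s :=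
        helper_mulint a hInt sqz ht₁ hsT
      have hyt1s : IntervalIntegrable (fun u => a u * Real.sqrt (y u)) volume t₁ s :=
        helper_mulint a hInt sqy ht₁ hsT
      -- z s - y s = -2 * ∫ t₁..s of a (√z - √y)
      have e1 : z s - y s = -2 * ∫ u in t₁..s, (a u * Real.sqrt (z u) - a u * Real.sqrt (y u)) := by
        have ez := hzeq s hsT
        have ey := hyeq s hsT
        have splitz : ∫ u in (0:ℝ)..s, a u * Real.sqrt (z u)
            = (∫ u in (0:ℝ)..t₁, a u * Real.sqrt (z u)) + ∫ u in t₁..s, a u * Real.sqrt (z u) :=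
          (intervalIntegral.integral_add_adjacent_intervals hz0t1 hzt1s).symm
        have splity : ∫ u in (0:ℝ)..s, a u * Real.sqrt (y u)
            = (∫ u in (0:ℝ)..t₁, a u * Real.sqrt (y u)) + ∫ u in t₁..s, a u * Real.sqrt (y u) :=
          (intervalIntegral.integral_add_adjacent_intervals hy0t1 hyt1s).symm
        have hcongr0 : ∫ u in (0:ℝ)..t₁, a u * Real.sqrt (z u)
            = ∫ u in (0:ℝ)..t₁, a u * Real.sqrt (y u) := by
          refine intervalIntegral.integral_congr (fun u hu => ?_)
          rw [uIcc_of_le ht₁.1] at hu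
          rw [hzero u hu]
        have hsub' : ∫ u in t₁..s, (a u * Real.sqrt (z u) - a u * Real.sqrt (y u))
            = (∫ u in t₁..s, a u * Real.sqrt (z u)) - ∫ u in t₁..s, a u * Real.sqrt (y u) :=
          intervalIntegral.integral_sub hzt1s hyt1s
        rw [ez, ey, splitz, splity, hcongr0, hsub']
        ring
      have e2 : |z s - y s| ≤ 2 * ∫ u in t₁..s, |a u| * (M / m) := by
        rw [e1, abs_mul, abs_neg, abs_two]
        have h1 : |∫ u in t₁..s, (a u * Real.sqrt (z u) - a u * Real.sqrt (y u))|
            ≤ ∫ u in t₁..s, |a u * Real.sqrt (z u) - a u * Real.sqrt (y u)| :=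
          intervalIntegral.abs_integral_le_integral_abs hs.1
        have h2 : (∫ u in t₁..s, |a u * Real.sqrt (z u) - a u * Real.sqrt (y u)|)
            ≤ ∫ u in t₁..s, |a u| * (M / m) := by
          refine intervalIntegral.integral_mono_on hs.1 (hzt1s.sub hyt1s).abs
            (((helper_aint a hInt ht₁ hsT).abs).mul_const _) (fun u hu => ?_)
          have huT : u ∈ Icc (0:ℝ) T := hIccsub ⟨hu.1, le_trans hu.2 hs.2⟩
          have hu12 : u ∈ Icc t₁ t₂ := ⟨hu.1, le_trans hu.2 hs.2⟩
          have : |a u * Real.sqrt (z u) - a u * Real.sqrt (y u)|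
              = |a u| * |Real.sqrt (z u) - Real.sqrt (y u)| := by
            rw [← abs_mul]; ring_nf
          rw [this]
          refine mul_le_mul_of_nonneg_left ?_ (abs_nonneg _)
          calc |Real.sqrt (z u) - Real.sqrt (y u)| ≤ |z u - y u| / m := hdiff u huT
            _ ≤ M / m := by
                gcongr
                exact hMmax u hu12
        linarith
      have e3 : (∫ u in t₁..s, |a u| * (M / m)) = (M / 2) * ∫ u in t₁..s, 2 * |a u| / m := by
        rw [← intervalIntegral.integral_const_mul]
        refine intervalIntegral.integral_congr (fun u _ => ?_)
        field_simp
      have e4 : (∫ u in t₁..s, 2 * |a u| / m) ≤ 1/2 := by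
        have hadd : (∫ u in t₁..s, 2 * |a u| / m) + ∫ u in s..t₂, 2 * |a u| / m
            = ∫ u in t₁..t₂, 2 * |a u| / m := by
          apply intervalIntegral.integral_add_adjacent_intervals
          · exact ((((helper_aint a hInt ht₁ hsT).abs).const_mul 2).div_const m)
          · exact ((((helper_aint a hInt hsT ht₂).abs).const_mul 2).div_const m)
        have hnn : 0 ≤ ∫ u in s..t₂, 2 * |a u| / m := by
          apply intervalIntegral.integral_nonneg hs.2
          intro u _
          positivity
        linarith
      have hMnn : 0 ≤ M := abs_nonneg _
      calc |z s - y s| ≤ 2 * ∫ u in t₁..s, |a u| * (M / m) := e2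
        _ = M * ∫ u in t₁..s, 2 * |a u| / m := by rw [e3]; ring
        _ ≤ M * (1/2) := mul_le_mul_of_nonneg_left e4 hMnn
    -- conclude M = 0
    have hM0 : M ≤ 0 := by
      have := hbound s₀ hs₀m
      rw [← hM] at this
      linarith
    intro s hs
    rcases le_or_gt s t₁ with h | h
    · exact hzero s ⟨hs.1, h⟩
    · have hs12 : s ∈ Icc t₁ t₂ := ⟨h.le, hs.2⟩
      have := hMmax s hs12
      have habs0 : |z s - y s| ≤ 0 := le_trans this hM0
      have := abs_nonneg (z s - y s)
      have : |z s - y s| = 0 := le_antisymm habs0 this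
      linarith [abs_eq_zero.1 this, sub_eq_zero.1 (abs_eq_zero.1 this)]
  -- uniform continuity of the primitive of 2|a|/m
  have hkint : IntegrableOn (fun s => 2 * |a s| / m) (Icc 0 T) :=
    ((hInt.abs.const_mul 2).div_const m)
  have hKcont : ContinuousOn (fun x => ∫ s in (0:ℝ)..x, 2 * |a s| / m) (Icc 0 T) := by
    have := intervalIntegral.continuousOn_primitive_interval'
      ((hkint.mono_set (by rw [uIcc_of_le hT.le])).intervalIntegrable) (a := 0) (by simp)
    rwa [uIcc_of_le hT.le] at this
  have hKunif := isCompact_Icc.uniformContinuousOn_of_continuous hKcont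
  rw [Metric.uniformContinuousOn_iff] at hKunif
  obtain ⟨δ, hδpos, hδ⟩ := hKunif (1/2) (by norm_num)
  set h : ℝ := δ / 2 with hh
  have hhpos : 0 < h := by positivity
  -- small interval integral bound
  have hsmall : ∀ t₁ t₂ : ℝ, t₁ ∈ Icc (0:ℝ) T → t₂ ∈ Icc (0:ℝ) T → t₁ ≤ t₂ → t₂ - t₁ ≤ h →
      (∫ s in t₁..t₂, 2 * |a s| / m) ≤ 1/2 := by
    intro t₁ t₂ ht₁ ht₂ h12 hdist
    have hint1 : IntervalIntegrable (fun s => 2 * |a s| / m) volume 0 t₁ :=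
      (hkint.mono_set (uIcc_subset_Icc (left_mem_Icc.2 hT.le) ht₁)).intervalIntegrable
    have hint2 : IntervalIntegrable (fun s => 2 * |a s| / m) volume t₁ t₂ :=
      (hkint.mono_set (uIcc_subset_Icc ht₁ ht₂)).intervalIntegrable
    have hsplit := intervalIntegral.integral_add_adjacent_intervals hint1 hint2
    have hd : dist t₂ t₁ < δ := by
      rw [Real.dist_eq, abs_of_nonneg (by linarith)]
      linarith
    have := hδ t₂ ht₂ t₁ ht₁ hd
    rw [Real.dist_eq] at this
    have hle : (∫ s in t₁..t₂, 2 * |a s| / m)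
        ≤ |(∫ s in (0:ℝ)..t₂, 2 * |a s| / m) - ∫ s in (0:ℝ)..t₁, 2 * |a s| / m| := by
      rw [← hsplit]
      have : (∫ s in (0:ℝ)..t₁, 2*|a s|/m) + (∫ s in t₁..t₂, 2*|a s|/m)
          - (∫ s in (0:ℝ)..t₁, 2*|a s|/m) = ∫ s in t₁..t₂, 2*|a s|/m := by ring
      rw [this]
      exact le_abs_self _
    linarith
  -- induction
  have main : ∀ n : ℕ, ∀ s ∈ Icc (0:ℝ) T, s ≤ n * h → z s = y s := by
    intro n
    induction n with
    | zero =>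
      intro s hs hsle
      have hs0 : s = 0 := le_antisymm (by simpa using hsle) hs.1
      subst hs0
      have hz0 : z 0 = y₀ := by
        have := hzeq 0 (left_mem_Icc.2 hT.le)
        simpa using this
      have hy0 : y 0 = y₀ := by
        rw [hy 0]
        simp [Real.sq_sqrt hy₀.le]
      rw [hz0, hy0]
    | succ n ih =>
      intro s hs hsle
      set t₁ : ℝ := min (n * h) T with ht₁def
      set t₂ : ℝ := min ((n + 1 : ℕ) * h) T with ht₂def
      have ht₁ : t₁ ∈ Icc (0:ℝ) T := ⟨le_min (by positivity) hT.le, min_le_right _ _⟩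
      have ht₂ : t₂ ∈ Icc (0:ℝ) T := ⟨le_min (by positivity) hT.le, min_le_right _ _⟩
      have h12 : t₁ ≤ t₂ := by
        apply min_le_min _ le_rfl
        push_cast
        nlinarith
      have hzero : ∀ u ∈ Icc (0:ℝ) t₁, z u = y u := by
        intro u hu
        refine ih u ⟨hu.1, le_trans hu.2 ht₁.2⟩ (le_trans hu.2 (min_le_left _ _))
      have hdistle : t₂ - t₁ ≤ h := by
        rcases le_total ((n:ℝ) * h) T with h' | h'
        · rw [ht₁def, min_eq_left h']
          have : t₂ ≤ (n + 1 : ℕ) * h := min_le_left _ _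
          push_cast at this ⊢
          nlinarith
        · have : t₁ = T := by rw [ht₁def, min_eq_right h']
          have h2 : t₂ ≤ T := ht₂.2
          rw [this]
          linarith [hhpos.le]
      have := hstep t₁ t₂ ht₁ ht₂ h12 hzero (hsmall t₁ t₂ ht₁ ht₂ h12 hdistle)
      apply this s
      refine ⟨hs.1, le_min ?_ hs.2⟩
      push_cast at hsle ⊢
      linarith
  intro t htm
  obtain ⟨n, hn⟩ := exists_nat_ge (T / h)
  have hTn : T ≤ n * h := by
    rw [div_le_iff₀ hhpos] at hn
    linarith
  exact main n t htm (le_trans htm.2 hTn)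
end
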